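/- arXiv:1107.0957 — 4 statements merged into one kernel-verified Lean document; each statement's English description precedes it below -/
import Mathlib

section
/- Let w be a weight on ℝ^n whose logarithm log w is locally integrable, and suppose that [w]_{A_∞} ≤ 1 + δ for some δ with 0 ≤ δ < 1. Then the function f = log w satisfies (1/|Q|)∫_Q |f − f_Q| dx ≤ 32√δ for every cube Q; in particular ‖f‖_* ≤ 32√δ. -/
open MeasureTheory Real Filter
open scoped ENNReal

noncomputable section

/-- A cube in `ℝⁿ`: a product of closed intervals of common positive side length. -/
def IsCube {n : ℕ} (Q : Set (Fin n → ℝ)) : Prop :=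
  ∃ (a : Fin n → ℝ) (h : ℝ), 0 < h ∧
    Q = Set.univ.pi fun i => Set.Icc (a i) (a i + h)

/-- The average `(1/|Q|) ∫_Q f dx`. -/
def cubeAvg {n : ℕ} (Q : Set (Fin n → ℝ)) (f : (Fin n → ℝ) → ℝ) : ℝ :=
  (volume Q).toReal⁻¹ * ∫ x in Q, f x

/-- The mean oscillation `(1/|Q|) ∫_Q |f - f_Q| dx` over a cube `Q`. -/
def bmoOsc {n : ℕ} (Q : Set (Fin n → ℝ)) (f : (Fin n → ℝ) → ℝ) : ℝ :=
  cubeAvg Q fun x => |f x - cubeAvg Q f|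

/-- `‖f‖_* ≤ C`, expressed cube-wise. -/
def BmoLe {n : ℕ} (f : (Fin n → ℝ) → ℝ) (C : ℝ) : Prop :=
  ∀ Q : Set (Fin n → ℝ), IsCube Q → bmoOsc Q f ≤ C

/-- The BMO norm `‖f‖_*` (as a supremum of mean oscillations over all cubes). -/
def bmoNorm {n : ℕ} (f : (Fin n → ℝ) → ℝ) : ℝ :=
  sSup {r : ℝ | ∃ Q : Set (Fin n → ℝ), IsCube Q ∧ r = bmoOsc Q f}

/-- A weight: a locally integrable function that is positive almost everywhere. -/
def IsWeight {n : ℕ} (w : (Fin n → ℝ) → ℝ) : Prop :=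
  LocallyIntegrable w volume ∧ ∀ᵐ x ∂(volume : Measure (Fin n → ℝ)), 0 < w x

/-- The `A_p` quantity of a weight over one cube:
`((1/|Q|)∫_Q w)((1/|Q|)∫_Q w^{1-p'})^{p-1}` where `p' = p/(p-1)`. -/
def apQ {n : ℕ} (p : ℝ) (Q : Set (Fin n → ℝ)) (w : (Fin n → ℝ) → ℝ) : ℝ :=
  cubeAvg Q w * (cubeAvg Q fun x => w x ^ (1 - p / (p - 1))) ^ (p - 1)

/-- `w` is an `A_p` weight: a weight with `w^{1-p'}` locally integrable and
uniformly bounded `A_p` quantities over all cubes. -/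
def IsApWeight {n : ℕ} (p : ℝ) (w : (Fin n → ℝ) → ℝ) : Prop :=
  IsWeight w ∧ LocallyIntegrable (fun x => w x ^ (1 - p / (p - 1))) volume ∧
    ∃ C : ℝ, ∀ Q : Set (Fin n → ℝ), IsCube Q → apQ p Q w ≤ C

/-- The `A_p` characteristic `[w]_{A_p}` (supremum over all cubes). -/
def apChar {n : ℕ} (p : ℝ) (w : (Fin n → ℝ) → ℝ) : ℝ :=
  sSup {r : ℝ | ∃ Q : Set (Fin n → ℝ), IsCube Q ∧ r = apQ p Q w}

/-- The weighted `p`-th power "norm" `∫ |f|^p w dx`, valued in `ℝ≥0∞`. -/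
def wNorm {n : ℕ} (p : ℝ) (w f : (Fin n → ℝ) → ℝ) : ℝ≥0∞ :=
  ∫⁻ x, ENNReal.ofReal (|f x| ^ p * w x)

/-- `C` is an admissible bound for `T : L^p(w) → L^p(w)`. -/
def IsOpBound {n : ℕ} (p : ℝ) (T : ((Fin n → ℝ) → ℝ) → (Fin n → ℝ) → ℝ)
    (w : (Fin n → ℝ) → ℝ) (C : ℝ) : Prop :=
  0 ≤ C ∧ ∀ f : (Fin n → ℝ) → ℝ, Measurable f → wNorm p w f < ⊤ →
    wNorm p w (T f) ≤ ENNReal.ofReal C ^ p * wNorm p w f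

/-- The operator norm `‖T‖_{L^p(w) → L^p(w)}`: the least admissible bound. -/
def opNorm {n : ℕ} (p : ℝ) (T : ((Fin n → ℝ) → ℝ) → (Fin n → ℝ) → ℝ)
    (w : (Fin n → ℝ) → ℝ) : ℝ :=
  sInf {C : ℝ | IsOpBound p T w C}

lemma aux_pt (ε t : ℝ) (hε : 0 < ε) (hε1 : ε ≤ 1) :
    |t| ≤ ε + 3 / ε * (Real.exp t - 1 - t) := by
  have hne : ε ≠ 0 := ne_of_gt hε
  rw [← mul_le_mul_iff_right₀ hε]
  have hrw : ε * (ε + 3 / ε * (Real.exp t - 1 - t)) = ε * ε + 3 * (Real.exp t - 1 - t) := by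
    field_simp
  rw [hrw]
  have h1 : t + 1 ≤ Real.exp t := Real.add_one_le_exp t
  rcases le_or_gt 0 t with ht | ht
  · have h2 := Real.sum_le_exp_of_nonneg ht 3
    simp [Finset.sum_range_succ, Nat.factorial] at h2
    rw [abs_of_nonneg ht]
    nlinarith [sq_nonneg (ε - t)]
  · rw [abs_of_neg ht]
    rcases le_or_gt (-2) t with ht2 | ht2
    · have hh : (0:ℝ) ≤ 1 + t/2 := by linarith
      have h3 : 1 + t/2 ≤ Real.exp (t/2) := by linarith [Real.add_one_le_exp (t/2)]
      have h4 : Real.exp (t/2) * Real.exp (t/2) = Real.exp t := by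
        rw [← Real.exp_add]; ring_nf
      have h5 : (1 + t/2)^2 ≤ Real.exp t := by rw [← h4]; nlinarith
      nlinarith [sq_nonneg (ε + t)]
    · have h6 : (0:ℝ) < Real.exp t := Real.exp_pos t
      nlinarith [mul_nonneg (by linarith : (0:ℝ) ≤ -t-2) (by linarith : (0:ℝ) ≤ 3-ε), sq_nonneg (ε-1)]

/-- If `w` is a weight with locally integrable logarithm and
`[w]_{A_∞} ≤ 1 + δ` (cube-wise) with `0 ≤ δ < 1`, then `f = log w` satisfies
`(1/|Q|)∫_Q |f - f_Q| ≤ 32 √δ` for every cube `Q`; in particular `‖f‖_* ≤ 32 √δ`. -/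
theorem bmo_bound_of_small_Ainfty {n : ℕ} (w : (Fin n → ℝ) → ℝ) (hw : IsWeight w)
    (hlog : LocallyIntegrable (fun x => Real.log (w x)) volume)
    (δ : ℝ) (hδ0 : 0 ≤ δ) (hδ1 : δ < 1)
    (hAinfty : ∀ Q : Set (Fin n → ℝ), IsCube Q →
      cubeAvg Q w ≤ (1 + δ) * Real.exp (cubeAvg Q fun x => Real.log (w x))) :
    BmoLe (fun x => Real.log (w x)) (32 * Real.sqrt δ) := by
  intro Q hQ
  obtain ⟨a, hside, hside_pos, hQeq⟩ := hQ
  have hQm : MeasurableSet Q := by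
    rw [hQeq]; exact MeasurableSet.univ_pi fun i => measurableSet_Icc
  have hQc : IsCompact Q := by
    rw [hQeq]; exact isCompact_univ_pi fun i => isCompact_Icc
  have hvol : volume Q = ENNReal.ofReal hside ^ n := by
    rw [hQeq, volume_pi_pi]
    simp [Real.volume_Icc]
  have hvol_ne_top : volume Q ≠ ⊤ := by
    rw [hvol]; exact ENNReal.pow_ne_top ENNReal.ofReal_ne_top
  have hvol_ne_zero : volume Q ≠ 0 := by
    rw [hvol]
    exact pow_ne_zero _ (by simp [hside_pos])
  set V : ℝ := (volume Q).toReal with hV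
  have hVpos : 0 < V := ENNReal.toReal_pos hvol_ne_zero hvol_ne_top
  haveI : IsFiniteMeasure (volume.restrict Q) :=
    ⟨by rw [Measure.restrict_apply_univ]; exact lt_top_iff_ne_top.mpr hvol_ne_top⟩
  set F : (Fin n → ℝ) → ℝ := fun x => Real.log (w x) with hF
  set c : ℝ := cubeAvg Q F with hc
  have hintF : IntegrableOn F Q volume := hlog.integrableOn_isCompact hQc
  have hintW : IntegrableOn w Q volume := hw.1.integrableOn_isCompact hQc
  have haeQ : ∀ᵐ x ∂(volume.restrict Q), 0 < w x := ae_restrict_of_ae hw.2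
  have hEW : (fun x => Real.exp (F x)) =ᵐ[volume.restrict Q] w :=
    haeQ.mono fun x hx => Real.exp_log hx
  have hintE : IntegrableOn (fun x => Real.exp (F x)) Q volume := hintW.congr hEW.symm
  have hintEc : IntegrableOn (fun x => Real.exp (F x - c)) Q volume := by
    have h' := hintE.mul_const (Real.exp c)⁻¹
    refine h'.congr (Eventually.of_forall fun x => ?_)
    show Real.exp (F x) * (Real.exp c)⁻¹ = Real.exp (F x - c)
    rw [Real.exp_sub, div_eq_mul_inv]
  have hIE : ∫ x in Q, Real.exp (F x) = ∫ x in Q, w x := integral_congr_ae hEW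
  have hIF : ∫ x in Q, F x = c * V := by
    rw [hc]
    unfold cubeAvg
    field_simp
    exact (mul_div_cancel_right₀ _ (ne_of_gt hVpos)).symm
  have hIEc : ∫ x in Q, Real.exp (F x - c) ≤ (1 + δ) * V := by
    have h1 : ∫ x in Q, Real.exp (F x - c) = (∫ x in Q, Real.exp (F x)) * (Real.exp c)⁻¹ := by
      rw [← integral_mul_const]
      refine integral_congr_ae (Eventually.of_forall fun x => ?_)
      show Real.exp (F x - c) = Real.exp (F x) * (Real.exp c)⁻¹
      rw [Real.exp_sub, div_eq_mul_inv]
    have h2 : cubeAvg Q w ≤ (1 + δ) * Real.exp c := hAinfty Q ⟨a, hside, hside_pos, hQeq⟩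
    have h3 : ∫ x in Q, w x ≤ (1 + δ) * Real.exp c * V := by
      unfold cubeAvg at h2
      rw [← hV] at h2
      have h4 := mul_le_mul_of_nonneg_left h2 (le_of_lt hVpos)
      rw [← mul_assoc, mul_inv_cancel₀ (ne_of_gt hVpos), one_mul] at h4
      linarith
    rw [h1, hIE]
    have hec : (0:ℝ) < (Real.exp c)⁻¹ := by positivity
    calc (∫ x in Q, w x) * (Real.exp c)⁻¹ ≤ ((1 + δ) * Real.exp c * V) * (Real.exp c)⁻¹ :=
          mul_le_mul_of_nonneg_right h3 (le_of_lt hec)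
      _ = (1 + δ) * V := by
          have := Real.exp_pos c
          field_simp
  have key : ∀ ε : ℝ, 0 < ε → ε ≤ 1 → bmoOsc Q F ≤ ε + 3 * δ / ε := by
    intro ε hε hε1
    have iA : Integrable (fun x => Real.exp (F x - c) - 1) (volume.restrict Q) :=
      hintEc.sub (integrable_const 1)
    have iB : Integrable (fun x => F x - c) (volume.restrict Q) :=
      hintF.sub (integrable_const c)
    have i1 : Integrable (fun x => Real.exp (F x - c) - 1 - (F x - c)) (volume.restrict Q) :=
      iA.sub iB
    have i2 : Integrable (fun x => 3 / ε * (Real.exp (F x - c) - 1 - (F x - c)))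
        (volume.restrict Q) := i1.const_mul _
    have hintAbs : Integrable (fun x => |F x - c|) (volume.restrict Q) := iB.abs
    have hpt : (fun x => |F x - c|) ≤ fun x => ε + 3 / ε * (Real.exp (F x - c) - 1 - (F x - c)) :=
      fun x => aux_pt ε (F x - c) hε hε1
    have hle : ∫ x in Q, |F x - c| ≤
        ∫ x in Q, (ε + 3 / ε * (Real.exp (F x - c) - 1 - (F x - c))) :=
      integral_mono hintAbs ((integrable_const ε).add i2) hpt
    have hIG : ∫ x in Q, (ε + 3 / ε * (Real.exp (F x - c) - 1 - (F x - c)))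
        ≤ (ε + 3 * δ / ε) * V := by
      rw [integral_add (integrable_const ε) i2, integral_const, integral_const_mul,
        integral_sub iA iB, integral_sub hintEc (integrable_const 1),
        integral_sub hintF (integrable_const c), integral_const, integral_const, hIF,
        measureReal_restrict_apply_univ, measureReal_def]
      simp only [smul_eq_mul, ← hV]
      have hbig : (∫ x in Q, Real.exp (F x - c)) - V * 1 - (c * V - V * c) ≤ δ * V := by
        nlinarith
      have h3e : (0:ℝ) ≤ 3 / ε := by positivity
      have h5 := mul_le_mul_of_nonneg_left hbig h3e
      have heq : (ε + 3 * δ / ε) * V = V * ε + 3 / ε * (δ * V) := by field_simp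
      rw [heq]
      linarith
    show V⁻¹ * (∫ x in Q, |F x - c|) ≤ ε + 3 * δ / ε
    calc V⁻¹ * (∫ x in Q, |F x - c|) ≤ V⁻¹ * ((ε + 3 * δ / ε) * V) := by
          apply mul_le_mul_of_nonneg_left _ (by positivity)
          linarith
      _ = ε + 3 * δ / ε := by field_simp
  rcases eq_or_lt_of_le hδ0 with hδz | hδp
  · rw [← hδz]
    simp only [Real.sqrt_zero, mul_zero]
    apply le_of_forall_pos_le_add
    intro ε hε
    have h := key (min ε 1) (lt_min hε one_pos) (min_le_right _ _)
    rw [← hδz] at h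
    have h' : bmoOsc Q F ≤ min ε 1 := by simpa using h
    calc bmoOsc Q F ≤ min ε 1 := h'
      _ ≤ 0 + ε := by rw [zero_add]; exact min_le_left ε 1
  · have hs : 0 < Real.sqrt δ := Real.sqrt_pos.mpr hδp
    have hs1 : Real.sqrt δ ≤ 1 := Real.sqrt_le_one.mpr (le_of_lt hδ1)
    have h := key (Real.sqrt δ) hs hs1
    have hds : 3 * δ / Real.sqrt δ = 3 * Real.sqrt δ := by
      rw [mul_div_assoc]
      congr 1
      rw [div_eq_iff (ne_of_gt hs), Real.mul_self_sqrt (le_of_lt hδp)]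
    rw [hds] at h
    calc bmoOsc Q F ≤ Real.sqrt δ + 3 * Real.sqrt δ := h
      _ ≤ 32 * Real.sqrt δ := by nlinarith
end
end

section
/- The space of A_1 weights on ℝ (n = 1) with the metric d_* is not complete. Precisely: let (r_k)_{k∈ℕ} be any sequence in (−1, 0) with r_k → −1, and set w_k(x) = |x|^{r_k}. Then each w_k is an A_1 weight on ℝ; the sequence (log w_k) is Cauchy in the BMO norm (for every ε > 0 there is N with ‖log w_k − log w_m‖_* ≤ ε for all k, m ≥ N); yet there exists no A_1 weight w on ℝ such that ‖log w_k − log w‖_* → 0. -/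
open MeasureTheory Real Filter
open scoped ENNReal

noncomputable section

/-- The `A₁` quantity of a weight over one cube, valued in `ℝ≥0∞`. -/
def a1Q {n : ℕ} (Q : Set (Fin n → ℝ)) (w : (Fin n → ℝ) → ℝ) : ℝ≥0∞ :=
  ENNReal.ofReal (cubeAvg Q w) *
    essSup (fun x => ENNReal.ofReal (w x)⁻¹) (volume.restrict Q)

/-- `w` is an `A₁` weight: a weight with uniformly bounded `A₁` quantities. -/
def IsA1Weight {n : ℕ} (w : (Fin n → ℝ) → ℝ) : Prop :=
  IsWeight w ∧ ∃ C : ℝ≥0∞, C ≠ ⊤ ∧ ∀ Q : Set (Fin n → ℝ), IsCube Q → a1Q Q w ≤ C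

namespace A1NC
open Set

lemma ae_ne_zero : ∀ᵐ x : ℝ ∂volume, x ≠ 0 := by
  refine ae_iff.2 ?_
  have : {x : ℝ | ¬ x ≠ 0} = {(0:ℝ)} := by ext x; simp
  rw [this]
  exact Real.volume_singleton


/-- Reflection of set integrals of even-composed functions. -/
lemma integral_abs_refl (F : ℝ → ℝ) (a b : ℝ) :
    ∫ x in Icc a b, F |x| = ∫ x in Icc (-b) (-a), F |x| := by
  have hemb : MeasurableEmbedding (Neg.neg : ℝ → ℝ) :=
    (Homeomorph.neg ℝ).measurableEmbedding
  have h := (Measure.measurePreserving_neg (volume : Measure ℝ)).setIntegral_preimage_emb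
      hemb (fun y => F |y|) (Icc (-b) (-a))
  have hpre : (Neg.neg : ℝ → ℝ) ⁻¹' Icc (-b) (-a) = Icc a b := by
    ext x; simp only [mem_preimage, mem_Icc, neg_le_neg_iff, le_neg, neg_le]
    constructor <;> intro ⟨h1, h2⟩ <;> exact ⟨by linarith, by linarith⟩
  rw [hpre] at h
  simpa [abs_neg] using h

lemma integrableOn_abs_refl {F : ℝ → ℝ} {a b : ℝ}
    (h : IntegrableOn (fun x => F |x|) (Icc (-b) (-a))) :
    IntegrableOn (fun x => F |x|) (Icc a b) := by
  have hemb : MeasurableEmbedding (Neg.neg : ℝ → ℝ) :=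
    (Homeomorph.neg ℝ).measurableEmbedding
  have hpre : (Neg.neg : ℝ → ℝ) ⁻¹' Icc (-b) (-a) = Icc a b := by
    ext x; simp only [mem_preimage, mem_Icc, le_neg, neg_le]
    constructor <;> intro ⟨h1, h2⟩ <;> exact ⟨by linarith, by linarith⟩
  have := ((Measure.measurePreserving_neg (volume : Measure ℝ)).integrableOn_comp_preimage
      hemb (f := fun y => F |y|) (s := Icc (-b) (-a))).2 h
  rw [hpre] at this
  refine this.congr_fun (fun x _ => ?_) (by measurability)
  simp [Function.comp, abs_neg]

/-- From integrability on `Icc 0 c` for all `c ≥ 0`, get it on all `Icc a b`. -/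
lemma integrableOn_abs_comp {F : ℝ → ℝ}
    (h : ∀ c : ℝ, 0 ≤ c → IntegrableOn (fun x => F |x|) (Icc 0 c)) (a b : ℝ) :
    IntegrableOn (fun x => F |x|) (Icc a b) := by
  set R : ℝ := |a| + |b| with hR
  have hR0 : 0 ≤ R := by positivity
  have h1 : IntegrableOn (fun x => F |x|) (Icc 0 R) := h R hR0
  have h2 : IntegrableOn (fun x => F |x|) (Icc (-R) 0) := by
    apply integrableOn_abs_refl; simpa using h1
  have h3 : IntegrableOn (fun x => F |x|) (Icc (-R) R) := by
    have : Icc (-R) R = Icc (-R) 0 ∪ Icc 0 R := by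
      rw [Icc_union_Icc_eq_Icc (by linarith) hR0]
    rw [this]; exact h2.union h1
  refine h3.mono ?_ le_rfl
  intro x hx
  have := abs_le.1 (le_refl |a|)
  constructor
  · have : a ≤ x := hx.1
    have : -|a| ≤ a := neg_abs_le a
    simp only [mem_Icc] at hx ⊢
    nlinarith [abs_nonneg b, neg_abs_le a, hx.1]
  · have : x ≤ b := hx.2
    nlinarith [abs_nonneg a, le_abs_self b, hx.2]

/-- `|x|^r` is integrable on any `Icc`. -/
lemma integrableOn_abs_rpow {r : ℝ} (hr : -1 < r) (a b : ℝ) :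
    IntegrableOn (fun x => |x| ^ r) (Icc a b) := by
  apply integrableOn_abs_comp (F := fun t => t ^ r)
  intro c hc
  have : IntegrableOn (fun x : ℝ => x ^ r) (Icc 0 c) := by
    rw [integrableOn_Icc_iff_integrableOn_Ioc]
    have := intervalIntegral.intervalIntegrable_rpow' (r := r) hr (a := 0) (b := c)
    rwa [intervalIntegrable_iff_integrableOn_Ioc_of_le hc] at this
  refine this.congr_fun (fun x hx => ?_) measurableSet_Icc
  rw [abs_of_nonneg hx.1]

/-- `log` is integrable on `Ioc 0 b`. -/
lemma integrableOn_log_Ioc {b : ℝ} (hb : 0 ≤ b) : IntegrableOn Real.log (Ioc 0 b) := by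
  have base : IntegrableOn Real.log (Ioc (0:ℝ) 1) := by
    have hg : IntegrableOn (fun x : ℝ => 2 * x ^ (-(1:ℝ)/2)) (Ioc (0:ℝ) 1) := by
      have := intervalIntegral.intervalIntegrable_rpow' (r := -(1:ℝ)/2) (by norm_num) (a := 0) (b := 1)
      rw [intervalIntegrable_iff_integrableOn_Ioc_of_le zero_le_one] at this
      exact this.const_mul 2
    refine hg.mono' Real.measurable_log.aestronglyMeasurable ?_
    filter_upwards [ae_restrict_mem measurableSet_Ioc] with x hx
    have hx0 : 0 < x := hx.1
    rw [Real.norm_eq_abs, abs_of_nonpos (Real.log_nonpos hx0.le hx.2)]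
    have h2 : Real.log (x ^ (-(1:ℝ)/2)) ≤ x ^ (-(1:ℝ)/2) - 1 :=
      Real.log_le_sub_one_of_pos (Real.rpow_pos_of_pos hx0 _)
    rw [Real.log_rpow hx0] at h2
    nlinarith [Real.rpow_pos_of_pos hx0 (-(1:ℝ)/2)]
  rcases le_or_gt b 1 with h1 | h1
  · exact base.mono (Ioc_subset_Ioc le_rfl h1) le_rfl
  · have hsplit : Ioc (0:ℝ) b = Ioc 0 1 ∪ Ioc 1 b :=
      (Ioc_union_Ioc_eq_Ioc zero_le_one h1.le).symm
    rw [hsplit]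
    refine base.union ?_
    have : IntegrableOn Real.log (Icc (1:ℝ) b) :=
      (Real.continuousOn_log.mono (fun x hx => by
        simp only [mem_compl_iff, mem_singleton_iff]
        intro h0
        rw [h0] at hx
        exact absurd hx.1 (by norm_num))).integrableOn_compact isCompact_Icc
    exact this.mono Ioc_subset_Icc_self le_rfl

lemma integrableOn_log_Icc {b : ℝ} (hb : 0 ≤ b) : IntegrableOn Real.log (Icc 0 b) := by
  rw [integrableOn_Icc_iff_integrableOn_Ioc]
  exact integrableOn_log_Ioc hb

/-- `log |x|` is integrable on any `Icc`. -/
lemma integrableOn_log_abs (a b : ℝ) :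
    IntegrableOn (fun x => Real.log |x|) (Icc a b) := by
  apply integrableOn_abs_comp (F := Real.log)
  intro c hc
  refine (integrableOn_log_Icc hc).congr_fun (fun x hx => ?_) measurableSet_Icc
  rw [abs_of_nonneg hx.1]

/-- `∫_0^b log = b log b - b`. -/
lemma integral_log_Icc {b : ℝ} (hb : 0 ≤ b) :
    ∫ x in Icc 0 b, Real.log x = b * Real.log b - b := by
  have hii : IntervalIntegrable Real.log volume 0 b := by
    rw [intervalIntegrable_iff_integrableOn_Ioc_of_le hb]
    exact integrableOn_log_Ioc hb
  have key := intervalIntegral.integral_eq_sub_of_hasDeriv_right_of_le hb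
    (f := fun x => x * Real.log x - x) (f' := Real.log)
    ((Real.continuous_mul_log.sub continuous_id).continuousOn)
    (fun x hx => by
      have := (Real.hasDerivAt_mul_log hx.1.ne').sub (hasDerivAt_id x)
      rw [add_sub_cancel_right] at this
      exact this.hasDerivWithinAt) hii
  rw [MeasureTheory.integral_Icc_eq_integral_Ioc, ← intervalIntegral.integral_of_le hb, key]
  simp




lemma rpow_int_eval {r c : ℝ} (hr1 : -1 < r) (hc : 0 ≤ c) :
    ∫ x in Icc 0 c, |x| ^ r = c ^ (r+1) / (r+1) := by
  have hcongr : ∫ x in Icc 0 c, |x| ^ r = ∫ x in Icc 0 c, x ^ r :=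
    setIntegral_congr_fun measurableSet_Icc (fun x hx => by rw [abs_of_nonneg hx.1])
  rw [hcongr, MeasureTheory.integral_Icc_eq_integral_Ioc,
    ← intervalIntegral.integral_of_le hc, integral_rpow (Or.inl hr1),
    Real.zero_rpow (by linarith : r + 1 ≠ 0), sub_zero]

lemma rpow_int_bound_nonneg {r a h : ℝ} (hr1 : -1 < r) (hr0 : r < 0) (hh : 0 < h)
    (ha : 0 ≤ a) :
    ∫ x in Icc a (a+h), |x| ^ r ≤ 2 / (1+r) * h * (a+h) ^ r := by
  have hr1' : (0:ℝ) < 1 + r := by linarith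
  have hpos : 0 < a + h := by linarith
  have hp : (0:ℝ) < (a+h) ^ r := Real.rpow_pos_of_pos hpos r
  rcases le_or_gt a h with hah | hah
  · -- a ≤ h : enlarge to Icc 0 (a+h)
    have hmono : ∫ x in Icc a (a+h), |x| ^ r ≤ ∫ x in Icc 0 (a+h), |x| ^ r := by
      refine setIntegral_mono_set (integrableOn_abs_rpow hr1 0 (a+h)) ?_ ?_
      · filter_upwards with x using Real.rpow_nonneg (abs_nonneg x) r
      · exact (Icc_subset_Icc ha le_rfl).eventuallyLE
    rw [rpow_int_eval hr1 hpos.le] at hmono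
    refine hmono.trans ?_
    have hineq : (a+h) ^ (r+1) ≤ 2*h*(a+h)^r := by
      rw [Real.rpow_add hpos, Real.rpow_one]
      nlinarith [mul_le_mul_of_nonneg_left (by linarith : a+h ≤ 2*h) hp.le]
    calc (a+h)^(r+1)/(r+1) ≤ (2*h*(a+h)^r)/(r+1) := by
          apply div_le_div_of_nonneg_right hineq (by linarith)
      _ = 2/(1+r)*h*(a+h)^r := by ring
  · -- h ≤ a, a > 0
    have ha0 : 0 < a := lt_trans hh hah
    have hb1 : ∫ x in Icc a (a+h), |x| ^ r ≤ ∫ x in Icc a (a+h), a ^ r := by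
      refine setIntegral_mono_on (integrableOn_abs_rpow hr1 _ _)
        (integrableOn_const measure_Icc_lt_top.ne) measurableSet_Icc ?_
      intro x hx
      have hax : a ≤ |x| := le_trans hx.1 (le_abs_self x)
      exact Real.rpow_le_rpow_of_nonpos ha0 hax hr0.le
    have hb2 : ∫ x in Icc a (a+h), (a:ℝ) ^ r = h * a ^ r := by
      rw [setIntegral_const, measureReal_def, Real.volume_Icc, smul_eq_mul,
        ENNReal.toReal_ofReal (by linarith)]
      ring_nf
    have hkey : a ^ r ≤ 2 * (a+h) ^ r := by
      have h1 : a ^ r ≤ ((a+h)/2) ^ r :=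
        Real.rpow_le_rpow_of_nonpos (by linarith) (by linarith) hr0.le
      have h2 : ((a+h)/2) ^ r = (a+h) ^ r / 2 ^ r := Real.div_rpow hpos.le (by norm_num : (0:ℝ) ≤ 2) r
      have h3 : (1:ℝ)/2 ≤ 2 ^ r := by
        calc (1:ℝ)/2 = 2 ^ (-1:ℝ) := by rw [Real.rpow_neg_one]; norm_num
          _ ≤ 2 ^ r := Real.rpow_le_rpow_of_exponent_le one_le_two (by linarith)
      rw [h2] at h1
      calc a ^ r ≤ (a+h) ^ r / 2 ^ r := h1
        _ ≤ (a+h) ^ r / (1/2) := div_le_div_of_nonneg_left hp.le (by norm_num) h3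
        _ = 2 * (a+h) ^ r := by ring
    calc ∫ x in Icc a (a+h), |x| ^ r ≤ h * a ^ r := by rw [← hb2]; exact hb1
      _ ≤ h * (2 * (a+h) ^ r) := by nlinarith
      _ ≤ 2 / (1+r) * h * (a+h) ^ r := by
          rw [div_mul_eq_mul_div, div_mul_eq_mul_div, le_div_iff₀ hr1']
          nlinarith [mul_pos hh hp]

lemma rpow_int_bound {r a h : ℝ} (hr1 : -1 < r) (hr0 : r < 0) (hh : 0 < h) :
    ∫ x in Icc a (a+h), |x| ^ r ≤ 2 / (1+r) * h * (max |a| |a+h|) ^ r := by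
  have hr1' : (0:ℝ) < 1 + r := by linarith
  rcases le_or_gt 0 a with ha | ha
  · have hM : max |a| |a+h| = a + h := by
      rw [abs_of_nonneg ha, abs_of_nonneg (by linarith), max_eq_right (by linarith)]
    rw [hM]; exact rpow_int_bound_nonneg hr1 hr0 hh ha
  rcases le_or_gt (a + h) 0 with hb | hb
  · -- reflect
    have hM : max |a| |a+h| = -a := by
      rw [abs_of_nonpos ha.le, abs_of_nonpos hb, max_eq_left (by linarith)]
    rw [hM, integral_abs_refl (fun t => t ^ r) a (a+h),
      show (-a) = -(a+h)+h by ring]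
    exact rpow_int_bound_nonneg hr1 hr0 hh (by linarith)
  · -- straddle : a < 0 < a + h
    set M := max |a| |a+h| with hMdef
    have hMa : -a ≤ M := by
      rw [hMdef, ← abs_of_neg ha]; exact le_max_left _ _
    have hM0 : 0 < M := lt_of_lt_of_le (by linarith : (0:ℝ) < -a) hMa
    have hMb : a + h ≤ M := le_trans (le_abs_self _) (le_max_right _ _)
    have hMh : M ≤ h := by
      rw [hMdef]; apply max_le
      · rw [abs_of_neg ha]; linarith
      · rw [abs_of_pos hb]; linarith
    have hint : ∫ x in Icc a (a+h), |x| ^ r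
        = (∫ x in Ioc a 0, |x| ^ r) + ∫ x in Ioc 0 (a+h), |x| ^ r := by
      rw [MeasureTheory.integral_Icc_eq_integral_Ioc, ← Ioc_union_Ioc_eq_Ioc ha.le hb.le,
        setIntegral_union (Ioc_disjoint_Ioc_of_le le_rfl) measurableSet_Ioc
          ((integrableOn_abs_rpow hr1 a 0).mono Ioc_subset_Icc_self le_rfl)
          ((integrableOn_abs_rpow hr1 0 (a+h)).mono Ioc_subset_Icc_self le_rfl)]
    have e1 : ∫ x in Ioc a 0, |x| ^ r = (-a) ^ (r+1) / (r+1) := by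
      rw [← MeasureTheory.integral_Icc_eq_integral_Ioc,
        integral_abs_refl (fun t => t ^ r) a 0]
      have := rpow_int_eval (c := -a) hr1 (by linarith)
      simpa using this
    have e2 : ∫ x in Ioc 0 (a+h), |x| ^ r = (a+h) ^ (r+1) / (r+1) := by
      rw [← MeasureTheory.integral_Icc_eq_integral_Ioc]; exact rpow_int_eval hr1 hb.le
    have hm1 : (-a) ^ (r+1) ≤ M ^ (r+1) := Real.rpow_le_rpow (by linarith) hMa (by linarith)
    have hm2 : (a+h) ^ (r+1) ≤ M ^ (r+1) := Real.rpow_le_rpow hb.le hMb (by linarith)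
    have hMexp : M ^ (r+1) = M ^ r * M := by rw [Real.rpow_add hM0, Real.rpow_one]
    have hMr : 0 < M ^ r := Real.rpow_pos_of_pos hM0 r
    have hsum : (-a) ^ (r+1) + (a+h) ^ (r+1) ≤ 2 * (h * M ^ r) := by
      nlinarith [mul_le_mul_of_nonneg_left hMh hMr.le]
    rw [hint, e1, e2, ← add_div]
    calc ((-a) ^ (r+1) + (a+h) ^ (r+1))/(r+1) ≤ (2*(h*M^r))/(r+1) :=
          div_le_div_of_nonneg_right hsum (by linarith)
      _ = 2/(1+r)*h*M^r := by ring



/-- Average on a real interval. -/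
def rAvg (a b : ℝ) (F : ℝ → ℝ) : ℝ :=
  ((volume (Icc a b)).toReal)⁻¹ * ∫ x in Icc a b, F x

/-- Mean oscillation on a real interval. -/
def rOsc (a b : ℝ) (F : ℝ → ℝ) : ℝ :=
  rAvg a b fun x => |F x - rAvg a b F|

lemma rOsc_def (a b : ℝ) (F : ℝ → ℝ) :
    rOsc a b F = rAvg a b fun x => |F x - rAvg a b F| := rfl

lemma vol_Icc_toReal {a b : ℝ} (hab : a ≤ b) : (volume (Icc a b)).toReal = b - a := by
  rw [Real.volume_Icc, ENNReal.toReal_ofReal (by linarith)]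

lemma intOn_const {a b c : ℝ} : IntegrableOn (fun _ : ℝ => c) (Icc a b) :=
  integrableOn_const measure_Icc_lt_top.ne

lemma rAvg_congr_ae {a b : ℝ} {F G : ℝ → ℝ}
    (h : F =ᵐ[volume.restrict (Icc a b)] G) : rAvg a b F = rAvg a b G := by
  unfold rAvg; rw [integral_congr_ae h]

lemma rOsc_congr_ae {a b : ℝ} {F G : ℝ → ℝ}
    (h : F =ᵐ[volume.restrict (Icc a b)] G) : rOsc a b F = rOsc a b G := by
  rw [rOsc_def, rOsc_def, rAvg_congr_ae h]
  apply rAvg_congr_ae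
  filter_upwards [h] with x hx
  rw [hx]

lemma rOsc_nonneg (a b : ℝ) (F : ℝ → ℝ) : 0 ≤ rOsc a b F := by
  unfold rOsc rAvg
  exact mul_nonneg (by positivity) (integral_nonneg fun x => abs_nonneg _)

lemma rAvg_const_mul (a b c : ℝ) (F : ℝ → ℝ) :
    rAvg a b (fun x => c * F x) = c * rAvg a b F := by
  unfold rAvg; rw [integral_const_mul]; ring

lemma rOsc_const_mul (a b c : ℝ) (F : ℝ → ℝ) :
    rOsc a b (fun x => c * F x) = |c| * rOsc a b F := by
  rw [rOsc_def, rOsc_def, rAvg_const_mul]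
  have : (fun x => |c * F x - c * rAvg a b F|) = fun x => |c| * |F x - rAvg a b F| := by
    funext x; rw [← abs_mul, mul_sub]
  rw [this, rAvg_const_mul]

lemma rOsc_neg (a b : ℝ) (F : ℝ → ℝ) : rOsc a b (fun x => -F x) = rOsc a b F := by
  have : (fun x => -F x) = fun x => (-1) * F x := by funext x; ring
  rw [this, rOsc_const_mul]; simp

lemma rAvg_const {a b : ℝ} (hab : a < b) (c : ℝ) : rAvg a b (fun _ => c) = c := by
  unfold rAvg
  rw [setIntegral_const, measureReal_def, vol_Icc_toReal hab.le, smul_eq_mul]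
  have hne : b - a ≠ 0 := by intro h; linarith [hab]
  field_simp

lemma rAvg_add {a b : ℝ} {F G : ℝ → ℝ}
    (hF : IntegrableOn F (Icc a b)) (hG : IntegrableOn G (Icc a b)) :
    rAvg a b (fun x => F x + G x) = rAvg a b F + rAvg a b G := by
  unfold rAvg; rw [integral_add hF hG]; ring

lemma rAvg_sub {a b : ℝ} {F G : ℝ → ℝ}
    (hF : IntegrableOn F (Icc a b)) (hG : IntegrableOn G (Icc a b)) :
    rAvg a b (fun x => F x - G x) = rAvg a b F - rAvg a b G := by
  unfold rAvg; rw [integral_sub hF hG]; ring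

lemma intOn_abs_sub {a b c : ℝ} {F : ℝ → ℝ} (hF : IntegrableOn F (Icc a b)) :
    IntegrableOn (fun x => |F x - c|) (Icc a b) := (hF.sub intOn_const).abs

lemma rAvg_mono {a b : ℝ} {F G : ℝ → ℝ}
    (hF : IntegrableOn F (Icc a b)) (hG : IntegrableOn G (Icc a b))
    (h : ∀ x, F x ≤ G x) : rAvg a b F ≤ rAvg a b G := by
  unfold rAvg
  exact mul_le_mul_of_nonneg_left (integral_mono hF hG h) (by positivity)

lemma abs_rAvg_le (a b : ℝ) (F : ℝ → ℝ) : |rAvg a b F| ≤ rAvg a b (fun x => |F x|) := by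
  unfold rAvg
  rw [abs_mul, abs_of_nonneg (by positivity : (0:ℝ) ≤ ((volume (Icc a b)).toReal)⁻¹)]
  apply mul_le_mul_of_nonneg_left _ (by positivity)
  simpa [Real.norm_eq_abs] using
    norm_integral_le_integral_norm (μ := volume.restrict (Icc a b)) F

lemma abs_rAvg_sub_le {a b : ℝ} (c : ℝ) {F : ℝ → ℝ} (hab : a < b)
    (hF : IntegrableOn F (Icc a b)) :
    |rAvg a b F - c| ≤ rAvg a b (fun x => |F x - c|) := by
  have h1 : rAvg a b F - c = rAvg a b (fun x => F x - c) := by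
    rw [rAvg_sub hF intOn_const, rAvg_const hab]
  rw [h1]
  exact abs_rAvg_le a b _

lemma rOsc_le_two_avg {a b : ℝ} (c : ℝ) {F : ℝ → ℝ} (hab : a < b)
    (hF : IntegrableOn F (Icc a b)) :
    rOsc a b F ≤ 2 * rAvg a b (fun x => |F x - c|) := by
  set A := rAvg a b F with hA
  have h1 : |A - c| ≤ rAvg a b (fun x => |F x - c|) := abs_rAvg_sub_le c hab hF
  have step : rOsc a b F ≤ rAvg a b (fun x => |F x - c| + |c - A|) := by
    rw [rOsc_def, ← hA]
    refine rAvg_mono (intOn_abs_sub hF)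
      ((intOn_abs_sub hF).add intOn_const) (fun x => abs_sub_le _ _ _)
  rw [rAvg_add (intOn_abs_sub hF) intOn_const, rAvg_const hab] at step
  have h1' : |c - A| ≤ rAvg a b (fun x => |F x - c|) := by rw [abs_sub_comm]; exact h1
  linarith

lemma rOsc_add_le {a b : ℝ} {F G : ℝ → ℝ} (hab : a < b)
    (hF : IntegrableOn F (Icc a b)) (hG : IntegrableOn G (Icc a b)) :
    rOsc a b (fun x => F x + G x) ≤ rOsc a b F + rOsc a b G := by
  have hAsum : rAvg a b (fun x => F x + G x) = rAvg a b F + rAvg a b G := rAvg_add hF hG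
  set AF := rAvg a b F
  set AG := rAvg a b G
  have step : rOsc a b (fun x => F x + G x)
      ≤ rAvg a b (fun x => |F x - AF| + |G x - AG|) := by
    rw [rOsc_def, hAsum]
    refine rAvg_mono (intOn_abs_sub (hF.add hG))
      ((intOn_abs_sub hF).add (intOn_abs_sub hG)) (fun x => ?_)
    have : F x + G x - (AF + AG) = (F x - AF) + (G x - AG) := by ring
    rw [this]; exact abs_add_le _ _
  rw [rAvg_add (intOn_abs_sub hF) (intOn_abs_sub hG)] at step
  exact step

lemma rOsc_eq_zero_imp {a b : ℝ} {F : ℝ → ℝ} (hab : a < b)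
    (hF : IntegrableOn F (Icc a b)) (h : rOsc a b F = 0) :
    F =ᵐ[volume.restrict (Icc a b)] fun _ => rAvg a b F := by
  set A := rAvg a b F with hA
  have hint : Integrable (fun x => |F x - A|) (volume.restrict (Icc a b)) :=
    (hF.sub intOn_const).abs
  have hm0 : (0:ℝ) < ((volume (Icc a b)).toReal)⁻¹ := by
    rw [vol_Icc_toReal hab.le]; have : (0:ℝ) < b - a := by linarith
    positivity
  have hzero : ∫ x in Icc a b, |F x - A| = 0 := by
    rw [rOsc_def, ← hA] at h
    unfold rAvg at h
    rcases mul_eq_zero.1 h with h' | h'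
    · exact absurd h' (ne_of_gt hm0)
    · exact h'
  have hae := (integral_eq_zero_iff_of_nonneg_ae
    (Eventually.of_forall fun x => abs_nonneg (F x - A)) hint).1 hzero
  filter_upwards [hae] with x hx
  have hx0 : |F x - A| = 0 := hx
  have := abs_eq_zero.1 hx0
  show F x = A
  linarith






/-- Far case: on `[a, a+h]` with `h ≤ a`, `log|x|` deviates at most 1 from `log a`. -/
lemma far_int {a h : ℝ} (hh : 0 < h) (ha : h ≤ a) :
    ∫ x in Icc a (a+h), |Real.log |x| - Real.log a| ≤ 4 * h := by
  have ha0 : 0 < a := lt_of_lt_of_le hh ha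
  have hbound : ∀ x ∈ Icc a (a+h), |Real.log |x| - Real.log a| ≤ 1 := by
    intro x hx
    have hx0 : 0 < x := lt_of_lt_of_le ha0 hx.1
    have habs : |x| = x := abs_of_pos hx0
    rw [habs]
    have h1 : Real.log a ≤ Real.log x := Real.log_le_log ha0 hx.1
    have h2 : Real.log x - Real.log a = Real.log (x / a) := (Real.log_div hx0.ne' ha0.ne').symm
    rw [abs_of_nonneg (by linarith)]
    rw [h2]
    have h3 : Real.log (x/a) ≤ x/a - 1 := Real.log_le_sub_one_of_pos (by positivity)
    have h4 : x / a ≤ (a+h)/a := by gcongr; exact hx.2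
    have h5 : (a+h)/a - 1 = h / a := by field_simp; ring
    have h6 : h / a ≤ 1 := by
      rw [div_le_one ha0]; linarith
    linarith
  have hmono : ∫ x in Icc a (a+h), |Real.log |x| - Real.log a| ≤
      ∫ _x in Icc a (a+h), (1:ℝ) :=
    setIntegral_mono_on (intOn_abs_sub (integrableOn_log_abs a (a+h))) intOn_const
      measurableSet_Icc hbound
  rw [setIntegral_const, measureReal_def, vol_Icc_toReal (by linarith), smul_eq_mul] at hmono
  calc ∫ x in Icc a (a+h), |Real.log |x| - Real.log a| ≤ (a+h-a)*1 := hmono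
    _ ≤ 4 * h := by nlinarith

lemma log_abs_osc_int {a h : ℝ} (hh : 0 < h) :
    ∃ c, ∫ x in Icc a (a+h), |Real.log |x| - c| ≤ 4 * h := by
  rcases le_or_gt h a with hfar | hnear
  · exact ⟨Real.log a, far_int hh hfar⟩
  rcases le_or_gt (a+h) (-h) with hfar' | hnear'
  · -- reflection
    refine ⟨Real.log (-(a+h)), ?_⟩
    have := integral_abs_refl (fun t => |Real.log t - Real.log (-(a+h))|) a (a+h)
    rw [this, show (-a) = -(a+h)+h by ring]
    exact far_int hh (by linarith)
  · -- middle case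
    set c := Real.log (2*h) with hc
    refine ⟨c, ?_⟩
    have h2h : (0:ℝ) < 2*h := by linarith
    have hsub : Icc a (a+h) ⊆ Icc (-(2*h)) (2*h) :=
      Icc_subset_Icc (by linarith) (by linarith)
    -- a.e. the integrand is c - log|x| on the big interval
    have hker : ∀ x : ℝ, x ≠ 0 → x ∈ Icc (-(2*h)) (2*h) → Real.log |x| ≤ c := by
      intro x hx0 hx
      have habs : 0 < |x| := abs_pos.2 hx0
      have hle : |x| ≤ 2*h := abs_le.2 ⟨by linarith [hx.1], hx.2⟩
      rw [hc]
      exact Real.log_le_log habs hle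
    have hae1 : ∀ᵐ x ∂volume.restrict (Icc a (a+h)),
        |Real.log |x| - c| = c - Real.log |x| := by
      filter_upwards [ae_restrict_mem measurableSet_Icc, ae_restrict_of_ae ae_ne_zero]
        with x hx hx0
      rw [abs_of_nonpos (by linarith [hker x hx0 (hsub hx)])]
      ring
    rw [integral_congr_ae hae1]
    have hintbig : IntegrableOn (fun x => c - Real.log |x|) (Icc (-(2*h)) (2*h)) :=
      intOn_const.sub (integrableOn_log_abs _ _)
    have hmono : ∫ x in Icc a (a+h), (c - Real.log |x|)
        ≤ ∫ x in Icc (-(2*h)) (2*h), (c - Real.log |x|) := by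
      refine setIntegral_mono_set hintbig ?_ hsub.eventuallyLE
      filter_upwards [ae_restrict_mem measurableSet_Icc, ae_restrict_of_ae ae_ne_zero]
        with x hx hx0
      have := hker x hx0 hx
      simp only [Pi.zero_apply]
      linarith
    refine hmono.trans ?_
    -- compute the big integral
    have hsplit : ∫ x in Icc (-(2*h)) (2*h), Real.log |x|
        = (∫ x in Ioc (-(2*h)) 0, Real.log |x|) + ∫ x in Ioc 0 (2*h), Real.log |x| := by
      rw [MeasureTheory.integral_Icc_eq_integral_Ioc,
        ← Ioc_union_Ioc_eq_Ioc (by linarith : -(2*h) ≤ (0:ℝ)) (by linarith : (0:ℝ) ≤ 2*h),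
        setIntegral_union (Ioc_disjoint_Ioc_of_le le_rfl) measurableSet_Ioc
          ((integrableOn_log_abs (-(2*h)) 0).mono Ioc_subset_Icc_self le_rfl)
          ((integrableOn_log_abs 0 (2*h)).mono Ioc_subset_Icc_self le_rfl)]
    have hpc : ∫ x in Icc 0 (2*h), Real.log |x| = 2*h * Real.log (2*h) - 2*h := by
      have hcongr : ∫ x in Icc 0 (2*h), Real.log |x| = ∫ x in Icc 0 (2*h), Real.log x :=
        setIntegral_congr_fun measurableSet_Icc (fun x hx => by rw [abs_of_nonneg hx.1])
      rw [hcongr, integral_log_Icc (by linarith)]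
    have e1 : ∫ x in Ioc (-(2*h)) 0, Real.log |x| = ∫ x in Icc 0 (2*h), Real.log |x| := by
      rw [← MeasureTheory.integral_Icc_eq_integral_Ioc,
        integral_abs_refl Real.log (-(2*h)) 0, neg_zero, neg_neg]
    have e2 : ∫ x in Ioc (0:ℝ) (2*h), Real.log |x| = ∫ x in Icc 0 (2*h), Real.log |x| :=
      MeasureTheory.integral_Icc_eq_integral_Ioc.symm
    have hbig : ∫ x in Icc (-(2*h)) (2*h), (c - Real.log |x|) = 4 * h := by
      rw [integral_sub intOn_const (integrableOn_log_abs _ _), setIntegral_const, measureReal_def,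
        vol_Icc_toReal (by linarith), smul_eq_mul, hsplit, e1, e2, hpc, hc]
      ring
    linarith [hbig]

lemma rOsc_log_abs_le {a h : ℝ} (hh : 0 < h) :
    rOsc a (a+h) (fun x => Real.log |x|) ≤ 8 := by
  obtain ⟨c, hc⟩ := log_abs_osc_int (a := a) hh
  have hab : a < a + h := by linarith
  have h2 := rOsc_le_two_avg c hab (integrableOn_log_abs a (a+h))
  have h3 : rAvg a (a+h) (fun x => |Real.log |x| - c|) ≤ 4 := by
    unfold rAvg
    rw [vol_Icc_toReal hab.le, show a + h - a = h by ring]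
    calc h⁻¹ * ∫ x in Icc a (a+h), |Real.log |x| - c| ≤ h⁻¹ * (4*h) :=
          mul_le_mul_of_nonneg_left hc (by positivity)
      _ = 4 := by field_simp
  linarith


open Set


lemma mp_e1 : MeasurePreserving (fun x : Fin 1 → ℝ => x 0) volume volume :=
  volume_preserving_funUnique (Fin 1) ℝ

lemma emb_e1 : MeasurableEmbedding (fun x : Fin 1 → ℝ => x 0) :=
  (MeasurableEquiv.funUnique (Fin 1) ℝ).measurableEmbedding

lemma mp_e1symm : MeasurePreserving (fun y : ℝ => (fun _ : Fin 1 => y)) volume volume :=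
  (volume_preserving_funUnique (Fin 1) ℝ).symm _

lemma fn_realize (w : (Fin 1 → ℝ) → ℝ) (x : Fin 1 → ℝ) : w x = w (fun _ => x 0) := by
  congr 1; funext i; rw [Fin.eq_zero i]

lemma cube_iff (Q : Set (Fin 1 → ℝ)) : IsCube Q ↔
    ∃ a h : ℝ, 0 < h ∧ Q = (fun x : Fin 1 → ℝ => x 0) ⁻¹' Set.Icc a (a+h) := by
  constructor
  · rintro ⟨a, h, hh, rfl⟩
    refine ⟨a 0, h, hh, ?_⟩
    ext x
    simp only [Set.mem_univ_pi, Set.mem_preimage, Fin.forall_fin_one]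
  · rintro ⟨a, h, hh, rfl⟩
    refine ⟨fun _ => a, h, hh, ?_⟩
    ext x
    simp only [Set.mem_univ_pi, Set.mem_preimage, Fin.forall_fin_one]

lemma vol_pre {s : Set ℝ} (hs : MeasurableSet s) :
    volume ((fun x : Fin 1 → ℝ => x 0) ⁻¹' s) = volume s :=
  mp_e1.measure_preimage hs.nullMeasurableSet

lemma int_pre (F : ℝ → ℝ) (s : Set ℝ) :
    ∫ x in (fun x : Fin 1 → ℝ => x 0) ⁻¹' s, F (x 0) = ∫ y in s, F y :=
  mp_e1.setIntegral_preimage_emb emb_e1 F s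

lemma intOn_pre {F : ℝ → ℝ} {s : Set ℝ} :
    IntegrableOn (fun x : Fin 1 → ℝ => F (x 0)) ((fun x : Fin 1 → ℝ => x 0) ⁻¹' s) volume
      ↔ IntegrableOn F s volume :=
  mp_e1.integrableOn_comp_preimage emb_e1

lemma cubeAvg_pre (F : ℝ → ℝ) (a b : ℝ) :
    cubeAvg ((fun x : Fin 1 → ℝ => x 0) ⁻¹' Set.Icc a b) (fun x => F (x 0)) = rAvg a b F := by
  unfold cubeAvg rAvg
  rw [vol_pre measurableSet_Icc, int_pre]

lemma bmoOsc_pre (F : ℝ → ℝ) (a b : ℝ) :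
    bmoOsc ((fun x : Fin 1 → ℝ => x 0) ⁻¹' Set.Icc a b) (fun x => F (x 0)) = rOsc a b F := by
  unfold bmoOsc rOsc
  rw [cubeAvg_pre F a b]
  exact cubeAvg_pre (fun y => |F y - rAvg a b F|) a b

lemma loc_int {F : ℝ → ℝ} (hF : ∀ a b : ℝ, IntegrableOn F (Set.Icc a b)) :
    LocallyIntegrable (fun x : Fin 1 → ℝ => F (x 0)) volume := by
  rw [locallyIntegrable_iff]
  intro K hK
  obtain ⟨R, hR⟩ := (hK.image (continuous_apply 0)).isBounded.subset_closedBall 0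
  have hsub : K ⊆ (fun x : Fin 1 → ℝ => x 0) ⁻¹' Set.Icc (-R) R := by
    intro x hx
    have : x 0 ∈ Metric.closedBall 0 R := hR ⟨x, hx, rfl⟩
    simpa [Real.closedBall_eq_Icc] using this
  exact (intOn_pre.2 (hF (-R) R)).mono hsub le_rfl

lemma ae_pr_ne_zero : ∀ᵐ x : Fin 1 → ℝ ∂volume, x 0 ≠ 0 := by
  have h0 : volume ((fun x : Fin 1 → ℝ => x 0) ⁻¹' {(0:ℝ)}) = 0 := by
    rw [vol_pre (measurableSet_singleton 0)]; exact Real.volume_singleton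
  refine ae_iff.2 ?_
  have hs : {x : Fin 1 → ℝ | ¬ x 0 ≠ 0} = (fun x : Fin 1 → ℝ => x 0) ⁻¹' {(0:ℝ)} := by
    ext x; simp
  rw [hs]; exact h0

lemma ae_pre_global {p : ℝ → Prop} (h : ∀ᵐ x : Fin 1 → ℝ ∂volume, p (x 0)) :
    ∀ᵐ y : ℝ ∂volume, p y :=
  mp_e1symm.quasiMeasurePreserving.ae h

lemma ae_restrict_pre {s : Set ℝ} (hs : MeasurableSet s) {p : ℝ → Prop}
    (h : ∀ᵐ x ∂(volume.restrict ((fun x : Fin 1 → ℝ => x 0) ⁻¹' s)), p (x 0)) :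
    ∀ᵐ y ∂(volume.restrict s), p y := by
  have hQ : MeasurableSet ((fun x : Fin 1 → ℝ => x 0) ⁻¹' s) :=
    (measurable_pi_apply 0) hs
  have hres := mp_e1symm.restrict_preimage hQ
  have hset : (fun y : ℝ => (fun _ : Fin 1 => y)) ⁻¹' ((fun x : Fin 1 → ℝ => x 0) ⁻¹' s) = s := rfl
  rw [hset] at hres
  exact hres.quasiMeasurePreserving.ae h


lemma part1 {r : ℝ} (hr1 : -1 < r) (hr0 : r < 0) :
    IsA1Weight (fun x : Fin 1 → ℝ => |x 0| ^ r) := by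
  refine ⟨⟨loc_int (F := fun y => |y| ^ r) (fun a b => integrableOn_abs_rpow hr1 a b), ?_⟩, ?_⟩
  · filter_upwards [ae_pr_ne_zero] with x hx
    exact Real.rpow_pos_of_pos (abs_pos.2 hx) r
  · refine ⟨ENNReal.ofReal (2/(1+r)), ENNReal.ofReal_ne_top, ?_⟩
    intro Q hQ
    obtain ⟨a, h, hh, rfl⟩ := (cube_iff Q).1 hQ
    set M := max |a| |a+h| with hM
    have hM0 : 0 < M := by
      rcases lt_or_ge 0 (a+h) with hb | hb
      · exact lt_of_lt_of_le (abs_pos.2 (ne_of_gt hb)) (le_max_right _ _)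
      · have ha' : a < 0 := by linarith
        exact lt_of_lt_of_le (abs_pos.2 (ne_of_lt ha')) (le_max_left _ _)
    have havg : cubeAvg ((fun x : Fin 1 → ℝ => x 0) ⁻¹' Set.Icc a (a+h))
        (fun x : Fin 1 → ℝ => |x 0| ^ r) ≤ 2/(1+r) * M ^ r := by
      have hpre := cubeAvg_pre (fun y => |y| ^ r) a (a+h)
      rw [hpre]
      unfold rAvg
      rw [vol_Icc_toReal (by linarith), show a + h - a = h by ring]
      calc h⁻¹ * ∫ x in Icc a (a+h), |x| ^ r
          ≤ h⁻¹ * (2/(1+r)*h*M^r) :=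
            mul_le_mul_of_nonneg_left (rpow_int_bound hr1 hr0 hh) (by positivity)
        _ = 2/(1+r) * M ^ r * (h⁻¹ * h) := by ring
        _ = 2/(1+r) * M ^ r := by rw [inv_mul_cancel₀ (ne_of_gt hh), mul_one]
    have hQmeas : MeasurableSet ((fun x : Fin 1 → ℝ => x 0) ⁻¹' Set.Icc a (a+h)) :=
      (measurable_pi_apply 0) measurableSet_Icc
    have hess : essSup (fun x : Fin 1 → ℝ => ENNReal.ofReal (|x 0| ^ r)⁻¹)
        (volume.restrict ((fun x : Fin 1 → ℝ => x 0) ⁻¹' Set.Icc a (a+h)))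
        ≤ ENNReal.ofReal (M ^ (-r)) := by
      refine essSup_le_of_ae_le _ ?_
      filter_upwards [ae_restrict_mem hQmeas] with x hx
      have hxM : |x 0| ≤ M := abs_le_max_abs_abs hx.1 hx.2
      have h1 : (|x 0| ^ r)⁻¹ = |x 0| ^ (-r) := (Real.rpow_neg (abs_nonneg _) r).symm
      rw [h1]
      exact ENNReal.ofReal_le_ofReal (Real.rpow_le_rpow (abs_nonneg _) hxM (by linarith))
    unfold a1Q
    calc ENNReal.ofReal (cubeAvg _ (fun x : Fin 1 → ℝ => |x 0| ^ r)) *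
          essSup (fun x : Fin 1 → ℝ => ENNReal.ofReal (|x 0| ^ r)⁻¹) (volume.restrict _)
        ≤ ENNReal.ofReal (2/(1+r) * M ^ r) * ENNReal.ofReal (M ^ (-r)) :=
          mul_le_mul' (ENNReal.ofReal_le_ofReal havg) hess
      _ = ENNReal.ofReal (2/(1+r) * M ^ r * M ^ (-r)) :=
          (ENNReal.ofReal_mul (by
            have h1r : (0:ℝ) < 1 + r := by linarith
            positivity)).symm
      _ = ENNReal.ofReal (2/(1+r)) := by
          rw [mul_assoc, ← Real.rpow_add hM0, add_neg_cancel, Real.rpow_zero, mul_one]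

lemma osc_one (hk hm : ℝ) {Q : Set (Fin 1 → ℝ)} (hQ : IsCube Q) :
    bmoOsc Q (fun x : Fin 1 → ℝ => Real.log (|x 0| ^ hk) - Real.log (|x 0| ^ hm))
      ≤ |hk - hm| * 8 := by
  obtain ⟨a, h, hh, rfl⟩ := (cube_iff Q).1 hQ
  have hpre := bmoOsc_pre (fun y => Real.log (|y| ^ hk) - Real.log (|y| ^ hm)) a (a+h)
  rw [hpre]
  have hcongr : rOsc a (a+h) (fun y => Real.log (|y| ^ hk) - Real.log (|y| ^ hm))
      = rOsc a (a+h) (fun y => (hk - hm) * Real.log |y|) := by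
    apply rOsc_congr_ae
    filter_upwards [ae_restrict_of_ae ae_ne_zero] with y hy
    rw [Real.log_rpow (abs_pos.2 hy), Real.log_rpow (abs_pos.2 hy)]
    ring
  rw [hcongr, rOsc_const_mul]
  exact mul_le_mul_of_nonneg_left (rOsc_log_abs_le hh) (abs_nonneg _)

lemma part2 (r : ℕ → ℝ) (hrlim : Filter.Tendsto r Filter.atTop (nhds (-1 : ℝ))) :
    ∀ ε : ℝ, 0 < ε → ∃ N : ℕ, ∀ k ≥ N, ∀ m ≥ N,
      BmoLe (fun x : Fin 1 → ℝ =>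
        Real.log (|x 0| ^ r k) - Real.log (|x 0| ^ r m)) ε := by
  intro ε hε
  obtain ⟨N, hN⟩ := Metric.tendsto_atTop.1 hrlim (ε/16) (by positivity)
  refine ⟨N, fun k hk m hm Q hQ => ?_⟩
  have h1 := hN k hk
  have h2 := hN m hm
  rw [Real.dist_eq] at h1 h2
  have hdiff : |r k - r m| ≤ ε/8 := by
    have := abs_sub_abs_le_abs_sub (r k) (r m)
    calc |r k - r m| = |(r k - (-1)) - (r m - (-1))| := by ring_nf
      _ ≤ |r k - (-1)| + |r m - (-1)| := abs_sub _ _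
      _ ≤ ε/8 := by linarith
  calc bmoOsc Q (fun x : Fin 1 → ℝ => Real.log (|x 0| ^ r k) - Real.log (|x 0| ^ r m))
      ≤ |r k - r m| * 8 := osc_one (r k) (r m) hQ
    _ ≤ ε/8 * 8 := mul_le_mul_of_nonneg_right hdiff (by norm_num)
    _ = ε := by ring

lemma pre_compact (a b : ℝ) : IsCompact ((fun x : Fin 1 → ℝ => x 0) ⁻¹' Set.Icc a b) := by
  have hset : ((fun x : Fin 1 → ℝ => x 0) ⁻¹' Set.Icc a b)
      = Set.univ.pi (fun _ : Fin 1 => Set.Icc a b) := by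
    ext x; simp only [Set.mem_univ_pi, Set.mem_preimage, Fin.forall_fin_one]
  rw [hset]
  exact isCompact_univ_pi (fun _ => isCompact_Icc)

lemma part3 (r : ℕ → ℝ) (hr : ∀ k, r k ∈ Set.Ioo (-1 : ℝ) 0)
    (hrlim : Filter.Tendsto r Filter.atTop (nhds (-1 : ℝ))) :
    ¬ ∃ w : (Fin 1 → ℝ) → ℝ, IsA1Weight w ∧
        ∀ ε : ℝ, 0 < ε → ∃ N : ℕ, ∀ k ≥ N,
          BmoLe (fun x : Fin 1 → ℝ =>
            Real.log (|x 0| ^ r k) - Real.log (w x)) ε := by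
  rintro ⟨w, ⟨⟨hloc, hpos⟩, C, hC, hCb⟩, hconv⟩
  set W : ℝ → ℝ := fun y => w (fun _ => y) with hWdef
  have hwW : ∀ x : Fin 1 → ℝ, w x = W (x 0) := fun x => fn_realize w x
  have hwfun : w = fun x : Fin 1 → ℝ => W (x 0) := funext hwW
  set Q1 : Set (Fin 1 → ℝ) := (fun x : Fin 1 → ℝ => x 0) ⁻¹' Set.Icc (-1 : ℝ) 1 with hQ1def
  have hQ1 : IsCube Q1 := by
    rw [cube_iff]
    exact ⟨-1, 2, two_pos, by norm_num [hQ1def]⟩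
  have hQ1meas : MeasurableSet Q1 := (measurable_pi_apply 0) measurableSet_Icc
  have hwQ1 : IntegrableOn w Q1 := hloc.integrableOn_isCompact (pre_compact (-1) 1)
  have hWint : IntegrableOn W (Set.Icc (-1 : ℝ) 1) := by
    rw [hwfun] at hwQ1
    exact intOn_pre.1 hwQ1
  have hWpos : ∀ᵐ y : ℝ ∂volume, 0 < W y := by
    apply ae_pre_global (p := fun y => 0 < W y)
    filter_upwards [hpos] with x hx
    rw [← hwW x]
    exact hx
  -- positive average
  have hA : 0 < ∫ y in Set.Icc (-1:ℝ) 1, W y := by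
    rw [setIntegral_pos_iff_support_of_nonneg_ae
      (by filter_upwards [ae_restrict_of_ae hWpos] with y hy using hy.le) hWint]
    have hle : Set.Icc (-1:ℝ) 1 ≤ᵐ[volume] ((Function.support W ∩ Set.Icc (-1) 1 : Set ℝ)) := by
      filter_upwards [hWpos] with y hy hmem
      exact ⟨ne_of_gt hy, hmem⟩
    have hmeas := measure_mono_ae hle
    have hvol : volume (Set.Icc (-1:ℝ) 1) = 2 := by
      rw [Real.volume_Icc]; norm_num
    rw [hvol] at hmeas
    exact lt_of_lt_of_le (by norm_num) hmeas
  have hcube1 : cubeAvg Q1 w = 2⁻¹ * ∫ y in Set.Icc (-1:ℝ) 1, W y := by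
    rw [hwfun, hQ1def, cubeAvg_pre W (-1) 1]
    unfold rAvg
    rw [vol_Icc_toReal (by norm_num), show (1:ℝ) - (-1) = 2 by norm_num]
  have hAvgpos : 0 < cubeAvg Q1 w := by rw [hcube1]; positivity
  -- essSup bound gives lower bound on w
  have ha1 := hCb Q1 hQ1
  unfold a1Q at ha1
  set K := essSup (fun x => ENNReal.ofReal (w x)⁻¹) (volume.restrict Q1) with hKdef
  have hKtop : K ≠ ⊤ := by
    intro htop
    rw [htop, ENNReal.mul_top (by
      simp only [ne_eq, ENNReal.ofReal_eq_zero, not_le]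
      exact hAvgpos)] at ha1
    exact hC (top_le_iff.1 ha1)
  set m : ℝ := K.toReal + 1 with hmdef
  have hm1 : (1:ℝ) ≤ m := by
    have hnn : (0:ℝ) ≤ K.toReal := ENNReal.toReal_nonneg
    linarith
  have haeQ1 : ∀ᵐ x ∂volume.restrict Q1, m⁻¹ ≤ w x := by
    filter_upwards [ENNReal.ae_le_essSup (fun x => ENNReal.ofReal (w x)⁻¹),
      ae_restrict_of_ae hpos] with x h1 h2
    have hKm : K ≤ ENNReal.ofReal m := by
      rw [← ENNReal.ofReal_toReal hKtop]
      exact ENNReal.ofReal_le_ofReal (by linarith)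
    have h3 : (w x)⁻¹ ≤ m :=
      (ENNReal.ofReal_le_ofReal_iff (by linarith)).1 (le_trans h1 hKm)
    have h4 := inv_anti₀ (by positivity : (0:ℝ) < (w x)⁻¹) h3
    rwa [inv_inv] at h4
  have haeW : ∀ᵐ y ∂volume.restrict (Set.Icc (-1:ℝ) 1), m⁻¹ ≤ W y := by
    apply ae_restrict_pre measurableSet_Icc (p := fun y => m⁻¹ ≤ W y)
    filter_upwards [haeQ1] with x hx
    rw [← hwW x]
    exact hx
  -- log W is integrable
  have hlogW : IntegrableOn (fun y => Real.log (W y)) (Set.Icc (-1:ℝ) 1) := by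
    have hbound : ∀ᵐ y ∂volume.restrict (Set.Icc (-1:ℝ) 1),
        ‖Real.log (W y)‖ ≤ |W y| + |Real.log m⁻¹| := by
      filter_upwards [haeW, ae_restrict_of_ae hWpos] with y h1 h2
      rw [Real.norm_eq_abs, abs_le]
      have hup : Real.log (W y) ≤ W y :=
        le_trans (Real.log_le_sub_one_of_pos h2) (by linarith)
      have hlow : Real.log m⁻¹ ≤ Real.log (W y) :=
        Real.log_le_log (by positivity) h1
      constructor
      · calc -(|W y| + |Real.log m⁻¹|) ≤ -|Real.log m⁻¹| := by
              nlinarith [abs_nonneg (W y)]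
          _ ≤ Real.log m⁻¹ := neg_abs_le _
          _ ≤ Real.log (W y) := hlow
      · calc Real.log (W y) ≤ W y := hup
          _ ≤ |W y| := le_abs_self _
          _ ≤ |W y| + |Real.log m⁻¹| := by linarith [abs_nonneg (Real.log m⁻¹)]
    refine Integrable.mono' (hWint.abs.add intOn_const) ?_ hbound
    exact (Real.measurable_log.comp_aemeasurable
      hWint.aestronglyMeasurable.aemeasurable).aestronglyMeasurable
  -- the limit function G has zero oscillation
  set G : ℝ → ℝ := fun y => Real.log (W y) + Real.log |y| with hGdef
  have hGint : IntegrableOn G (Set.Icc (-1:ℝ) 1) := hlogW.add (integrableOn_log_abs (-1) 1)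
  have hosc0 : rOsc (-1) 1 G = 0 := by
    have hnn := rOsc_nonneg (-1) 1 G
    by_contra hne
    have hposG : 0 < rOsc (-1) 1 G := lt_of_le_of_ne hnn (Ne.symm hne)
    set ε := rOsc (-1) 1 G with hεdef
    obtain ⟨N, hN⟩ := hconv (ε/4) (by positivity)
    obtain ⟨N2, hN2⟩ := Metric.tendsto_atTop.1 hrlim (ε/64) (by positivity)
    set k := max N N2 with hkdef
    have hbmo := hN k (le_max_left _ _) Q1 hQ1
    have hdist := hN2 k (le_max_right _ _)
    rw [Real.dist_eq] at hdist
    have hfn : (fun x : Fin 1 → ℝ => Real.log (|x 0| ^ r k) - Real.log (w x))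
        = fun x : Fin 1 → ℝ => Real.log (|x 0| ^ r k) - Real.log (W (x 0)) := by
      funext x; rw [hwW x]
    rw [hfn] at hbmo
    have hpre := bmoOsc_pre (fun y => Real.log (|y| ^ r k) - Real.log (W y)) (-1) 1
    rw [hQ1def] at hbmo
    rw [hpre] at hbmo
    set Fk : ℝ → ℝ := fun y => Real.log (|y| ^ r k) - Real.log (W y) with hFkdef
    have hlogrk : IntegrableOn (fun y => Real.log (|y| ^ r k)) (Set.Icc (-1:ℝ) 1) := by
      refine Integrable.congr (((integrableOn_log_abs (-1) 1).const_mul (r k))) ?_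
      filter_upwards [ae_restrict_of_ae ae_ne_zero] with y hy
      rw [Real.log_rpow (abs_pos.2 hy)]
    have hFkint : IntegrableOn Fk (Set.Icc (-1:ℝ) 1) := hlogrk.sub hlogW
    set Hk : ℝ → ℝ := fun y => Real.log (|y| ^ r k) + Real.log |y| with hHkdef
    have hHkint : IntegrableOn Hk (Set.Icc (-1:ℝ) 1) :=
      hlogrk.add (integrableOn_log_abs (-1) 1)
    have hsplit : G = fun y => -Fk y + Hk y := by
      funext y; simp only [hGdef, hFkdef, hHkdef]; ring
    have h1 : rOsc (-1) 1 G ≤ rOsc (-1) 1 (fun y => -Fk y) + rOsc (-1) 1 Hk := by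
      rw [hsplit]
      exact rOsc_add_le (by norm_num) hFkint.neg hHkint
    have h2 : rOsc (-1) 1 (fun y => -Fk y) = rOsc (-1) 1 Fk := rOsc_neg (-1) 1 Fk
    have h3 : rOsc (-1) 1 Hk ≤ 8 * |r k + 1| := by
      have hcongr : rOsc (-1) 1 Hk = rOsc (-1) 1 (fun y => (r k + 1) * Real.log |y|) := by
        apply rOsc_congr_ae
        filter_upwards [ae_restrict_of_ae ae_ne_zero] with y hy
        simp only [hHkdef]
        rw [Real.log_rpow (abs_pos.2 hy)]
        ring
      rw [hcongr, rOsc_const_mul]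
      have h8 : rOsc (-1) 1 (fun y => Real.log |y|) ≤ 8 := by
        have := rOsc_log_abs_le (a := -1) (h := 2) two_pos
        rwa [show (-1:ℝ) + 2 = 1 by norm_num] at this
      calc |r k + 1| * rOsc (-1) 1 (fun y => Real.log |y|)
          ≤ |r k + 1| * 8 := mul_le_mul_of_nonneg_left h8 (abs_nonneg _)
        _ = 8 * |r k + 1| := by ring
    have hd : |r k + 1| < ε/64 := by
      rw [show r k + 1 = r k - (-1) by ring]
      exact hdist
    have : ε ≤ ε/4 + 8 * (ε/64) := by
      calc ε = rOsc (-1) 1 G := hεdef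
        _ ≤ rOsc (-1) 1 (fun y => -Fk y) + rOsc (-1) 1 Hk := h1
        _ = rOsc (-1) 1 Fk + rOsc (-1) 1 Hk := by rw [h2]
        _ ≤ ε/4 + 8 * |r k + 1| := add_le_add hbmo h3
        _ ≤ ε/4 + 8 * (ε/64) := by linarith
    linarith
  -- conclude G is a.e. constant, contradiction with integrability
  have hGconst := rOsc_eq_zero_imp (by norm_num : (-1:ℝ) < 1) hGint hosc0
  set c := rAvg (-1) 1 G with hcdef
  have hWeq : W =ᵐ[volume.restrict (Set.Icc (-1:ℝ) 1)]
      fun y => Real.exp c * |y|⁻¹ := by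
    filter_upwards [hGconst, ae_restrict_of_ae hWpos, ae_restrict_of_ae ae_ne_zero]
      with y h1 h2 h3
    have hGy : Real.log (W y) + Real.log |y| = c := h1
    have hlogWy : Real.log (W y) = c - Real.log |y| := by linarith
    calc W y = Real.exp (Real.log (W y)) := (Real.exp_log h2).symm
      _ = Real.exp (c - Real.log |y|) := by rw [hlogWy]
      _ = Real.exp c / Real.exp (Real.log |y|) := Real.exp_sub c _
      _ = Real.exp c * |y|⁻¹ := by
          rw [Real.exp_log (abs_pos.2 h3), div_eq_mul_inv]
  have hbad : IntegrableOn (fun y => Real.exp c * |y|⁻¹) (Set.Icc (-1:ℝ) 1) :=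
    hWint.congr hWeq
  have hbad2 : IntegrableOn (fun y : ℝ => |y|⁻¹) (Set.Icc (-1:ℝ) 1) := by
    have h5 := hbad.const_mul (Real.exp (-c))
    refine h5.congr (Eventually.of_forall fun y => ?_)
    simp only
    rw [← mul_assoc, ← Real.exp_add, neg_add_cancel, Real.exp_zero, one_mul]
  have hbad3 : IntegrableOn (fun y : ℝ => y ^ (-1:ℝ)) (Set.Ioo (0:ℝ) 1) := by
    refine (hbad2.mono (fun y hy => ?_) le_rfl).congr_fun (fun y hy => ?_) measurableSet_Ioo
    · exact ⟨by linarith [hy.1], hy.2.le⟩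
    · beta_reduce; rw [abs_of_pos hy.1, Real.rpow_neg_one]
  rw [intervalIntegral.integrableOn_Ioo_rpow_iff zero_lt_one] at hbad3
  exact lt_irrefl _ hbad3

end A1NC

/-- `(𝓐₁, d_*)` on `ℝ` is not complete: for any sequence
`r_k ∈ (-1,0)` with `r_k → -1`, the weights `w_k(x) = |x|^{r_k}` are `A₁`, the sequence
`(log w_k)` is `d_*`-Cauchy, but no `A₁` weight is a `d_*`-limit of `(w_k)`. -/
theorem A1_not_complete (r : ℕ → ℝ)
    (hr : ∀ k, r k ∈ Set.Ioo (-1 : ℝ) 0)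
    (hrlim : Filter.Tendsto r Filter.atTop (nhds (-1 : ℝ))) :
    (∀ k, IsA1Weight (fun x : Fin 1 → ℝ => |x 0| ^ r k)) ∧
    (∀ ε : ℝ, 0 < ε → ∃ N : ℕ, ∀ k ≥ N, ∀ m ≥ N,
      BmoLe (fun x : Fin 1 → ℝ =>
        Real.log (|x 0| ^ r k) - Real.log (|x 0| ^ r m)) ε) ∧
    ¬ ∃ w : (Fin 1 → ℝ) → ℝ, IsA1Weight w ∧
        ∀ ε : ℝ, 0 < ε → ∃ N : ℕ, ∀ k ≥ N,
          BmoLe (fun x : Fin 1 → ℝ =>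
            Real.log (|x 0| ^ r k) - Real.log (w x)) ε := by
  exact ⟨fun k => A1NC.part1 (hr k).1 (hr k).2, A1NC.part2 r hrlim, A1NC.part3 r hr hrlim⟩
end
end

section
/- For every dimension n ≥ 1, every 1 < p < ∞ and every ε > 0 there exists δ > 0 such that every locally integrable function f : ℝ^n → ℝ with ‖f‖_* ≤ δ satisfies: e^f is an A_p weight and [e^f]_{A_p} ≤ 1 + ε. -/
open MeasureTheory Real Filter
open scoped ENNReal

noncomputable section

namespace BmoAp

open Metric Set
open scoped Topology

variable {n : ℕ}

/-- The covering constant. -/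
def cst (n : ℕ) : ℝ := 4 * 45 ^ n + 10 ^ n + 1

lemma cst_pos : 0 < cst n := by unfold cst; positivity

lemma one_add_ten_pow_le_cst : 1 + 10 ^ n ≤ cst n := by
  unfold cst; nlinarith [pow_pos (by norm_num : (0:ℝ) < 45) n]

/-- Average of `f` over the closed ball of center `z` and radius `r`. -/
def bAvg (n : ℕ) (f : (Fin n → ℝ) → ℝ) (z : Fin n → ℝ) (r : ℝ) : ℝ :=
  cubeAvg (closedBall z r) f

lemma volB_pos (z : Fin n → ℝ) {r : ℝ} (hr : 0 < r) : 0 < volume (closedBall z r) :=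
  measure_closedBall_pos _ _ hr

lemma volB_ne_top (z : Fin n → ℝ) (r : ℝ) : volume (closedBall z r) ≠ ⊤ :=
  measure_closedBall_lt_top.ne

lemma volB_toReal_pos (z : Fin n → ℝ) {r : ℝ} (hr : 0 < r) :
    0 < (volume (closedBall z r)).toReal :=
  ENNReal.toReal_pos (volB_pos z hr).ne' (volB_ne_top z r)

/-- Scaling of ball volumes. -/
lemma volB_smul (z z' : Fin n → ℝ) {r k : ℝ} (hr : 0 ≤ r) (hk : 0 ≤ k) :
    volume (closedBall z (k * r)) = ENNReal.ofReal (k ^ n) * volume (closedBall z' r) := by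
  rw [MeasureTheory.Measure.addHaar_closedBall' volume z (by positivity),
    MeasureTheory.Measure.addHaar_closedBall' volume z' hr, Module.finrank_fin_fun ℝ,
    mul_pow, ENNReal.ofReal_mul (by positivity), mul_assoc]

lemma volB_toReal_le {z z' : Fin n → ℝ} {r R k : ℝ} (hr : 0 < r) (hk : 0 ≤ k)
    (hR : R ≤ k * r) :
    (volume (closedBall z' R)).toReal ≤ k ^ n * (volume (closedBall z r)).toReal := by
  have h2 := volB_smul z' z (le_of_lt hr) hk
  have h1 : volume (closedBall z' R) ≤ ENNReal.ofReal (k ^ n) * volume (closedBall z r) := by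
    rw [← h2]; exact measure_mono (closedBall_subset_closedBall hR)
  have h3 := ENNReal.toReal_mono
    (ENNReal.mul_ne_top ENNReal.ofReal_ne_top (volB_ne_top z r)) h1
  rwa [ENNReal.toReal_mul, ENNReal.toReal_ofReal (by positivity)] at h3

section WithF

variable {f : (Fin n → ℝ) → ℝ} {τ : ℝ}

lemma intOn (hli : LocallyIntegrable f volume) (z : Fin n → ℝ) (r : ℝ) :
    IntegrableOn f (closedBall z r) volume :=
  hli.integrableOn_isCompact (isCompact_closedBall z r)

lemma intOnAbs (hli : LocallyIntegrable f volume) (d : ℝ) (z : Fin n → ℝ) (r : ℝ) :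
    IntegrableOn (fun x => |f x - d|) (closedBall z r) volume :=
  ((intOn hli z r).sub (integrableOn_const measure_closedBall_lt_top.ne)).abs

/-- `|avg_B f - d| ≤ (1/|B|) ∫_B |f - d|`. -/
lemma avg_abs_sub (hli : LocallyIntegrable f volume) (z : Fin n → ℝ) {r : ℝ} (hr : 0 < r)
    (d : ℝ) :
    |bAvg n f z r - d| ≤
      (volume (closedBall z r)).toReal⁻¹ * ∫ x in closedBall z r, |f x - d| := by
  set B := closedBall z r with hB
  set v := (volume B).toReal with hv
  have hvpos : 0 < v := volB_toReal_pos z hr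
  have h0 : ∫ x in B, (f x - d) = (∫ x in B, f x) - v * d := by
    rw [integral_sub (intOn hli z r) (integrableOn_const measure_closedBall_lt_top.ne),
      setIntegral_const, smul_eq_mul]
    rfl
  have h1 : bAvg n f z r - d = v⁻¹ * ∫ x in B, (f x - d) := by
    show v⁻¹ * (∫ x in B, f x) - d = v⁻¹ * ∫ x in B, (f x - d)
    rw [h0, mul_sub, ← mul_assoc, inv_mul_cancel₀ hvpos.ne', one_mul]
  rw [h1, abs_mul, abs_inv, abs_of_pos hvpos]
  have h2 : |∫ x in B, (f x - d)| ≤ ∫ x in B, |f x - d| := by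
    simpa [Real.norm_eq_abs] using
      norm_integral_le_integral_norm (μ := volume.restrict B) (fun x => f x - d)
  exact mul_le_mul_of_nonneg_left h2 (by positivity)

/-- Oscillation with respect to the average of a sub-ball, over a bigger ball. -/
lemma osc_enlarge (hosc : ∀ (z : Fin n → ℝ) (r : ℝ), 0 < r →
      ∫ x in closedBall z r, |f x - bAvg n f z r| ≤ τ * (volume (closedBall z r)).toReal)
    (hli : LocallyIntegrable f volume) (hτ : 0 ≤ τ)
    {z₀ z' : Fin n → ℝ} {r₀ R k : ℝ} (hr₀ : 0 < r₀) (hR : 0 < R) (hk : 0 ≤ k)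
    (hKr : R ≤ k * r₀) (hsub : closedBall z₀ r₀ ⊆ closedBall z' R) :
    ∫ x in closedBall z' R, |f x - bAvg n f z₀ r₀| ≤
      (1 + k ^ n) * τ * (volume (closedBall z' R)).toReal := by
  set B₀ := closedBall z₀ r₀ with hB₀
  set B' := closedBall z' R with hB'
  set A₀ := bAvg n f z₀ r₀ with hA₀
  set A' := bAvg n f z' R with hA'
  have hv₀ : 0 < (volume B₀).toReal := volB_toReal_pos z₀ hr₀
  have hv' : 0 < (volume B').toReal := volB_toReal_pos z' hR
  have hratio : (volume B').toReal ≤ k ^ n * (volume B₀).toReal :=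
    volB_toReal_le hr₀ hk hKr
  -- |A' - A₀| ≤ k^n τ
  have hAA : |A₀ - A'| ≤ k ^ n * τ := by
    calc |A₀ - A'| ≤ (volume B₀).toReal⁻¹ * ∫ x in B₀, |f x - A'| :=
          avg_abs_sub hli z₀ hr₀ A'
      _ ≤ (volume B₀).toReal⁻¹ * ∫ x in B', |f x - A'| := by
          apply mul_le_mul_of_nonneg_left _ (by positivity)
          exact setIntegral_mono_set (intOnAbs hli A' z' R)
            (Eventually.of_forall fun x => abs_nonneg _) (HasSubset.Subset.eventuallyLE hsub)
      _ ≤ (volume B₀).toReal⁻¹ * (τ * (volume B').toReal) := by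
          apply mul_le_mul_of_nonneg_left (hosc z' R hR) (by positivity)
      _ ≤ (volume B₀).toReal⁻¹ * (τ * (k ^ n * (volume B₀).toReal)) := by
          apply mul_le_mul_of_nonneg_left _ (by positivity)
          exact mul_le_mul_of_nonneg_left hratio hτ
      _ = k ^ n * τ := by field_simp
  calc ∫ x in B', |f x - A₀| ≤ ∫ x in B', (|f x - A'| + k ^ n * τ) := by
        apply integral_mono (intOnAbs hli A₀ z' R)
          ((intOnAbs hli A' z' R).add (integrableOn_const measure_closedBall_lt_top.ne))
        intro x
        simp only [Pi.add_apply]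
        have : |f x - A₀| ≤ |f x - A'| + |A₀ - A'| := by
          have : f x - A₀ = (f x - A') + (A' - A₀) := by ring
          rw [this]
          exact (abs_add_le _ _).trans (by rw [abs_sub_comm A' A₀])
        exact this.trans (by linarith [hAA])
    _ = (∫ x in B', |f x - A'|) + (k ^ n * τ) * (volume B').toReal := by
        rw [integral_add (intOnAbs hli A' z' R)
          (integrableOn_const measure_closedBall_lt_top.ne), setIntegral_const,
          smul_eq_mul, mul_comm]
        rfl
    _ ≤ τ * (volume B').toReal + (k ^ n * τ) * (volume B').toReal := by
        linarith [hosc z' R hR]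
    _ = (1 + k ^ n) * τ * (volume B').toReal := by ring

/-- Selection of a good stopping radius. -/
lemma exists_good_radius (hosc : ∀ (z : Fin n → ℝ) (r : ℝ), 0 < r →
      ∫ x in closedBall z r, |f x - bAvg n f z r| ≤ τ * (volume (closedBall z r)).toReal)
    (hli : LocallyIntegrable f volume) (hτ : 0 < τ)
    {z₀ : Fin n → ℝ} {r₀ : ℝ} (hr₀ : 0 < r₀) {x : Fin n → ℝ} (hx : x ∈ closedBall z₀ r₀)
    (hex : ∃ ρ ∈ Ioc 0 (2*r₀),
      cst n * τ * (volume (closedBall x ρ)).toReal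
        < ∫ y in closedBall x ρ, |f y - bAvg n f z₀ r₀|) :
    ∃ ρ ∈ Ioc 0 (2*r₀),
      (cst n * τ * (volume (closedBall x ρ)).toReal
        < ∫ y in closedBall x ρ, |f y - bAvg n f z₀ r₀|) ∧
      (∫ y in closedBall x (5*ρ), |f y - bAvg n f z₀ r₀|
        ≤ cst n * τ * (volume (closedBall x (5*ρ))).toReal) := by
  set A₀ := bAvg n f z₀ r₀ with hA₀
  set P : ℝ → Prop := fun ρ => ρ ∈ Ioc 0 (2*r₀) ∧
    cst n * τ * (volume (closedBall x ρ)).toReal < ∫ y in closedBall x ρ, |f y - A₀| with hP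
  by_contra hcon
  push_neg at hcon
  have step : ∀ ρ, P ρ → P (5*ρ) := by
    intro ρ hρ
    have h5 := hcon ρ hρ.1 hρ.2
    rcases le_or_gt (5*ρ) (2*r₀) with hle | hgt
    · exact ⟨⟨by nlinarith [hρ.1.1], hle⟩, h5⟩
    · exfalso
      -- big radius: the oscillation estimate gives a contradiction
      have hsub : closedBall z₀ r₀ ⊆ closedBall x (5*ρ) := by
        intro y hy
        have h1 : dist y x ≤ dist y z₀ + dist z₀ x := dist_triangle y z₀ x
        have h2 : dist y z₀ ≤ r₀ := mem_closedBall.1 hy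
        have h3 : dist z₀ x ≤ r₀ := by
          rw [dist_comm]; exact mem_closedBall.1 hx
        exact mem_closedBall.2 (by linarith)
      have h5r : 5*ρ ≤ 10 * r₀ := by nlinarith [hρ.1.2]
      have hbig := osc_enlarge hosc hli hτ.le hr₀ (by nlinarith [hρ.1.1] : 0 < 5*ρ)
        (by norm_num : (0:ℝ) ≤ 10) h5r hsub
      have hc : (1 + (10:ℝ) ^ n) * τ ≤ cst n * τ :=
        mul_le_mul_of_nonneg_right one_add_ten_pow_le_cst hτ.le
      have : ∫ y in closedBall x (5*ρ), |f y - A₀|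
          ≤ cst n * τ * (volume (closedBall x (5*ρ))).toReal := by
        refine hbig.trans ?_
        exact mul_le_mul_of_nonneg_right hc ENNReal.toReal_nonneg
      linarith
  obtain ⟨ρ₀, hρ₀Ioc, hρ₀⟩ := hex
  have hall : ∀ j : ℕ, P (5 ^ j * ρ₀) := by
    intro j
    induction j with
    | zero => simpa using ⟨hρ₀Ioc, hρ₀⟩
    | succ j IH =>
        have : (5:ℝ) ^ (j+1) * ρ₀ = 5 * (5 ^ j * ρ₀) := by ring
        rw [this]
        exact step _ IH
  obtain ⟨j, hj⟩ := pow_unbounded_of_one_lt (2*r₀/ρ₀) (by norm_num : (1:ℝ) < 5)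
  have h1 : (5:ℝ) ^ j * ρ₀ ≤ 2*r₀ := (hall j).1.2
  have h2 : (5:ℝ) ^ j ≤ 2*r₀/ρ₀ := (le_div_iff₀ hρ₀Ioc.1).2 h1
  linarith

/-- The John–Nirenberg level-set decay, by induction on the level. -/
lemma decay (hm : Measurable f) (hli : LocallyIntegrable f volume) (hτ : 0 < τ)
    (hosc : ∀ (z : Fin n → ℝ) (r : ℝ), 0 < r →
      ∫ x in closedBall z r, |f x - bAvg n f z r| ≤ τ * (volume (closedBall z r)).toReal) :
    ∀ (k : ℕ) (z₀ : Fin n → ℝ) (r₀ : ℝ), 0 < r₀ →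
      volume {x ∈ closedBall z₀ r₀ | 2 * cst n * τ * (k : ℝ) < |f x - bAvg n f z₀ r₀|}
        ≤ 2⁻¹ ^ k * volume (closedBall z₀ r₀) := by
  intro k
  induction k with
  | zero =>
      intro z₀ r₀ hr₀
      simp only [Nat.cast_zero, mul_zero, pow_zero, one_mul]
      exact measure_mono (sep_subset _ _)
  | succ k IH =>
      intro z₀ r₀ hr₀
      set B₀ := closedBall z₀ r₀ with hB₀
      set A₀ := bAvg n f z₀ r₀ with hA₀
      have hct : 0 < cst n * τ := mul_pos cst_pos hτ
      set S := {x ∈ B₀ | 2 * cst n * τ * ((k:ℕ)+1 : ℕ) < |f x - A₀|} with hS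
      set N := {x : Fin n → ℝ |
        ¬ Tendsto (fun ρ : ℝ => ⨍ y in closedBall x ρ, |f y - A₀|) (𝓝[>] 0)
          (𝓝 (|f x - A₀|))} with hNdef
      have hgli : LocallyIntegrable (fun y => |f y - A₀|) volume := by
        have h2 : LocallyIntegrable (fun y => f y - A₀) volume :=
          hli.sub (locallyIntegrable_const A₀)
        intro x
        obtain ⟨s, hs, hint⟩ := h2 x
        exact ⟨s, hs, by simpa [Real.norm_eq_abs, IntegrableOn] using hint.norm⟩
      have hN : volume N = 0 := by
        have h : ∀ᵐ x : (Fin n → ℝ), Tendsto (fun ρ : ℝ => ⨍ y in closedBall x ρ, |f y - A₀|)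
            (𝓝[>] 0) (𝓝 (|f x - A₀|)) := by
          filter_upwards [IsUnifLocDoublingMeasure.ae_tendsto_average (μ := volume) hgli 1]
            with x hx
          exact hx (fun _ : ℝ => x) id tendsto_id
            (Filter.eventually_of_mem self_mem_nhdsWithin fun ρ hρ => by
              simp only [mem_closedBall, dist_self, one_mul]
              exact (le_of_lt (mem_Ioi.1 hρ)))
        exact h
      -- radius selection for points of S \ N
      have hsel : ∀ x ∈ S \ N, ∃ ρ ∈ Ioc 0 (2*r₀),
          (cst n * τ * (volume (closedBall x ρ)).toReal
            < ∫ y in closedBall x ρ, |f y - A₀|) ∧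
          (∫ y in closedBall x (5*ρ), |f y - A₀|
            ≤ cst n * τ * (volume (closedBall x (5*ρ))).toReal) := by
        rintro x ⟨hxS, hxN⟩
        have htend : Tendsto (fun ρ : ℝ => ⨍ y in closedBall x ρ, |f y - A₀|) (𝓝[>] 0)
            (𝓝 (|f x - A₀|)) := not_not.1 hxN
        have hgx : cst n * τ < |f x - A₀| := by
          have h1 := hxS.2
          push_cast at h1
          nlinarith [hct]
        have hev1 : ∀ᶠ ρ in 𝓝[>] (0:ℝ),
            cst n * τ < ⨍ y in closedBall x ρ, |f y - A₀| :=
          htend.eventually (eventually_gt_nhds hgx)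
        have hev2 : ∀ᶠ ρ in 𝓝[>] (0:ℝ), ρ ∈ Ioc 0 (2*r₀) :=
          Filter.eventually_of_mem (Ioc_mem_nhdsGT_of_mem ⟨le_rfl, by linarith⟩) fun ρ h => h
        obtain ⟨ρ, hρ1, hρ2⟩ := (hev1.and hev2).exists
        have hconv : cst n * τ * (volume (closedBall x ρ)).toReal
            < ∫ y in closedBall x ρ, |f y - A₀| := by
          have hv : 0 < (volume (closedBall x ρ)).toReal := volB_toReal_pos x hρ2.1
          rw [setAverage_eq volume _ (closedBall x ρ), smul_eq_mul, inv_mul_eq_div] at hρ1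
          exact (lt_div_iff₀ hv).1 hρ1
        exact exists_good_radius hosc hli hτ hr₀ hxS.1 ⟨ρ, hρ2, hconv⟩
      -- choose radii
      have hsel' : ∀ x : Fin n → ℝ, ∃ ρ : ℝ, x ∈ S \ N → (ρ ∈ Ioc 0 (2*r₀) ∧
          (cst n * τ * (volume (closedBall x ρ)).toReal
            < ∫ y in closedBall x ρ, |f y - A₀|) ∧
          (∫ y in closedBall x (5*ρ), |f y - A₀|
            ≤ cst n * τ * (volume (closedBall x (5*ρ))).toReal)) := by
        intro x
        by_cases hx : x ∈ S \ N
        · obtain ⟨ρ, h1, h2, h3⟩ := hsel x hx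
          exact ⟨ρ, fun _ => ⟨h1, h2, h3⟩⟩
        · exact ⟨1, fun h => absurd h hx⟩
      choose ρsel hρsel using hsel'
      -- Vitali covering
      obtain ⟨u, hu_sub, hu_disj, hu_cov⟩ :=
        Vitali.exists_disjoint_subfamily_covering_enlargement_closedBall (S \ N) id ρsel (2*r₀)
          (fun x hx => (hρsel x hx).1.2) 5 (by norm_num)
      have hu_cnt : u.Countable := by
        apply hu_disj.countable_of_nonempty_interior
        intro x hxu
        rw [interior_closedBall (id x) (hρsel x (hu_sub hxu)).1.1.ne']
        exact nonempty_ball.2 (hρsel x (hu_sub hxu)).1.1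
      haveI := hu_cnt.to_subtype
      set T : ↥u → Set (Fin n → ℝ) := fun b => {x ∈ closedBall (b : Fin n → ℝ) (5 * ρsel b) |
        2 * cst n * τ * (k : ℝ) < |f x - bAvg n f (b : Fin n → ℝ) (5 * ρsel b)|} with hT
      -- the covering estimate
      have hcov : S \ N ⊆ ⋃ b : ↥u, T b := by
        intro x hx
        obtain ⟨b, hbu, hsubB⟩ := hu_cov x hx
        have hbS : (b : Fin n → ℝ) ∈ S \ N := hu_sub hbu
        have hbpos : 0 < ρsel b := (hρsel b hbS).1.1
        have hxball : x ∈ closedBall b (5 * ρsel b) :=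
          hsubB (mem_closedBall_self (hρsel x hx).1.1.le)
        refine mem_iUnion.2 ⟨⟨b, hbu⟩, hxball, ?_⟩
        have hb5pos : 0 < 5 * ρsel b := by linarith
        have hv5 : 0 < (volume (closedBall (b:Fin n → ℝ) (5*ρsel b))).toReal :=
          volB_toReal_pos _ hb5pos
        have hA5 : |bAvg n f (b : Fin n → ℝ) (5*ρsel b) - A₀| ≤ cst n * τ := by
          calc |bAvg n f (b : Fin n → ℝ) (5*ρsel b) - A₀|
              ≤ (volume (closedBall (b:Fin n → ℝ) (5*ρsel b))).toReal⁻¹ *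
                ∫ y in closedBall (b:Fin n → ℝ) (5*ρsel b), |f y - A₀| :=
                avg_abs_sub hli _ hb5pos A₀
            _ ≤ (volume (closedBall (b:Fin n → ℝ) (5*ρsel b))).toReal⁻¹ *
                (cst n * τ * (volume (closedBall (b:Fin n → ℝ) (5*ρsel b))).toReal) :=
                mul_le_mul_of_nonneg_left ((hρsel b hbS).2.2) (by positivity)
            _ = cst n * τ := by field_simp
        have htri : |f x - A₀| ≤ |f x - bAvg n f (b : Fin n → ℝ) (5*ρsel b)| +
            |bAvg n f (b : Fin n → ℝ) (5*ρsel b) - A₀| := by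
          have heq : f x - A₀ = (f x - bAvg n f (b : Fin n → ℝ) (5*ρsel b)) +
              (bAvg n f (b : Fin n → ℝ) (5*ρsel b) - A₀) := by ring
          rw [heq]; exact abs_add_le _ _
        have hxlevel := hx.1.2
        push_cast at hxlevel
        show 2 * cst n * τ * (k : ℝ) < |f x - bAvg n f (b : Fin n → ℝ) (5 * ρsel b)|
        nlinarith [hct]
      -- sum the measures
      have hmain : volume S ≤ 2⁻¹^k * ENNReal.ofReal ((5:ℝ)^n) *
          ∑' b : ↥u, volume (closedBall (b : Fin n → ℝ) (ρsel b)) := by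
        calc volume S = volume (S \ N) := (measure_diff_null hN).symm
          _ ≤ volume (⋃ b : ↥u, T b) := measure_mono hcov
          _ ≤ ∑' b : ↥u, volume (T b) := measure_iUnion_le _
          _ ≤ ∑' b : ↥u, (2⁻¹^k * ENNReal.ofReal ((5:ℝ)^n)) *
              volume (closedBall (b : Fin n → ℝ) (ρsel b)) := by
              apply ENNReal.tsum_le_tsum
              intro b
              have hbS : (b : Fin n → ℝ) ∈ S \ N := hu_sub b.2
              have hbpos : 0 < ρsel b := (hρsel b hbS).1.1
              have h1 := IH (b : Fin n → ℝ) (5 * ρsel b) (by linarith)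
              have h2 : volume (closedBall (b:Fin n → ℝ) (5 * ρsel b)) =
                  ENNReal.ofReal ((5:ℝ)^n) * volume (closedBall (b:Fin n → ℝ) (ρsel b)) :=
                volB_smul _ _ hbpos.le (by norm_num)
              calc volume (T b) ≤ 2⁻¹^k * volume (closedBall (b:Fin n → ℝ) (5 * ρsel b)) := h1
                _ = (2⁻¹^k * ENNReal.ofReal ((5:ℝ)^n)) *
                    volume (closedBall (b : Fin n → ℝ) (ρsel b)) := by rw [h2, mul_assoc]
          _ = 2⁻¹^k * ENNReal.ofReal ((5:ℝ)^n) *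
              ∑' b : ↥u, volume (closedBall (b : Fin n → ℝ) (ρsel b)) :=
              ENNReal.tsum_mul_left
      -- bound the total mass of the selected balls
      have hsum : ∑' b : ↥u, volume (closedBall (b : Fin n → ℝ) (ρsel b)) ≤
          (ENNReal.ofReal (cst n * τ))⁻¹ *
            ENNReal.ofReal ((1+(3:ℝ)^n)*3^n*τ*(volume B₀).toReal) := by
        have hcτ0 : ENNReal.ofReal (cst n * τ) ≠ 0 := (ENNReal.ofReal_pos.2 hct).ne'
        have step1 : ∀ b : ↥u, volume (closedBall (b : Fin n → ℝ) (ρsel b)) ≤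
            (ENNReal.ofReal (cst n * τ))⁻¹ *
              ∫⁻ y in closedBall (b : Fin n → ℝ) (ρsel b), ENNReal.ofReal |f y - A₀| := by
          intro b
          have hb := hρsel b (hu_sub b.2)
          have heq : ENNReal.ofReal (∫ y in closedBall (b : Fin n → ℝ) (ρsel b), |f y - A₀|)
              = ∫⁻ y in closedBall (b : Fin n → ℝ) (ρsel b), ENNReal.ofReal |f y - A₀| :=
            ofReal_integral_eq_lintegral_ofReal (intOnAbs hli A₀ _ _)
              (Eventually.of_forall fun y => abs_nonneg _)
          have h2 : ENNReal.ofReal (cst n * τ) *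
              volume (closedBall (b : Fin n → ℝ) (ρsel b)) ≤
              ∫⁻ y in closedBall (b : Fin n → ℝ) (ρsel b), ENNReal.ofReal |f y - A₀| := by
            rw [← heq]
            have h3 : ENNReal.ofReal (cst n * τ) * volume (closedBall (b : Fin n → ℝ) (ρsel b))
                = ENNReal.ofReal (cst n * τ *
                    (volume (closedBall (b : Fin n → ℝ) (ρsel b))).toReal) := by
              rw [ENNReal.ofReal_mul hct.le, ENNReal.ofReal_toReal (volB_ne_top _ _)]
            rw [h3]
            exact ENNReal.ofReal_le_ofReal hb.2.1.le
          calc volume (closedBall (b : Fin n → ℝ) (ρsel b))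
              = (ENNReal.ofReal (cst n * τ))⁻¹ * (ENNReal.ofReal (cst n * τ) *
                  volume (closedBall (b : Fin n → ℝ) (ρsel b))) := by
                rw [← mul_assoc, ENNReal.inv_mul_cancel hcτ0 ENNReal.ofReal_ne_top, one_mul]
            _ ≤ _ := mul_le_mul_right h2 _
        have hpair : Pairwise (Function.onFun Disjoint
            fun b : ↥u => closedBall (b : Fin n → ℝ) (ρsel b)) := by
          intro i j hij
          exact hu_disj i.2 j.2 (fun h => hij (Subtype.ext h))
        have hUsub : (⋃ b : ↥u, closedBall (b : Fin n → ℝ) (ρsel b)) ⊆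
            closedBall z₀ (3*r₀) := by
          apply iUnion_subset
          intro b
          have hbS : (b : Fin n → ℝ) ∈ S \ N := hu_sub b.2
          have hbB : (b : Fin n → ℝ) ∈ B₀ := hbS.1.1
          have h4 : dist (b : Fin n → ℝ) z₀ ≤ r₀ := mem_closedBall.1 hbB
          exact closedBall_subset_closedBall'
            (by linarith [(hρsel b hbS).1.2])
        calc ∑' b : ↥u, volume (closedBall (b : Fin n → ℝ) (ρsel b))
            ≤ ∑' b : ↥u, (ENNReal.ofReal (cst n * τ))⁻¹ *
              ∫⁻ y in closedBall (b : Fin n → ℝ) (ρsel b), ENNReal.ofReal |f y - A₀| :=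
              ENNReal.tsum_le_tsum step1
          _ = (ENNReal.ofReal (cst n * τ))⁻¹ * ∑' b : ↥u,
              ∫⁻ y in closedBall (b : Fin n → ℝ) (ρsel b), ENNReal.ofReal |f y - A₀| :=
              ENNReal.tsum_mul_left
          _ = (ENNReal.ofReal (cst n * τ))⁻¹ *
              ∫⁻ y in ⋃ b : ↥u, closedBall (b : Fin n → ℝ) (ρsel b),
                ENNReal.ofReal |f y - A₀| := by
              rw [lintegral_iUnion (fun b => measurableSet_closedBall) hpair]
          _ ≤ (ENNReal.ofReal (cst n * τ))⁻¹ *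
              ∫⁻ y in closedBall z₀ (3*r₀), ENNReal.ofReal |f y - A₀| :=
              mul_le_mul_right (lintegral_mono_set hUsub) _
          _ ≤ (ENNReal.ofReal (cst n * τ))⁻¹ *
              ENNReal.ofReal ((1+(3:ℝ)^n)*3^n*τ*(volume B₀).toReal) := by
              apply mul_le_mul_right
              rw [← ofReal_integral_eq_lintegral_ofReal (intOnAbs hli A₀ z₀ (3*r₀))
                (Eventually.of_forall fun y => abs_nonneg _)]
              apply ENNReal.ofReal_le_ofReal
              have h3 := osc_enlarge (z₀ := z₀) (z' := z₀) (k := 3) hosc hli hτ.le hr₀ (by linarith : 0 < 3*r₀)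
                (by norm_num : (0:ℝ) ≤ 3) le_rfl
                (closedBall_subset_closedBall (by linarith))
              have h4 : (volume (closedBall z₀ (3*r₀))).toReal ≤ 3^n * (volume B₀).toReal :=
                volB_toReal_le (k := 3) hr₀ (by norm_num) le_rfl
              have h5 : (0:ℝ) ≤ (1+(3:ℝ)^n) * τ := by positivity
              calc ∫ y in closedBall z₀ (3*r₀), |f y - A₀|
                  ≤ (1+(3:ℝ)^n) * τ * (volume (closedBall z₀ (3*r₀))).toReal := h3
                _ ≤ (1+(3:ℝ)^n) * τ * (3^n * (volume B₀).toReal) :=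
                    mul_le_mul_of_nonneg_left h4 h5
                _ = (1+(3:ℝ)^n)*3^n*τ*(volume B₀).toReal := by ring
      -- final arithmetic
      have hfrac : ENNReal.ofReal ((5:ℝ)^n) * ((ENNReal.ofReal (cst n * τ))⁻¹ *
          ENNReal.ofReal ((1+(3:ℝ)^n)*3^n*τ*(volume B₀).toReal)) ≤ 2⁻¹ * volume B₀ := by
        rw [ENNReal.ofReal_mul (by positivity : (0:ℝ) ≤ (1+(3:ℝ)^n)*3^n*τ),
          ENNReal.ofReal_toReal (volB_ne_top z₀ r₀)]
        have hkey : ENNReal.ofReal ((5:ℝ)^n) * ((ENNReal.ofReal (cst n * τ))⁻¹ *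
            ENNReal.ofReal ((1+(3:ℝ)^n)*3^n*τ)) ≤ 2⁻¹ := by
          rw [← ENNReal.ofReal_inv_of_pos hct, ← ENNReal.ofReal_mul (by positivity),
            ← ENNReal.ofReal_mul (by positivity)]
          have h2inv : (2:ℝ≥0∞)⁻¹ = ENNReal.ofReal 2⁻¹ := by
            rw [ENNReal.ofReal_inv_of_pos (by norm_num : (0:ℝ) < 2)]
            norm_num
          rw [h2inv]
          apply ENNReal.ofReal_le_ofReal
          have heq2 : (5:ℝ)^n * ((cst n * τ)⁻¹ * ((1+(3:ℝ)^n)*3^n*τ))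
              = ((5:ℝ)^n*(1+(3:ℝ)^n)*3^n) / cst n := by
            field_simp [cst_pos.ne', hτ.ne']
          rw [heq2, div_le_iff₀ cst_pos]
          have h15 : ((15:ℝ))^n ≤ 45^n := pow_le_pow_left₀ (by norm_num) (by norm_num) n
          have h53 : (5:ℝ)^n * 3^n = 15^n := by rw [← mul_pow]; norm_num
          have h533 : (5:ℝ)^n * 3^n * 3^n = 45^n := by rw [← mul_pow, ← mul_pow]; norm_num
          have h10 : (0:ℝ) ≤ 10^n := by positivity
          unfold cst
          nlinarith [pow_pos (by norm_num : (0:ℝ) < 45) n, pow_pos (by norm_num : (0:ℝ) < 15) n]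
        calc ENNReal.ofReal ((5:ℝ)^n) * ((ENNReal.ofReal (cst n * τ))⁻¹ *
            (ENNReal.ofReal ((1+(3:ℝ)^n)*3^n*τ) * volume B₀))
            = (ENNReal.ofReal ((5:ℝ)^n) * ((ENNReal.ofReal (cst n * τ))⁻¹ *
              ENNReal.ofReal ((1+(3:ℝ)^n)*3^n*τ))) * volume B₀ := by ring
          _ ≤ 2⁻¹ * volume B₀ := mul_le_mul_left hkey _
      calc volume S ≤ 2⁻¹^k * ENNReal.ofReal ((5:ℝ)^n) *
            ∑' b : ↥u, volume (closedBall (b : Fin n → ℝ) (ρsel b)) := hmain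
        _ ≤ 2⁻¹^k * (ENNReal.ofReal ((5:ℝ)^n) * ((ENNReal.ofReal (cst n * τ))⁻¹ *
            ENNReal.ofReal ((1+(3:ℝ)^n)*3^n*τ*(volume B₀).toReal))) := by
            rw [mul_assoc]
            exact mul_le_mul_right (mul_le_mul_right hsum _) _
        _ ≤ 2⁻¹^k * (2⁻¹ * volume B₀) := mul_le_mul_right hfrac _
        _ = 2⁻¹^(k+1) * volume B₀ := by rw [pow_succ, mul_assoc]

end WithF

/-- Pointwise telescoping bound for the exponential. -/
lemma ptwise {a u : ℝ} (ha : 0 < a) (hu : 0 ≤ u) :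
    ENNReal.ofReal (Real.exp u - 1) ≤
      ∑' k : ℕ, (if a * (k:ℝ) < u then
        ENNReal.ofReal (Real.exp (a*((k:ℝ)+1)) - Real.exp (a*(k:ℝ))) else 0) := by
  rcases eq_or_lt_of_le hu with h0 | h0
  · simp [← h0]
  · set m := ⌈u / a⌉₊ with hm
    have hum : u ≤ a * m := by
      have h := Nat.le_ceil (u / a)
      calc u = (u/a) * a := by field_simp
        _ ≤ (m:ℝ) * a := mul_le_mul_of_nonneg_right h ha.le
        _ = a * m := mul_comm _ _
    have hkm : ∀ k : ℕ, k < m → a * (k:ℝ) < u := by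
      intro k hk
      have h1 : (k:ℝ) < u / a := by exact_mod_cast (Nat.lt_ceil).1 hk
      calc a * (k:ℝ) < a * (u/a) := by exact mul_lt_mul_of_pos_left h1 ha
        _ = u := by field_simp
    have htel : ∑ k ∈ Finset.range m, (Real.exp (a*((k:ℝ)+1)) - Real.exp (a*(k:ℝ)))
        = Real.exp (a*m) - 1 := by
      have h := Finset.sum_range_sub (fun k : ℕ => Real.exp (a*(k:ℝ))) m
      simp only [Nat.cast_add, Nat.cast_one] at h
      simpa using h
    calc ENNReal.ofReal (Real.exp u - 1) ≤ ENNReal.ofReal (Real.exp (a*m) - 1) :=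
        ENNReal.ofReal_le_ofReal (by linarith [Real.exp_le_exp.2 hum])
      _ = ∑ k ∈ Finset.range m,
            ENNReal.ofReal (Real.exp (a*((k:ℝ)+1)) - Real.exp (a*(k:ℝ))) := by
          rw [← htel, ENNReal.ofReal_sum_of_nonneg]
          intro k _
          have h2 : a*(k:ℝ) ≤ a*((k:ℝ)+1) := by nlinarith
          linarith [Real.exp_le_exp.2 h2]
      _ = ∑ k ∈ Finset.range m, (if a * (k:ℝ) < u then
            ENNReal.ofReal (Real.exp (a*((k:ℝ)+1)) - Real.exp (a*(k:ℝ))) else 0) := by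
          refine (Finset.sum_congr rfl fun k hk => ?_).symm
          rw [if_pos (hkm k (Finset.mem_range.1 hk))]
      _ ≤ _ := ENNReal.sum_le_tsum _

section WithF2

variable {f : (Fin n → ℝ) → ℝ} {τ : ℝ}

/-- The main exponential-integral bound. -/
lemma lintegral_exp_le (hm : Measurable f) (hli : LocallyIntegrable f volume) (hτ : 0 < τ)
    (hosc : ∀ (z : Fin n → ℝ) (r : ℝ), 0 < r →
      ∫ x in closedBall z r, |f x - bAvg n f z r| ≤ τ * (volume (closedBall z r)).toReal)
    (hlt : Real.exp (2 * cst n * τ) < 2) (z : Fin n → ℝ) {r : ℝ} (hr : 0 < r) :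
    ∫⁻ x in closedBall z r, ENNReal.ofReal (Real.exp (f x - bAvg n f z r)) ≤
      ENNReal.ofReal (1 + (Real.exp (2*cst n*τ) - 1) * (1 - Real.exp (2*cst n*τ)/2)⁻¹) *
        volume (closedBall z r) := by
  have ha : 0 < 2 * cst n * τ := by
    have := cst_pos (n := n); nlinarith
  set a := 2 * cst n * τ with haeq
  set B := closedBall z r with hB
  set A := bAvg n f z r with hA
  have hea1 : 1 ≤ Real.exp a := Real.one_le_exp ha.le
  have hhalf : 0 < 1 - Real.exp a / 2 := by linarith
  have hdec := decay hm hli hτ hosc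
  have hms : ∀ k : ℕ, MeasurableSet {y : Fin n → ℝ | a * (k:ℝ) < |f y - A|} := fun k =>
    measurableSet_lt measurable_const ((hm.sub measurable_const).abs)
  set q : ℝ≥0∞ := ENNReal.ofReal (Real.exp a) * 2⁻¹ with hq
  have hψ0 : 0 ≤ (Real.exp a - 1) * (1 - Real.exp a/2)⁻¹ :=
    mul_nonneg (by linarith) (inv_nonneg.2 hhalf.le)
  -- pointwise split
  have hpt : ∀ x : Fin n → ℝ, ENNReal.ofReal (Real.exp (f x - A)) ≤
      ENNReal.ofReal (Real.exp |f x - A| - 1) + 1 := by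
    intro x
    have h1 : Real.exp (f x - A) ≤ Real.exp |f x - A| := Real.exp_le_exp.2 (le_abs_self _)
    calc ENNReal.ofReal (Real.exp (f x - A))
        ≤ ENNReal.ofReal ((Real.exp |f x - A| - 1) + 1) :=
          ENNReal.ofReal_le_ofReal (by linarith)
      _ ≤ ENNReal.ofReal (Real.exp |f x - A| - 1) + ENNReal.ofReal 1 := ENNReal.ofReal_add_le
      _ = ENNReal.ofReal (Real.exp |f x - A| - 1) + 1 := by rw [ENNReal.ofReal_one]
  have hsplit : ∫⁻ x in B, ENNReal.ofReal (Real.exp (f x - A)) ≤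
      (∫⁻ x in B, ENNReal.ofReal (Real.exp |f x - A| - 1)) + volume B := by
    calc ∫⁻ x in B, ENNReal.ofReal (Real.exp (f x - A))
        ≤ ∫⁻ x in B, (ENNReal.ofReal (Real.exp |f x - A| - 1) + 1) := lintegral_mono hpt
      _ = (∫⁻ x in B, ENNReal.ofReal (Real.exp |f x - A| - 1)) + ∫⁻ _x in B, 1 :=
          lintegral_add_right _ measurable_const
      _ = (∫⁻ x in B, ENNReal.ofReal (Real.exp |f x - A| - 1)) + volume B := by
          rw [setLIntegral_one]
  -- the series bound
  have hmainsum : ∫⁻ x in B, ENNReal.ofReal (Real.exp |f x - A| - 1) ≤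
      (ENNReal.ofReal (Real.exp a - 1) * (1 - q)⁻¹) * volume B := by
    calc ∫⁻ x in B, ENNReal.ofReal (Real.exp |f x - A| - 1)
        ≤ ∫⁻ x in B, ∑' k : ℕ, ({y : Fin n → ℝ | a * (k:ℝ) < |f y - A|}.indicator
            (fun _ => ENNReal.ofReal (Real.exp (a*((k:ℝ)+1)) - Real.exp (a*(k:ℝ)))) x) := by
          apply lintegral_mono
          intro x
          refine (ptwise ha (abs_nonneg (f x - A))).trans (le_of_eq (tsum_congr fun k => ?_))
          rw [Set.indicator_apply]
          simp only [Set.mem_setOf_eq]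
      _ = ∑' k : ℕ, ∫⁻ x in B, ({y : Fin n → ℝ | a * (k:ℝ) < |f y - A|}.indicator
            (fun _ => ENNReal.ofReal (Real.exp (a*((k:ℝ)+1)) - Real.exp (a*(k:ℝ)))) x) :=
          lintegral_tsum fun k => (measurable_const.indicator (hms k)).aemeasurable
      _ = ∑' k : ℕ, ENNReal.ofReal (Real.exp (a*((k:ℝ)+1)) - Real.exp (a*(k:ℝ))) *
            volume ({y : Fin n → ℝ | a * (k:ℝ) < |f y - A|} ∩ B) := by
          refine tsum_congr fun k => ?_
          rw [lintegral_indicator (hms k), setLIntegral_const,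
            Measure.restrict_apply (hms k)]
      _ ≤ ∑' k : ℕ, ENNReal.ofReal (Real.exp (a*((k:ℝ)+1)) - Real.exp (a*(k:ℝ))) *
            (2⁻¹^k * volume B) := by
          refine ENNReal.tsum_le_tsum fun k => mul_le_mul_right ?_ _
          have h1 : {y : Fin n → ℝ | a * (k:ℝ) < |f y - A|} ∩ B =
              {x ∈ closedBall z r | 2 * cst n * τ * (k:ℝ) < |f x - bAvg n f z r|} := by
            ext x
            simp only [Set.mem_inter_iff, Set.mem_setOf_eq, Set.mem_sep_iff, hB, hA, haeq]
            exact and_comm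
          rw [h1]
          exact hdec k z r hr
      _ = (∑' k : ℕ, ENNReal.ofReal (Real.exp (a*((k:ℝ)+1)) - Real.exp (a*(k:ℝ))) * 2⁻¹^k) *
            volume B := by
          rw [← ENNReal.tsum_mul_right]
          exact tsum_congr fun k => by ring
      _ = (ENNReal.ofReal (Real.exp a - 1) * (1 - q)⁻¹) * volume B := by
          congr 1
          have hterm : ∀ k : ℕ,
              ENNReal.ofReal (Real.exp (a*((k:ℝ)+1)) - Real.exp (a*(k:ℝ))) * 2⁻¹^k
              = ENNReal.ofReal (Real.exp a - 1) * q^k := by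
            intro k
            have h1 : Real.exp (a*((k:ℝ)+1)) - Real.exp (a*(k:ℝ))
                = Real.exp (a*(k:ℝ)) * (Real.exp a - 1) := by
              rw [mul_add, mul_one, Real.exp_add]; ring
            have h2 : ENNReal.ofReal (Real.exp (a*(k:ℝ))) = (ENNReal.ofReal (Real.exp a))^k := by
              rw [← ENNReal.ofReal_pow (Real.exp_nonneg a), ← Real.exp_nat_mul, mul_comm]
            rw [h1, ENNReal.ofReal_mul (Real.exp_nonneg _), h2, hq, mul_pow]
            ring
          rw [tsum_congr hterm, ENNReal.tsum_mul_left, ENNReal.tsum_geometric]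
  -- identification of the constant
  have hiden : ENNReal.ofReal (1 + (Real.exp a - 1) * (1 - Real.exp a/2)⁻¹)
      = ENNReal.ofReal (Real.exp a - 1) * (1 - q)⁻¹ + 1 := by
    have hq' : q = ENNReal.ofReal (Real.exp a / 2) := by
      rw [ENNReal.ofReal_div_of_pos (by norm_num : (0:ℝ) < 2), hq]
      norm_num [ENNReal.div_eq_inv_mul]
      ring
    have h1q : (1:ℝ≥0∞) - q = ENNReal.ofReal (1 - Real.exp a / 2) := by
      rw [hq', ENNReal.ofReal_sub _ (by positivity), ENNReal.ofReal_one]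
    have hinv : (1 - q)⁻¹ = ENNReal.ofReal ((1 - Real.exp a / 2)⁻¹) := by
      rw [h1q, ← ENNReal.ofReal_inv_of_pos hhalf]
    rw [hinv, ← ENNReal.ofReal_mul (by linarith), ← ENNReal.ofReal_one,
      ← ENNReal.ofReal_add hψ0 (by norm_num), add_comm]
  calc ∫⁻ x in B, ENNReal.ofReal (Real.exp (f x - A))
      ≤ (∫⁻ x in B, ENNReal.ofReal (Real.exp |f x - A| - 1)) + volume B := hsplit
    _ ≤ (ENNReal.ofReal (Real.exp a - 1) * (1 - q)⁻¹) * volume B + 1 * volume B := by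
        rw [one_mul]; exact add_le_add_left hmainsum _
    _ = (ENNReal.ofReal (Real.exp a - 1) * (1 - q)⁻¹ + 1) * volume B := by ring
    _ = ENNReal.ofReal (1 + (Real.exp a - 1) * (1 - Real.exp a/2)⁻¹) * volume B := by
        rw [hiden]

/-- Integrability of the exponential. -/
lemma intOn_exp_sub (hm : Measurable f) (hli : LocallyIntegrable f volume) (hτ : 0 < τ)
    (hosc : ∀ (z : Fin n → ℝ) (r : ℝ), 0 < r →
      ∫ x in closedBall z r, |f x - bAvg n f z r| ≤ τ * (volume (closedBall z r)).toReal)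
    (hlt : Real.exp (2 * cst n * τ) < 2) (z : Fin n → ℝ) {r : ℝ} (hr : 0 < r) :
    IntegrableOn (fun x => Real.exp (f x - bAvg n f z r)) (closedBall z r) volume := by
  constructor
  · exact (Real.measurable_exp.comp (hm.sub measurable_const)).aestronglyMeasurable
  · rw [hasFiniteIntegral_iff_ofReal (Eventually.of_forall fun x => (Real.exp_pos _).le)]
    exact lt_of_le_of_lt (lintegral_exp_le hm hli hτ hosc hlt z hr)
      (ENNReal.mul_lt_top ENNReal.ofReal_lt_top measure_closedBall_lt_top)

lemma intOn_exp (hm : Measurable f) (hli : LocallyIntegrable f volume) (hτ : 0 < τ)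
    (hosc : ∀ (z : Fin n → ℝ) (r : ℝ), 0 < r →
      ∫ x in closedBall z r, |f x - bAvg n f z r| ≤ τ * (volume (closedBall z r)).toReal)
    (hlt : Real.exp (2 * cst n * τ) < 2) (z : Fin n → ℝ) {r : ℝ} (hr : 0 < r) :
    IntegrableOn (fun x => Real.exp (f x)) (closedBall z r) volume := by
  have h := (intOn_exp_sub hm hli hτ hosc hlt z hr).const_mul (Real.exp (bAvg n f z r))
  have heq : (fun x => Real.exp (f x)) =
      fun x => Real.exp (bAvg n f z r) * Real.exp (f x - bAvg n f z r) := by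
    funext x
    rw [← Real.exp_add]
    congr 1
    ring
  rw [heq]
  exact h

/-- The average bound for the exponential. -/
lemma cubeAvg_exp_le (hm : Measurable f) (hli : LocallyIntegrable f volume) (hτ : 0 < τ)
    (hosc : ∀ (z : Fin n → ℝ) (r : ℝ), 0 < r →
      ∫ x in closedBall z r, |f x - bAvg n f z r| ≤ τ * (volume (closedBall z r)).toReal)
    (hlt : Real.exp (2 * cst n * τ) < 2) (z : Fin n → ℝ) {r : ℝ} (hr : 0 < r) :
    cubeAvg (closedBall z r) (fun x => Real.exp (f x)) ≤ Real.exp (bAvg n f z r) *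
      (1 + (Real.exp (2*cst n*τ) - 1) * (1 - Real.exp (2*cst n*τ)/2)⁻¹) := by
  have ha : 0 < 2 * cst n * τ := by
    have := cst_pos (n := n); nlinarith
  have hea1 : 1 ≤ Real.exp (2*cst n*τ) := Real.one_le_exp ha.le
  have hhalf : 0 < 1 - Real.exp (2*cst n*τ) / 2 := by linarith
  set a := 2 * cst n * τ
  set B := closedBall z r with hB
  set A := bAvg n f z r with hA
  set ψ := (Real.exp a - 1) * (1 - Real.exp a/2)⁻¹ with hψ
  have hψ0 : 0 ≤ ψ := mul_nonneg (by linarith) (inv_nonneg.2 hhalf.le)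
  set v := (volume B).toReal with hv
  have hvpos : 0 < v := volB_toReal_pos z hr
  have hXle : ∫ x in B, Real.exp (f x - A) ≤ (1 + ψ) * v := by
    rw [integral_eq_lintegral_of_nonneg_ae (f := fun x => Real.exp (f x - A)) (Eventually.of_forall fun x => (Real.exp_pos _).le)
      (Real.measurable_exp.comp (hm.sub measurable_const)).aestronglyMeasurable]
    have hb := lintegral_exp_le hm hli hτ hosc hlt z hr
    calc (∫⁻ x in B, ENNReal.ofReal (Real.exp (f x - A))).toReal
        ≤ (ENNReal.ofReal (1 + ψ) * volume B).toReal :=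
          ENNReal.toReal_mono (ENNReal.mul_ne_top ENNReal.ofReal_ne_top (volB_ne_top z r)) hb
      _ = (1 + ψ) * v := by
          rw [ENNReal.toReal_mul, ENNReal.toReal_ofReal (by positivity)]
  have hfact : (fun x => Real.exp (f x)) = fun x => Real.exp A * Real.exp (f x - A) := by
    funext x
    rw [← Real.exp_add]
    congr 1
    ring
  show (volume B).toReal⁻¹ * ∫ x in B, Real.exp (f x) ≤ Real.exp A * (1 + ψ)
  rw [hfact, integral_const_mul]
  calc v⁻¹ * (Real.exp A * ∫ x in B, Real.exp (f x - A))
      = Real.exp A * (v⁻¹ * ∫ x in B, Real.exp (f x - A)) := by ring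
    _ ≤ Real.exp A * (v⁻¹ * ((1 + ψ) * v)) := by
        apply mul_le_mul_of_nonneg_left _ (Real.exp_pos A).le
        apply mul_le_mul_of_nonneg_left hXle (by positivity)
    _ = Real.exp A * (1 + ψ) := by field_simp

end WithF2

lemma isCube_iff_ball {Q : Set (Fin n → ℝ)} :
    IsCube Q ↔ ∃ (z : Fin n → ℝ) (r : ℝ), 0 < r ∧ Q = closedBall z r := by
  constructor
  · rintro ⟨aa, h, hh, rfl⟩
    refine ⟨fun i => aa i + h/2, h/2, by positivity, ?_⟩
    rw [closedBall_pi _ (by positivity : (0:ℝ) ≤ h/2)]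
    exact Set.pi_congr rfl fun i _ => by
      rw [Real.closedBall_eq_Icc]; congr 1 <;> ring
  · rintro ⟨z, r, hr, rfl⟩
    refine ⟨fun i => z i - r, 2*r, by positivity, ?_⟩
    rw [closedBall_pi _ hr.le]
    exact (Set.pi_congr rfl fun i _ => by
      rw [Real.closedBall_eq_Icc]; congr 1 <;> ring).symm

end BmoAp

open BmoAp Metric Set

/-- For every `n ≥ 1`, `1 < p < ∞` and `ε > 0` there is `δ > 0` such
that every locally integrable `f` with `‖f‖_* ≤ δ` satisfies: `e^f` is an `A_p` weight
with `[e^f]_{A_p} ≤ 1 + ε`. -/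
theorem exp_small_bmo_Ap {n : ℕ} (hn : 1 ≤ n) (p : ℝ) (hp : 1 < p)
    (ε : ℝ) (hε : 0 < ε) :
    ∃ δ : ℝ, 0 < δ ∧
      ∀ f : (Fin n → ℝ) → ℝ, LocallyIntegrable f volume → BmoLe f δ →
        IsApWeight p (fun x => Real.exp (f x)) ∧
          ∀ Q : Set (Fin n → ℝ), IsCube Q →
            apQ p Q (fun x => Real.exp (f x)) ≤ 1 + ε := by
  have hp1 : 0 < p - 1 := by linarith
  obtain ⟨r0, hr0⟩ : ∃ r0 : ℝ, r0 = 1 - p / (p - 1) := ⟨_, rfl⟩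
  have hrp : r0 * (p - 1) = -1 := by rw [hr0, sub_mul, div_mul_cancel₀ _ hp1.ne']; ring
  obtain ⟨M, hM⟩ : ∃ M : ℝ, M = max 1 |r0| := ⟨_, rfl⟩
  have hM1 : 1 ≤ M := hM ▸ le_max_left _ _
  have hM0 : 0 < M := lt_of_lt_of_le one_pos hM1
  obtain ⟨ε', hε'⟩ : ∃ x : ℝ, x = Real.log (1 + ε) / p := ⟨_, rfl⟩
  have hε'pos : 0 < ε' := hε' ▸ div_pos (Real.log_pos (by linarith)) (by linarith)
  obtain ⟨m, hmdef⟩ : ∃ x : ℝ, x = min (ε'/4) (1/2) := ⟨_, rfl⟩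
  have hm0 : 0 < m := hmdef ▸ lt_min (by positivity) (by norm_num)
  have hm2 : m ≤ 1/2 := hmdef ▸ min_le_right _ _
  have hm4 : 4 * m ≤ ε' := by
    have := min_le_left (ε'/4) (1/2); rw [← hmdef] at this; linarith
  obtain ⟨aa, haa⟩ : ∃ x : ℝ, x = Real.log (1 + m) := ⟨_, rfl⟩
  have haa0 : 0 < aa := haa ▸ Real.log_pos (by linarith)
  have hexpa : Real.exp aa = 1 + m := by rw [haa]; exact Real.exp_log (by linarith)
  have hcstpos := cst_pos (n := n)
  obtain ⟨τ, hτdef⟩ : ∃ x : ℝ, x = aa / (2 * cst n) := ⟨_, rfl⟩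
  have hτ0 : 0 < τ := hτdef ▸ div_pos haa0 (by linarith)
  have h2ct : 2 * cst n * τ = aa := by rw [hτdef]; field_simp
  have hlt : Real.exp (2 * cst n * τ) < 2 := by rw [h2ct, hexpa]; linarith
  obtain ⟨ψ, hψdef⟩ : ∃ x : ℝ,
      x = (Real.exp (2*cst n*τ) - 1) * (1 - Real.exp (2*cst n*τ)/2)⁻¹ := ⟨_, rfl⟩
  have hψeq : ψ = m * (1 - (1+m)/2)⁻¹ := by rw [hψdef, h2ct, hexpa]; ring_nf
  have hψ0 : 0 ≤ ψ := by
    rw [hψeq]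
    exact mul_nonneg hm0.le (inv_nonneg.2 (by linarith))
  have hψval : ψ ≤ ε' := by
    rw [hψeq]
    have hden : (0:ℝ) < 1 - (1+m)/2 := by linarith
    have h1 : m * (1 - (1+m)/2)⁻¹ = 2*m/(1-m) := by
      rw [show (1:ℝ) - (1+m)/2 = (1-m)/2 by ring]
      rw [div_eq_mul_inv, mul_inv, inv_inv]
      field_simp
    rw [h1, div_le_iff₀ (by linarith : (0:ℝ) < 1-m)]
    nlinarith
  refine ⟨τ / M, div_pos hτ0 hM0, ?_⟩
  intro f hfli hfbmo
  obtain ⟨f', hf'meas, hff'⟩ : ∃ f', Measurable f' ∧ f =ᵐ[volume] f' := by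
    have h := hfli.aestronglyMeasurable
    exact ⟨h.mk f, h.stronglyMeasurable_mk.measurable, h.ae_eq_mk⟩
  have hf'li : LocallyIntegrable f' volume := by
    intro x
    obtain ⟨s, hs, hint⟩ := hfli x
    exact ⟨s, hs, hint.congr (ae_restrict_of_ae hff')⟩
  -- oscillation bound for f'
  have hosc1 : ∀ (z : Fin n → ℝ) (r : ℝ), 0 < r →
      ∫ x in closedBall z r, |f' x - bAvg n f' z r| ≤
        (τ/M) * (volume (closedBall z r)).toReal := by
    intro z r hr
    have hQ : IsCube (closedBall z r) := isCube_iff_ball.2 ⟨z, r, hr, rfl⟩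
    have hbmo := hfbmo _ hQ
    have hav : cubeAvg (closedBall z r) f = cubeAvg (closedBall z r) f' := by
      unfold cubeAvg; congr 1
      exact integral_congr_ae (ae_restrict_of_ae hff')
    have hosc_eq : bmoOsc (closedBall z r) f = bmoOsc (closedBall z r) f' := by
      unfold bmoOsc
      simp only [hav]
      unfold cubeAvg
      congr 1
      apply integral_congr_ae
      filter_upwards [ae_restrict_of_ae hff'] with x hx
      rw [hx]
    rw [hosc_eq] at hbmo
    have hbmo' : (volume (closedBall z r)).toReal⁻¹ *
        ∫ x in closedBall z r, |f' x - bAvg n f' z r| ≤ τ/M := hbmo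
    have hv : 0 < (volume (closedBall z r)).toReal := volB_toReal_pos z hr
    calc ∫ x in closedBall z r, |f' x - bAvg n f' z r|
        = (volume (closedBall z r)).toReal * ((volume (closedBall z r)).toReal⁻¹ *
            ∫ x in closedBall z r, |f' x - bAvg n f' z r|) := by
          rw [← mul_assoc, mul_inv_cancel₀ hv.ne', one_mul]
      _ ≤ (volume (closedBall z r)).toReal * (τ/M) :=
          mul_le_mul_of_nonneg_left hbmo' hv.le
      _ = (τ/M) * (volume (closedBall z r)).toReal := mul_comm _ _
  have hosc1' : ∀ (z : Fin n → ℝ) (r : ℝ), 0 < r →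
      ∫ x in closedBall z r, |f' x - bAvg n f' z r| ≤
        τ * (volume (closedBall z r)).toReal := by
    intro z r hr
    refine (hosc1 z r hr).trans (mul_le_mul_of_nonneg_right ?_ ENNReal.toReal_nonneg)
    exact div_le_self hτ0.le hM1
  -- the second weight function
  obtain ⟨g, hgdef⟩ : ∃ g : (Fin n → ℝ) → ℝ, g = fun x => r0 * f' x := ⟨_, rfl⟩
  have hgmeas : Measurable g := by rw [hgdef]; exact hf'meas.const_mul r0
  have hgli : LocallyIntegrable g volume := by
    rw [hgdef]
    have h := hf'li.smul r0
    exact h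
  have hgavg : ∀ (z : Fin n → ℝ) (r : ℝ), bAvg n g z r = r0 * bAvg n f' z r := by
    intro z r
    unfold bAvg cubeAvg
    rw [hgdef, integral_const_mul]
    ring
  have hoscg : ∀ (z : Fin n → ℝ) (r : ℝ), 0 < r →
      ∫ x in closedBall z r, |g x - bAvg n g z r| ≤
        τ * (volume (closedBall z r)).toReal := by
    intro z r hr
    have h1 : ∀ x, |g x - bAvg n g z r| = |r0| * |f' x - bAvg n f' z r| := by
      intro x
      rw [hgavg, ← abs_mul, hgdef]
      congr 1
      ring
    have hrM : |r0| ≤ M := hM ▸ le_max_right _ _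
    calc ∫ x in closedBall z r, |g x - bAvg n g z r|
        = ∫ x in closedBall z r, |r0| * |f' x - bAvg n f' z r| := by simp_rw [h1]
      _ = |r0| * ∫ x in closedBall z r, |f' x - bAvg n f' z r| := integral_const_mul _ _
      _ ≤ |r0| * ((τ/M) * (volume (closedBall z r)).toReal) :=
          mul_le_mul_of_nonneg_left (hosc1 z r hr) (abs_nonneg r0)
      _ = (|r0| * (τ/M)) * (volume (closedBall z r)).toReal := by ring
      _ ≤ τ * (volume (closedBall z r)).toReal := by
          apply mul_le_mul_of_nonneg_right _ ENNReal.toReal_nonneg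
          calc |r0| * (τ/M) ≤ M * (τ/M) :=
              mul_le_mul_of_nonneg_right hrM (by positivity)
            _ = τ := by field_simp
  -- the per-cube apQ bound
  have key : ∀ Q : Set (Fin n → ℝ), IsCube Q →
      apQ p Q (fun x => Real.exp (f x)) ≤ 1 + ε := by
    intro Q hQ
    obtain ⟨z, r, hr, rfl⟩ := isCube_iff_ball.1 hQ
    have hcong1 : cubeAvg (closedBall z r) (fun x => Real.exp (f x)) =
        cubeAvg (closedBall z r) (fun x => Real.exp (f' x)) := by
      unfold cubeAvg; congr 1
      apply integral_congr_ae
      filter_upwards [ae_restrict_of_ae hff'] with x hx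
      rw [hx]
    have hcong2 : (cubeAvg (closedBall z r) fun x => Real.exp (f x) ^ (1 - p/(p-1))) =
        cubeAvg (closedBall z r) (fun x => Real.exp (g x)) := by
      unfold cubeAvg; congr 1
      apply integral_congr_ae
      filter_upwards [ae_restrict_of_ae hff'] with x hx
      rw [Real.rpow_def_of_pos (Real.exp_pos _), Real.log_exp, hx, ← hr0, hgdef]
      show Real.exp (f' x * r0) = Real.exp (r0 * f' x)
      rw [mul_comm]
    have h1 := cubeAvg_exp_le hf'meas hf'li hτ0 hosc1' hlt z hr
    have h2 := cubeAvg_exp_le hgmeas hgli hτ0 hoscg hlt z hr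
    rw [hgavg] at h2
    rw [← hψdef] at h1 h2
    have h2nn : 0 ≤ cubeAvg (closedBall z r) (fun x => Real.exp (g x)) := by
      unfold cubeAvg
      exact mul_nonneg (inv_nonneg.2 ENNReal.toReal_nonneg)
        (setIntegral_nonneg measurableSet_closedBall fun x _ => (Real.exp_pos _).le)
    have hψpos : (0:ℝ) < 1 + ψ := by linarith
    unfold apQ
    rw [hcong1, hcong2]
    have hfac2 : (cubeAvg (closedBall z r) fun x => Real.exp (g x)) ^ (p-1)
        ≤ (Real.exp (r0 * bAvg n f' z r) * (1 + ψ)) ^ (p-1) :=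
      Real.rpow_le_rpow h2nn h2 (by linarith)
    have hEE : Real.exp (bAvg n f' z r) * Real.exp (-(bAvg n f' z r)) = 1 := by
      rw [← Real.exp_add, add_neg_cancel, Real.exp_zero]
    calc cubeAvg (closedBall z r) (fun x => Real.exp (f' x)) *
          (cubeAvg (closedBall z r) fun x => Real.exp (g x)) ^ (p-1)
        ≤ (Real.exp (bAvg n f' z r) * (1+ψ)) *
            ((Real.exp (r0 * bAvg n f' z r) * (1+ψ)) ^ (p-1)) := by
          apply mul_le_mul h1 hfac2 (Real.rpow_nonneg h2nn _)
            (mul_nonneg (Real.exp_pos _).le hψpos.le)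
      _ = (Real.exp (bAvg n f' z r) * (1+ψ)) *
            (Real.exp (-(bAvg n f' z r)) * (1+ψ)^(p-1)) := by
          rw [Real.mul_rpow (Real.exp_pos _).le hψpos.le,
            Real.rpow_def_of_pos (Real.exp_pos _), Real.log_exp]
          congr 2
          rw [mul_comm r0 (bAvg n f' z r), mul_assoc, hrp]
          ring
      _ = (1+ψ) * (1+ψ)^(p-1) := by
          calc (Real.exp (bAvg n f' z r) * (1+ψ)) *
                (Real.exp (-(bAvg n f' z r)) * (1+ψ)^(p-1))
              = (Real.exp (bAvg n f' z r) * Real.exp (-(bAvg n f' z r))) *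
                  ((1+ψ) * (1+ψ)^(p-1)) := by ring
            _ = (1+ψ) * (1+ψ)^(p-1) := by rw [hEE, one_mul]
      _ = (1+ψ)^p := by
          rw [show p = 1 + (p-1) by ring, Real.rpow_add hψpos, Real.rpow_one]
          ring_nf
      _ ≤ (1+ε')^p := Real.rpow_le_rpow (by linarith) (by linarith) (by linarith)
      _ ≤ 1 + ε := by
          rw [Real.rpow_def_of_pos (by linarith : (0:ℝ) < 1+ε')]
          have hlog : Real.log (1+ε') ≤ ε' := by
            have := Real.log_le_sub_one_of_pos (by linarith : (0:ℝ) < 1+ε')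
            linarith
          have hεp : ε' * p = Real.log (1+ε) := by
            rw [hε']; field_simp
          have hmain : Real.log (1+ε') * p ≤ Real.log (1+ε) := by
            calc Real.log (1+ε') * p ≤ ε' * p :=
                mul_le_mul_of_nonneg_right hlog (by linarith)
              _ = Real.log (1+ε) := hεp
          calc Real.exp (Real.log (1+ε') * p) ≤ Real.exp (Real.log (1+ε)) :=
              Real.exp_le_exp.2 hmain
            _ = 1 + ε := Real.exp_log (by linarith)
  -- local integrability of the weight
  have hwli : LocallyIntegrable (fun x => Real.exp (f x)) volume := by
    rw [locallyIntegrable_iff]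
    intro K hK
    obtain ⟨R, hR⟩ := hK.isBounded.subset_closedBall (0 : Fin n → ℝ)
    have hR' : K ⊆ closedBall (0 : Fin n → ℝ) (max R 1) :=
      hR.trans (closedBall_subset_closedBall (le_max_left _ _))
    have h1 : IntegrableOn (fun x => Real.exp (f' x)) K volume :=
      (intOn_exp hf'meas hf'li hτ0 hosc1' hlt 0
        (lt_of_lt_of_le one_pos (le_max_right R 1))).mono_set hR'
    apply h1.congr
    refine ae_restrict_of_ae (hff'.mono fun x hx => ?_)
    show Real.exp (f' x) = Real.exp (f x)
    rw [hx]
  have hwli2 : LocallyIntegrable (fun x => Real.exp (f x) ^ (1 - p/(p-1))) volume := by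
    rw [locallyIntegrable_iff]
    intro K hK
    obtain ⟨R, hR⟩ := hK.isBounded.subset_closedBall (0 : Fin n → ℝ)
    have hR' : K ⊆ closedBall (0 : Fin n → ℝ) (max R 1) :=
      hR.trans (closedBall_subset_closedBall (le_max_left _ _))
    have h1 : IntegrableOn (fun x => Real.exp (g x)) K volume :=
      (intOn_exp hgmeas hgli hτ0 hoscg hlt 0
        (lt_of_lt_of_le one_pos (le_max_right R 1))).mono_set hR'
    apply h1.congr
    refine ae_restrict_of_ae (hff'.mono fun x hx => ?_)
    show Real.exp (g x) = Real.exp (f x) ^ (1 - p/(p-1))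
    rw [Real.rpow_def_of_pos (Real.exp_pos _), Real.log_exp, hx, ← hr0, hgdef]
    show Real.exp (r0 * f' x) = Real.exp (f' x * r0)
    rw [mul_comm]
  exact ⟨⟨⟨hwli, Eventually.of_forall fun x => Real.exp_pos _⟩, hwli2, ⟨1+ε, key⟩⟩, key⟩
end
end

section
/- For every dimension n ≥ 1 and every 1 < p < ∞ there exists a constant c > 0, depending only on n and p, with the following property: for every locally integrable function f : ℝ^n → ℝ with 0 < ‖f‖_* < ∞ and every λ with 0 < λ ≤ c/‖f‖_*, the function e^{λf} is an A_p weight. -/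
open MeasureTheory Real Filter
open scoped ENNReal

noncomputable section

open scoped Topology

namespace JN
variable {n : ℕ}

def QIcc (a : Fin n → ℝ) (h : ℝ) : Set (Fin n → ℝ) :=
  Set.univ.pi fun i => Set.Icc (a i) (a i + h)

def QIco (a : Fin n → ℝ) (h : ℝ) : Set (Fin n → ℝ) :=
  Set.univ.pi fun i => Set.Ico (a i) (a i + h)

lemma measurableSet_QIcc (a : Fin n → ℝ) (h : ℝ) : MeasurableSet (QIcc a h) :=
  MeasurableSet.univ_pi fun _ => measurableSet_Icc

lemma measurableSet_QIco (a : Fin n → ℝ) (h : ℝ) : MeasurableSet (QIco a h) :=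
  MeasurableSet.univ_pi fun _ => measurableSet_Ico

lemma isCompact_QIcc (a : Fin n → ℝ) (h : ℝ) : IsCompact (QIcc a h) :=
  isCompact_univ_pi fun _ => isCompact_Icc

lemma volume_QIcc (a : Fin n → ℝ) (h : ℝ) :
    volume (QIcc a h) = ENNReal.ofReal h ^ n := by
  rw [QIcc, volume_pi_pi]
  simp [Real.volume_Icc]

lemma volume_QIco (a : Fin n → ℝ) (h : ℝ) :
    volume (QIco a h) = ENNReal.ofReal h ^ n := by
  rw [QIco, volume_pi_pi]
  simp [Real.volume_Ico]

lemma QIco_subset_QIcc (a : Fin n → ℝ) (h : ℝ) : QIco a h ⊆ QIcc a h :=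
  Set.pi_mono fun _ _ => Set.Ico_subset_Icc_self

lemma QIco_ae_eq (a : Fin n → ℝ) (h : ℝ) : QIco a h =ᵐ[volume] QIcc a h := by
  rw [Filter.eventuallyEq_set]
  have hnull : volume (QIcc a h \ QIco a h) = 0 := by
    apply measure_mono_null (t := ⋃ i : Fin n, {x : Fin n → ℝ | x i = a i + h})
    · rintro x ⟨hx1, hx2⟩
      simp only [QIco, Set.mem_pi, Set.mem_univ, forall_true_left, not_forall] at hx2
      obtain ⟨i, hi⟩ := hx2
      have h1 : x i ∈ Set.Icc (a i) (a i + h) := hx1 i (Set.mem_univ i)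
      refine Set.mem_iUnion.2 ⟨i, ?_⟩
      simp only [Set.mem_setOf_eq]
      rcases h1 with ⟨hl, hr⟩
      by_contra hne
      exact hi ⟨hl, lt_of_le_of_ne hr hne⟩
    · refine measure_iUnion_null fun i => ?_
      have : {x : Fin n → ℝ | x i = a i + h} = (fun x : Fin n → ℝ => x i) ⁻¹' {a i + h} := rfl
      rw [this]
      have := MeasureTheory.Measure.pi_hyperplane (fun _ : Fin n => (volume : Measure ℝ)) i (a i + h)
      rwa [← MeasureTheory.volume_pi] at this
  have hsub := QIco_subset_QIcc a h
  filter_upwards [measure_eq_zero_iff_ae_notMem.mp hnull] with x hx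
  constructor
  · intro h1; exact hsub h1
  · intro h1
    by_contra h2
    exact hx ⟨h1, h2⟩

def dyc (a : Fin n → ℝ) (h : ℝ) (m : ℕ) (j : Fin n → ℕ) : Set (Fin n → ℝ) :=
  QIco (fun i => a i + h * (j i : ℝ) / 2 ^ m) (h / 2 ^ m)

/-- Index of the generation-`m` dyadic cube containing `x`. -/
def idx (a : Fin n → ℝ) (h : ℝ) (m : ℕ) (x : Fin n → ℝ) : Fin n → ℕ :=
  fun i => ⌊(x i - a i) * 2 ^ m / h⌋₊

variable {a : Fin n → ℝ} {h : ℝ}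

lemma mem_dyc_iff (hh : 0 < h) {m : ℕ} {j : Fin n → ℕ} {x : Fin n → ℝ} :
    x ∈ dyc a h m j ↔ ∀ i, (j i : ℝ) * h ≤ (x i - a i) * 2 ^ m ∧
      (x i - a i) * 2 ^ m < ((j i : ℝ) + 1) * h := by
  have h2 : (0:ℝ) < 2 ^ m := by positivity
  simp only [dyc, QIco, Set.mem_pi, Set.mem_univ, forall_true_left, Set.mem_Ico]
  refine forall_congr' fun i => and_congr ?_ ?_
  · rw [← le_sub_iff_add_le', div_le_iff₀ h2]
    constructor <;> intro hx <;> nlinarith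
  · rw [add_assoc, ← sub_lt_iff_lt_add', ← add_div, lt_div_iff₀ h2]
    constructor <;> intro hx <;> nlinarith

lemma idx_eq_of_mem (hh : 0 < h) {m : ℕ} {j : Fin n → ℕ} {x : Fin n → ℝ}
    (hx : x ∈ dyc a h m j) : idx a h m x = j := by
  rw [mem_dyc_iff hh] at hx
  have h2 : (0:ℝ) < 2 ^ m := by positivity
  funext i
  obtain ⟨h1', h2'⟩ := hx i
  have hy0 : (0:ℝ) ≤ (x i - a i) * 2 ^ m / h := by
    apply div_nonneg _ hh.le
    exact le_trans (by positivity) h1'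
  show ⌊(x i - a i) * 2 ^ m / h⌋₊ = j i
  rw [Nat.floor_eq_iff hy0]
  constructor
  · rw [le_div_iff₀ hh]; exact h1'
  · rw [div_lt_iff₀ hh]; exact h2'

lemma mem_dyc_idx (hh : 0 < h) {m : ℕ} {x : Fin n → ℝ} (hx : ∀ i, 0 ≤ x i - a i) :
    x ∈ dyc a h m (idx a h m x) := by
  have h2 : (0:ℝ) < 2 ^ m := by positivity
  rw [mem_dyc_iff hh]
  intro i
  have hy0 : (0:ℝ) ≤ (x i - a i) * 2 ^ m / h := div_nonneg (mul_nonneg (hx i) h2.le) hh.le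
  show ((⌊(x i - a i) * 2 ^ m / h⌋₊ : ℝ)) * h ≤ _ ∧ _ < ((⌊(x i - a i) * 2 ^ m / h⌋₊ : ℝ) + 1) * h
  constructor
  · rw [← le_div_iff₀ hh]; exact Nat.floor_le hy0
  · rw [← div_lt_iff₀ hh]; exact Nat.lt_floor_add_one _

lemma idx_lt_of_mem_QIco (hh : 0 < h) {m : ℕ} {x : Fin n → ℝ} (hx : x ∈ QIco a h) (i : Fin n) :
    idx a h m x i < 2 ^ m := by
  obtain ⟨h1, h2'⟩ := hx i (Set.mem_univ i)
  have h2 : (0:ℝ) < 2 ^ m := by positivity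
  show ⌊(x i - a i) * 2 ^ m / h⌋₊ < 2 ^ m
  rw [Nat.floor_lt (div_nonneg (mul_nonneg (sub_nonneg.2 h1) h2.le) hh.le), div_lt_iff₀ hh]
  push_cast
  nlinarith

lemma nonneg_of_mem_QIco {x : Fin n → ℝ} (hx : x ∈ QIco a h) (i : Fin n) : 0 ≤ x i - a i :=
  sub_nonneg.2 (hx i (Set.mem_univ i)).1

lemma nonneg_of_mem_dyc (hh : 0 < h) {m : ℕ} {j : Fin n → ℕ} {x : Fin n → ℝ}
    (hx : x ∈ dyc a h m j) (i : Fin n) : 0 ≤ x i - a i := by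
  rw [mem_dyc_iff hh] at hx
  have h2 : (0:ℝ) < 2 ^ m := by positivity
  nlinarith [(hx i).1, (j i).cast_nonneg (α := ℝ), hh]

lemma idx_ancestor (hh : 0 < h) (m k : ℕ) (x : Fin n → ℝ) (i : Fin n) :
    idx a h m x i = idx a h (m + k) x i / 2 ^ k := by
  rw [idx, idx, ← Nat.floor_div_natCast]
  congr 1
  push_cast
  rw [pow_add]
  field_simp

lemma dyc_subset_QIco (hh : 0 < h) {m : ℕ} {j : Fin n → ℕ} (hj : ∀ i, j i < 2 ^ m) :
    dyc a h m j ⊆ QIco a h := by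
  intro x hx
  have h2 : (0:ℝ) < 2 ^ m := by positivity
  rw [mem_dyc_iff hh] at hx
  intro i _
  obtain ⟨h1, h2'⟩ := hx i
  have hj' : ((j i : ℝ) + 1) ≤ 2 ^ m := by
    have := hj i
    have : (j i : ℝ) + 1 ≤ ((2:ℕ) ^ m : ℝ) := by exact_mod_cast this
    simpa using this
  constructor
  · nlinarith [(j i).cast_nonneg (α := ℝ)]
  · nlinarith

lemma dyc_succ_subset (hh : 0 < h) {m : ℕ} (j : Fin n → ℕ) :
    dyc a h (m + 1) j ⊆ dyc a h m fun i => j i / 2 := by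
  intro x hx
  have hxj : idx a h (m+1) x = j := idx_eq_of_mem hh hx
  have hnn : ∀ i, 0 ≤ x i - a i := nonneg_of_mem_dyc hh hx
  have : idx a h m x = fun i => j i / 2 := by
    funext i
    rw [idx_ancestor hh m 1 x i, hxj]
    norm_num
  rw [← this]
  exact mem_dyc_idx hh hnn

/-- Distinct "selected-style" dyadic cubes: nesting relation. -/
lemma idx_ancestor' (hh : 0 < h) {m m' : ℕ} (hmm : m' ≤ m) {j : Fin n → ℕ} {x : Fin n → ℝ}
    (hx : x ∈ dyc a h m j) : idx a h m' x = fun i => j i / 2 ^ (m - m') := by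
  funext i
  have := idx_ancestor (a := a) hh m' (m - m') x i
  rw [Nat.add_sub_cancel' hmm] at this
  rw [this, idx_eq_of_mem hh hx]


lemma volume_QIcc_ne_top (a : Fin n → ℝ) (h : ℝ) : volume (QIcc a h) ≠ ⊤ := by
  rw [volume_QIcc]; exact ENNReal.pow_ne_top ENNReal.ofReal_ne_top

lemma volume_QIcc_toReal (a : Fin n → ℝ) {h : ℝ} (hh : 0 ≤ h) :
    (volume (QIcc a h)).toReal = h ^ n := by
  rw [volume_QIcc, ENNReal.toReal_pow, ENNReal.toReal_ofReal hh]

lemma cubeAvg_Ico_eq (a : Fin n → ℝ) (h : ℝ) (u : (Fin n → ℝ) → ℝ) :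
    cubeAvg (QIco a h) u = cubeAvg (QIcc a h) u := by
  unfold cubeAvg
  rw [measure_congr (QIco_ae_eq a h), setIntegral_congr_set (QIco_ae_eq a h)]

lemma abs_cubeAvg_le (S : Set (Fin n → ℝ)) (u : (Fin n → ℝ) → ℝ) :
    |cubeAvg S u| ≤ cubeAvg S fun x => |u x| := by
  unfold cubeAvg
  rw [abs_mul, abs_inv, abs_of_nonneg ENNReal.toReal_nonneg]
  apply mul_le_mul_of_nonneg_left _ (by positivity)
  simpa [Real.norm_eq_abs] using
    norm_integral_le_integral_norm (μ := volume.restrict S) u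

lemma cubeAvg_nonneg (S : Set (Fin n → ℝ)) {u : (Fin n → ℝ) → ℝ} (hu : ∀ x, 0 ≤ u x) :
    0 ≤ cubeAvg S u :=
  mul_nonneg (by positivity) (integral_nonneg hu)

lemma cubeAvg_sub_const {a : Fin n → ℝ} {h : ℝ} (hh : 0 < h) {u : (Fin n → ℝ) → ℝ}
    (hu : IntegrableOn u (QIcc a h) volume) (c : ℝ) :
    cubeAvg (QIcc a h) (fun x => u x - c) = cubeAvg (QIcc a h) u - c := by
  unfold cubeAvg
  rw [integral_sub hu (integrableOn_const (volume_QIcc_ne_top a h)),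
    setIntegral_const, smul_eq_mul]
  have hv : (volume (QIcc a h)).toReal = h ^ n := volume_QIcc_toReal a hh.le
  rw [hv]
  have hne : (h:ℝ) ^ n ≠ 0 := by positivity
  field_simp
  rw [measureReal_def, hv]

lemma cubeAvg_const_mul (S : Set (Fin n → ℝ)) (c : ℝ) (u : (Fin n → ℝ) → ℝ) :
    cubeAvg S (fun x => c * u x) = c * cubeAvg S u := by
  unfold cubeAvg
  rw [integral_const_mul]
  ring

lemma cubeAvg_mono {S : Set (Fin n → ℝ)} {u v : (Fin n → ℝ) → ℝ}
    (hu : IntegrableOn u S volume) (hv : IntegrableOn v S volume) (huv : ∀ x, u x ≤ v x) :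
    cubeAvg S u ≤ cubeAvg S v :=
  mul_le_mul_of_nonneg_left (setIntegral_mono hu hv huv) (by positivity)

lemma lintegral_Ico_ofReal_eq {a : Fin n → ℝ} {h : ℝ} {u : (Fin n → ℝ) → ℝ}
    (hu : IntegrableOn u (QIcc a h) volume) (hu0 : ∀ x, 0 ≤ u x) :
    ∫⁻ x in QIco a h, ENNReal.ofReal (u x) = ENNReal.ofReal (∫ x in QIcc a h, u x) := by
  rw [setLIntegral_congr (QIco_ae_eq a h)]
  exact (ofReal_integral_eq_lintegral_ofReal hu (Filter.Eventually.of_forall hu0)).symm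

lemma cubeAvg_le_of_lintegral_le {a : Fin n → ℝ} {h : ℝ} (hh : 0 < h) {u : (Fin n → ℝ) → ℝ}
    (hu : IntegrableOn u (QIcc a h) volume) (hu0 : ∀ x, 0 ≤ u x) {t : ℝ} (ht : 0 ≤ t)
    (hb : ∫⁻ x in QIco a h, ENNReal.ofReal (u x) ≤ ENNReal.ofReal t * volume (QIco a h)) :
    cubeAvg (QIcc a h) u ≤ t := by
  rw [lintegral_Ico_ofReal_eq hu hu0, volume_QIco, ← ENNReal.ofReal_pow hh.le,
    ← ENNReal.ofReal_mul ht] at hb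
  have hI : ∫ x in QIcc a h, u x ≤ t * h ^ n :=
    (ENNReal.ofReal_le_ofReal_iff (by positivity)).1 hb
  unfold cubeAvg
  rw [volume_QIcc_toReal a hh.le]
  rw [inv_mul_le_iff₀ (by positivity : (0:ℝ) < h ^ n)]
  linarith [hI]

lemma lintegral_le_of_cubeAvg_le {a : Fin n → ℝ} {h : ℝ} (hh : 0 < h) {u : (Fin n → ℝ) → ℝ}
    (hu : IntegrableOn u (QIcc a h) volume) (hu0 : ∀ x, 0 ≤ u x) {t : ℝ}
    (hb : cubeAvg (QIcc a h) u ≤ t) :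
    ∫⁻ x in QIco a h, ENNReal.ofReal (u x) ≤ ENNReal.ofReal t * volume (QIco a h) := by
  have ht : 0 ≤ t := le_trans (cubeAvg_nonneg _ hu0) hb
  have hI : ∫ x in QIcc a h, u x ≤ t * h ^ n := by
    have := hb
    unfold cubeAvg at this
    rw [volume_QIcc_toReal a hh.le, inv_mul_le_iff₀ (by positivity : (0:ℝ) < h ^ n)] at this
    linarith
  rw [lintegral_Ico_ofReal_eq hu hu0, volume_QIco, ← ENNReal.ofReal_pow hh.le,
    ← ENNReal.ofReal_mul ht]
  exact ENNReal.ofReal_le_ofReal hI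

/-- "Bad" dyadic cube: the average of `g` over it exceeds 2 (in `lintegral` form). -/
def BadP (a : Fin n → ℝ) (h : ℝ) (g : (Fin n → ℝ) → ℝ) (m : ℕ) (j : Fin n → ℕ) : Prop :=
  2 * volume (dyc a h m j) < ∫⁻ x in dyc a h m j, ENNReal.ofReal (g x)

/-- Selected (maximal bad) dyadic cubes. -/
def selP (a : Fin n → ℝ) (h : ℝ) (g : (Fin n → ℝ) → ℝ) : Set (ℕ × (Fin n → ℕ)) :=
  {p | (∀ i, p.2 i < 2 ^ p.1) ∧ BadP a h g p.1 p.2 ∧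
    ∀ m' < p.1, ¬ BadP a h g m' fun i => p.2 i / 2 ^ (p.1 - m')}

variable {g : (Fin n → ℝ) → ℝ}

lemma sel_disjoint (hh : 0 < h) (g : (Fin n → ℝ) → ℝ) :
    (selP a h g).PairwiseDisjoint fun p => dyc a h p.1 p.2 := by
  have key : ∀ p ∈ selP a h g, ∀ q ∈ selP a h g, p.1 < q.1 →
      Disjoint (dyc a h p.1 p.2) (dyc a h q.1 q.2) := by
    rintro p hp q hq hlt
    rw [Set.disjoint_left]
    intro x hxp hxq
    have h1 : idx a h p.1 x = fun i => q.2 i / 2 ^ (q.1 - p.1) := idx_ancestor' hh hlt.le hxq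
    have h2 : idx a h p.1 x = p.2 := idx_eq_of_mem hh hxp
    refine hq.2.2 p.1 hlt ?_
    rw [← h1, h2]
    exact hp.2.1
  rintro p hp q hq hpq
  rw [Function.onFun]
  rcases lt_trichotomy p.1 q.1 with hlt | heq | hgt
  · exact key p hp q hq hlt
  · rw [Set.disjoint_left]
    intro x hxp hxq
    have h2 : idx a h p.1 x = p.2 := idx_eq_of_mem hh hxp
    have h3 : idx a h q.1 x = q.2 := idx_eq_of_mem hh hxq
    exact hpq (Prod.ext heq (by rw [← h2, ← h3, heq]))
  · exact (key q hq p hp hgt).symm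

lemma sel_cover (hh : 0 < h) {x : Fin n → ℝ} (hx : x ∈ QIco a h) {m : ℕ}
    (hbad : BadP a h g m (idx a h m x)) :
    ∃ p ∈ selP a h g, x ∈ dyc a h p.1 p.2 := by
  classical
  have hex : ∃ m, BadP a h g m (idx a h m x) := ⟨m, hbad⟩
  refine ⟨(Nat.find hex, idx a h (Nat.find hex) x),
    ⟨fun i => idx_lt_of_mem_QIco hh hx i, Nat.find_spec hex, ?_⟩,
    mem_dyc_idx hh (nonneg_of_mem_QIco hx)⟩
  intro m' hm'
  have he : (fun i => idx a h (Nat.find hex) x i / 2 ^ (Nat.find hex - m')) = idx a h m' x := by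
    funext i
    rw [idx_ancestor hh m' (Nat.find hex - m') x i, Nat.add_sub_cancel' hm'.le]
  rw [he]
  exact Nat.find_min hex hm'

lemma measurableSet_dyc (a : Fin n → ℝ) (h : ℝ) (m : ℕ) (j : Fin n → ℕ) :
    MeasurableSet (dyc a h m j) :=
  measurableSet_QIco _ _

lemma volume_dyc (a : Fin n → ℝ) (h : ℝ) (m : ℕ) (j : Fin n → ℕ) :
    volume (dyc a h m j) = ENNReal.ofReal (h / 2 ^ m) ^ n :=
  volume_QIco _ _

lemma volume_dyc_ne_top (a : Fin n → ℝ) (h : ℝ) (m : ℕ) (j : Fin n → ℕ) :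
    volume (dyc a h m j) ≠ ⊤ := by
  rw [volume_dyc]; exact ENNReal.pow_ne_top ENNReal.ofReal_ne_top

lemma dyc_zero (a : Fin n → ℝ) (h : ℝ) : dyc a h 0 (fun _ => 0) = QIco a h := by
  unfold dyc
  have h1 : (fun i => a i + h * ((0:ℕ) : ℝ) / 2 ^ (0:ℕ)) = a := by
    funext i; norm_num
  rw [h1]
  norm_num

lemma volume_dyc_parent {a : Fin n → ℝ} {h : ℝ} (hh : 0 < h) (m : ℕ) (j j' : Fin n → ℕ) :
    volume (dyc a h m j') = 2 ^ n * volume (dyc a h (m + 1) j) := by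
  rw [volume_dyc, volume_dyc]
  have h1 : h / 2 ^ m = 2 * (h / 2 ^ (m + 1)) := by
    rw [pow_succ]; field_simp
  rw [h1, ENNReal.ofReal_mul (by norm_num), mul_pow]
  norm_num

lemma sel_parent_bound (hh : 0 < h)
    (hgQ : ∫⁻ x in QIco a h, ENNReal.ofReal (g x) ≤ volume (QIco a h))
    {p : ℕ × (Fin n → ℕ)} (hp : p ∈ selP a h g) :
    ∫⁻ x in dyc a h p.1 p.2, ENNReal.ofReal (g x) ≤ 2 ^ (n + 1) * volume (dyc a h p.1 p.2) := by
  obtain ⟨m, j⟩ := p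
  obtain ⟨hrange, hbad, hmin⟩ := hp
  dsimp only at hrange hbad hmin ⊢
  cases m with
  | zero =>
    exfalso
    have hj : j = fun _ => 0 := funext fun i => Nat.lt_one_iff.1 (by simpa using hrange i)
    rw [BadP, hj, dyc_zero] at hbad
    have h2 : ∫⁻ x in QIco a h, ENNReal.ofReal (g x) ≤ 2 * volume (QIco a h) :=
      le_trans hgQ (by
        nth_rewrite 1 [← one_mul (volume (QIco a h))]
        exact mul_le_mul_left (by norm_num) _)
    exact absurd (lt_of_lt_of_le hbad h2) (lt_irrefl _)
  | succ m =>
    have hpar := hmin m (Nat.lt_succ_self m)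
    have he : (fun i => j i / 2 ^ (m + 1 - m)) = fun i => j i / 2 := by
      funext i; norm_num
    rw [he, BadP, not_lt] at hpar
    calc ∫⁻ x in dyc a h (m + 1) j, ENNReal.ofReal (g x)
        ≤ ∫⁻ x in dyc a h m (fun i => j i / 2), ENNReal.ofReal (g x) :=
          lintegral_mono_set (dyc_succ_subset hh j)
      _ ≤ 2 * volume (dyc a h m (fun i => j i / 2)) := hpar
      _ = 2 * (2 ^ n * volume (dyc a h (m + 1) j)) := by rw [volume_dyc_parent hh m j]
      _ = 2 ^ (n + 1) * volume (dyc a h (m + 1) j) := by rw [pow_succ]; ring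

lemma sel_sum_bound (hh : 0 < h)
    (hgQ : ∫⁻ x in QIco a h, ENNReal.ofReal (g x) ≤ volume (QIco a h)) :
    ∑' p : selP a h g, volume (dyc a h (p : ℕ × (Fin n → ℕ)).1 (p : ℕ × (Fin n → ℕ)).2)
      ≤ 2⁻¹ * volume (QIco a h) := by
  have hcnt : (selP a h g).Countable := Set.to_countable _
  have hstep : ∀ p : selP a h g, volume (dyc a h (p : ℕ × (Fin n → ℕ)).1 (p : ℕ × (Fin n → ℕ)).2)
      ≤ 2⁻¹ * ∫⁻ x in dyc a h (p : ℕ × (Fin n → ℕ)).1 (p : ℕ × (Fin n → ℕ)).2,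
        ENNReal.ofReal (g x) := by
    rintro ⟨⟨m, j⟩, hrange, hbad, -⟩
    dsimp only
    rw [BadP] at hbad
    calc volume (dyc a h m j) = 2⁻¹ * (2 * volume (dyc a h m j)) := by
          rw [← mul_assoc, ENNReal.inv_mul_cancel (by norm_num) (by norm_num), one_mul]
      _ ≤ 2⁻¹ * ∫⁻ x in dyc a h m j, ENNReal.ofReal (g x) := mul_le_mul_right hbad.le _
  calc ∑' p : selP a h g, volume (dyc a h (p : ℕ × (Fin n → ℕ)).1 (p : ℕ × (Fin n → ℕ)).2)
      ≤ ∑' p : selP a h g, 2⁻¹ * ∫⁻ x in dyc a h (p : ℕ × (Fin n → ℕ)).1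
          (p : ℕ × (Fin n → ℕ)).2, ENNReal.ofReal (g x) := ENNReal.tsum_le_tsum hstep
    _ = 2⁻¹ * ∑' p : selP a h g, ∫⁻ x in dyc a h (p : ℕ × (Fin n → ℕ)).1
          (p : ℕ × (Fin n → ℕ)).2, ENNReal.ofReal (g x) := ENNReal.tsum_mul_left
    _ = 2⁻¹ * ∫⁻ x in ⋃ p ∈ selP a h g, dyc a h p.1 p.2, ENNReal.ofReal (g x) := by
        rw [lintegral_biUnion hcnt (fun p _ => measurableSet_dyc a h p.1 p.2) (sel_disjoint hh g) _]
    _ ≤ 2⁻¹ * ∫⁻ x in QIco a h, ENNReal.ofReal (g x) :=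
        mul_le_mul_right (lintegral_mono_set
          (Set.iUnion₂_subset fun p hp => dyc_subset_QIco hh hp.1)) _
    _ ≤ 2⁻¹ * volume (QIco a h) := mul_le_mul_right hgQ _

lemma ae_good (hh : 0 < h) (hg : LocallyIntegrable g volume) (hg0 : ∀ x, 0 ≤ g x) :
    ∀ᵐ x : Fin n → ℝ, x ∈ QIco a h → (∀ m, ¬ BadP a h g m (idx a h m x)) → g x ≤ 2 := by
  filter_upwards [IsUnifLocDoublingMeasure.ae_tendsto_average_norm_sub
    (μ := (volume : Measure (Fin n → ℝ))) hg 1] with x hx hxQ hgood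
  have hnn : ∀ i, 0 ≤ x i - a i := nonneg_of_mem_QIco hxQ
  set lo : ℕ → Fin n → ℝ := fun m i => a i + h * (idx a h m x i : ℝ) / 2 ^ m with hlo
  set δ : ℕ → ℝ := fun m => h / 2 ^ (m + 1) with hδ
  set w : ℕ → Fin n → ℝ := fun m i => lo m i + δ m with hw
  have hδpos : ∀ m, 0 < δ m := fun m => by rw [hδ]; positivity
  have h2δ : ∀ m, h / 2 ^ m = 2 * δ m := by
    intro m; rw [hδ]; dsimp only; rw [pow_succ]; field_simp
  have hδlim : Tendsto δ atTop (nhdsWithin 0 (Set.Ioi 0)) := by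
    rw [tendsto_nhdsWithin_iff]
    constructor
    · have he : δ = fun m : ℕ => (h / 2) * (1 / 2 : ℝ) ^ m := by
        funext m; rw [hδ]; dsimp only
        rw [one_div, inv_pow, ← div_eq_mul_inv, div_div, pow_succ, mul_comm ((2:ℝ)^m) 2]
      rw [he]
      simpa using (tendsto_pow_atTop_nhds_zero_of_lt_one (by norm_num)
        (by norm_num : (1/2 : ℝ) < 1)).const_mul (h / 2)
    · exact Filter.Eventually.of_forall fun m => hδpos m
  have hmemdyc : ∀ m, x ∈ dyc a h m (idx a h m x) := fun m => mem_dyc_idx hh hnn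
  have hcoord : ∀ m i, lo m i ≤ x i ∧ x i < lo m i + h / 2 ^ m := by
    intro m i
    have := (hmemdyc m) i (Set.mem_univ i)
    exact this
  have hmem : ∀ m, x ∈ Metric.closedBall (w m) (1 * δ m) := by
    intro m
    rw [one_mul, Metric.mem_closedBall, dist_pi_le_iff (hδpos m).le]
    intro i
    rw [Real.dist_eq, hw]
    obtain ⟨h1, h2⟩ := hcoord m i
    rw [h2δ m] at h2
    rw [abs_le]
    constructor <;> dsimp only <;> linarith [hδpos m]
  have hball : ∀ m, Metric.closedBall (w m) (δ m) = QIcc (lo m) (h / 2 ^ m) := by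
    intro m
    rw [closedBall_pi _ (hδpos m).le]
    unfold QIcc
    apply Set.pi_congr rfl
    intro i _
    rw [Real.closedBall_eq_Icc, hw]
    dsimp only
    rw [h2δ m]
    congr 1 <;> ring
  have hInt : ∀ m, IntegrableOn g (QIcc (lo m) (h / 2 ^ m)) volume :=
    fun m => hg.integrableOn_isCompact (isCompact_QIcc _ _)
  have hlim0 : Tendsto (fun m => ⨍ y in Metric.closedBall (w m) (δ m), ‖g y - g x‖) atTop (𝓝 0) :=
    hx w δ hδlim (Filter.Eventually.of_forall hmem)
  have key : ∀ m, |cubeAvg (QIcc (lo m) (h / 2 ^ m)) g - g x|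
      ≤ ⨍ y in Metric.closedBall (w m) (δ m), ‖g y - g x‖ := by
    intro m
    have hpow : (0:ℝ) < h / 2 ^ m := by positivity
    rw [hball m, setAverage_eq, ← cubeAvg_sub_const hpow (hInt m) (g x)]
    have h2 := abs_cubeAvg_le (QIcc (lo m) (h / 2 ^ m)) (fun y => g y - g x)
    simpa [cubeAvg, smul_eq_mul, Real.norm_eq_abs, measureReal_def] using h2
  have hlim : Tendsto (fun m => cubeAvg (QIcc (lo m) (h / 2 ^ m)) g) atTop (𝓝 (g x)) := by
    rw [tendsto_iff_dist_tendsto_zero]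
    simp only [Real.dist_eq]
    exact squeeze_zero (fun m => abs_nonneg _) key hlim0
  refine le_of_tendsto hlim (Filter.Eventually.of_forall fun m => ?_)
  have hnb := hgood m
  rw [BadP, not_lt] at hnb
  have hpow : (0:ℝ) < h / 2 ^ m := by positivity
  apply cubeAvg_le_of_lintegral_le hpow (hInt m) hg0 (by norm_num)
  have hid : QIco (lo m) (h / 2 ^ m) = dyc a h m (idx a h m x) := rfl
  rw [hid, (by norm_num : ENNReal.ofReal (2:ℝ) = 2)]
  exact hnb

lemma locallyIntegrable_abs_sub {f : (Fin n → ℝ) → ℝ} (hf : LocallyIntegrable f volume) (c : ℝ) :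
    LocallyIntegrable (fun x => |f x - c|) volume := by
  rw [MeasureTheory.locallyIntegrable_iff]
  intro K hK
  exact ((hf.integrableOn_isCompact hK).sub
    (integrableOn_const hK.measure_lt_top.ne)).abs

lemma integrableOn_abs_sub {f : (Fin n → ℝ) → ℝ} (hf : LocallyIntegrable f volume) (c : ℝ)
    (a : Fin n → ℝ) (h : ℝ) : IntegrableOn (fun x => |f x - c|) (QIcc a h) volume :=
  (locallyIntegrable_abs_sub hf c).integrableOn_isCompact (isCompact_QIcc a h)

theorem JN_dist {f : (Fin n → ℝ) → ℝ} (hfm : Measurable f) (hf : LocallyIntegrable f volume)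
    (hbmo : BmoLe f 1) :
    ∀ (k : ℕ) (a : Fin n → ℝ) (h : ℝ), 0 < h →
      volume {x | x ∈ QIco a h ∧ 2 + (k : ℝ) * 2 ^ (n + 1) < |f x - cubeAvg (QIcc a h) f|}
        ≤ 2⁻¹ ^ k * volume (QIcc a h) := by
  intro k
  induction k with
  | zero =>
    intro a h hh
    set c := cubeAvg (QIcc a h) f with hc
    set g : (Fin n → ℝ) → ℝ := fun x => |f x - c| with hgdef
    have hg0 : ∀ x, 0 ≤ g x := fun x => abs_nonneg _
    have hgInt : IntegrableOn g (QIcc a h) volume := integrableOn_abs_sub hf c a h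
    have hosc : cubeAvg (QIcc a h) g ≤ 1 := hbmo (QIcc a h) ⟨a, h, hh, rfl⟩
    have hgQ : ∫⁻ x in QIco a h, ENNReal.ofReal (g x) ≤ volume (QIco a h) := by
      have := lintegral_le_of_cubeAvg_le hh hgInt hg0 hosc
      simpa using this
    have hsub : {x | x ∈ QIco a h ∧ 2 + ((0:ℕ) : ℝ) * 2 ^ (n + 1) < |f x - cubeAvg (QIcc a h) f|}
        ⊆ {x | (2 : ℝ≥0∞) ≤ ENNReal.ofReal (g x)} ∩ QIco a h := by
      rintro x ⟨hx1, hx2⟩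
      refine ⟨?_, hx1⟩
      have h2 : (2:ℝ) ≤ g x := by
        rw [hgdef]
        dsimp only
        push_cast at hx2
        linarith
      calc (2 : ℝ≥0∞) = ENNReal.ofReal 2 := by norm_num
        _ ≤ ENNReal.ofReal (g x) := ENNReal.ofReal_le_ofReal h2
    calc volume {x | x ∈ QIco a h ∧ 2 + ((0:ℕ):ℝ) * 2 ^ (n + 1) < |f x - cubeAvg (QIcc a h) f|}
        ≤ volume ({x | (2 : ℝ≥0∞) ≤ ENNReal.ofReal (g x)} ∩ QIco a h) := measure_mono hsub
      _ = (volume.restrict (QIco a h)) {x | (2 : ℝ≥0∞) ≤ ENNReal.ofReal (g x)} :=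
          (Measure.restrict_apply' (measurableSet_QIco a h)).symm
      _ = 2⁻¹ * (2 * (volume.restrict (QIco a h)) {x | (2:ℝ≥0∞) ≤ ENNReal.ofReal (g x)}) := by
          rw [← mul_assoc, ENNReal.inv_mul_cancel (by norm_num) (by norm_num), one_mul]
      _ ≤ 2⁻¹ * ∫⁻ x in QIco a h, ENNReal.ofReal (g x) := by
          refine mul_le_mul_right ?_ _
          exact mul_meas_ge_le_lintegral₀
            (by
              apply ENNReal.measurable_ofReal.comp_aemeasurable
              exact ((hfm.sub measurable_const).abs).aemeasurable) 2
      _ ≤ 2⁻¹ * volume (QIco a h) := mul_le_mul_right hgQ _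
      _ = 2⁻¹ ^ 0 * 2⁻¹ * volume (QIcc a h) := by rw [volume_QIco, volume_QIcc]; ring
      _ ≤ 2⁻¹ ^ 0 * volume (QIcc a h) := by
          rw [pow_zero, one_mul, one_mul]
          exact mul_le_of_le_one_left zero_le (by norm_num)
  | succ k ih =>
    intro a h hh
    set c := cubeAvg (QIcc a h) f with hc
    set g : (Fin n → ℝ) → ℝ := fun x => |f x - c| with hgdef
    have hg0 : ∀ x, 0 ≤ g x := fun x => abs_nonneg _
    have hgInt : IntegrableOn g (QIcc a h) volume := integrableOn_abs_sub hf c a h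
    have hgLoc : LocallyIntegrable g volume := locallyIntegrable_abs_sub hf c
    have hosc : cubeAvg (QIcc a h) g ≤ 1 := hbmo (QIcc a h) ⟨a, h, hh, rfl⟩
    have hgQ : ∫⁻ x in QIco a h, ENNReal.ofReal (g x) ≤ volume (QIco a h) := by
      have := lintegral_le_of_cubeAvg_le hh hgInt hg0 hosc
      simpa using this
    have hcnt : (selP a h g).Countable := Set.to_countable _
    -- average of f over a selected cube is within 2^(n+1) of c
    have havg : ∀ p ∈ selP a h g,
        |cubeAvg (QIcc (fun i => a i + h * (p.2 i : ℝ) / 2 ^ p.1) (h / 2 ^ p.1)) f - c|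
          ≤ 2 ^ (n + 1) := by
      intro p hp
      set a' : Fin n → ℝ := fun i => a i + h * (p.2 i : ℝ) / 2 ^ p.1 with ha'
      have hh' : (0:ℝ) < h / 2 ^ p.1 := by positivity
      have hInt' : IntegrableOn f (QIcc a' (h / 2 ^ p.1)) volume :=
        hf.integrableOn_isCompact (isCompact_QIcc _ _)
      have e1 : cubeAvg (QIcc a' (h / 2 ^ p.1)) f - c
          = cubeAvg (QIcc a' (h / 2 ^ p.1)) (fun x => f x - c) :=
        (cubeAvg_sub_const hh' hInt' c).symm
      rw [e1]
      have e2 := abs_cubeAvg_le (QIcc a' (h / 2 ^ p.1)) (fun x => f x - c)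
      refine le_trans e2 ?_
      have e3 : QIco a' (h / 2 ^ p.1) = dyc a h p.1 p.2 := rfl
      apply cubeAvg_le_of_lintegral_le hh' (integrableOn_abs_sub hf c a' _) hg0 (by positivity)
      rw [e3]
      refine le_trans (sel_parent_bound hh hgQ hp) ?_
      rw [show ENNReal.ofReal ((2:ℝ) ^ (n+1)) = 2 ^ (n + 1) by
        rw [ENNReal.ofReal_pow (by norm_num)]; norm_num]
    -- a.e. covering
    have hcov := ae_good (a := a) (g := g) hh hgLoc hg0
    rw [Filter.eventually_iff] at hcov
    set E := {x | x ∈ QIco a h → (∀ m, ¬BadP a h g m (idx a h m x)) → g x ≤ 2} with hE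
    have hsub : ∀ x ∈ E, x ∈ QIco a h →
        2 + ((k+1:ℕ) : ℝ) * 2 ^ (n + 1) < g x →
        x ∈ ⋃ p ∈ selP a h g, (dyc a h p.1 p.2 ∩
          {y | 2 + (k : ℝ) * 2 ^ (n + 1)
            < |f y - cubeAvg (QIcc (fun i => a i + h * (p.2 i : ℝ) / 2 ^ p.1) (h / 2 ^ p.1)) f|}) := by
      intro x hxE hxQ hgx
      have hΔ : (0:ℝ) < 2 ^ (n + 1) := by positivity
      have hk1 : ((k+1:ℕ):ℝ) = (k:ℝ) + 1 := by push_cast; ring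
      have hbad : ∃ m, BadP a h g m (idx a h m x) := by
        by_contra hno
        push_neg at hno
        have := hxE hxQ hno
        have hcast : (0:ℝ) ≤ ((k+1:ℕ):ℝ) * 2 ^ (n+1) := by positivity
        linarith
      obtain ⟨m, hm⟩ := hbad
      obtain ⟨p, hp, hxp⟩ := sel_cover hh hxQ hm
      refine Set.mem_biUnion hp ⟨hxp, ?_⟩
      have h1 := havg p hp
      set cp := cubeAvg (QIcc (fun i => a i + h * (p.2 i : ℝ) / 2 ^ p.1) (h / 2 ^ p.1)) f
      have htri : g x ≤ |f x - cp| + |cp - c| := by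
        rw [hgdef]
        dsimp only
        calc |f x - c| = |(f x - cp) + (cp - c)| := by ring_nf
          _ ≤ |f x - cp| + |cp - c| := abs_add_le _ _
      rw [Set.mem_setOf_eq]
      rw [hk1] at hgx
      linarith
    calc volume {x | x ∈ QIco a h ∧ 2 + ((k+1:ℕ) : ℝ) * 2 ^ (n + 1)
          < |f x - cubeAvg (QIcc a h) f|}
        ≤ volume (⋃ p ∈ selP a h g, (dyc a h p.1 p.2 ∩
            {y | 2 + (k : ℝ) * 2 ^ (n + 1) < |f y - cubeAvg
              (QIcc (fun i => a i + h * (p.2 i : ℝ) / 2 ^ p.1) (h / 2 ^ p.1)) f|})) := by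
          apply measure_mono_ae
          filter_upwards [hcov] with x hxE hxS
          exact hsub x hxE hxS.1 hxS.2
      _ ≤ ∑' p : selP a h g, volume ((dyc a h (p : ℕ × (Fin n → ℕ)).1 (p : ℕ × (Fin n → ℕ)).2 ∩
            {y | 2 + (k : ℝ) * 2 ^ (n + 1) < |f y - cubeAvg
              (QIcc (fun i => a i + h * ((p : ℕ × (Fin n → ℕ)).2 i : ℝ) / 2 ^ (p : ℕ × (Fin n → ℕ)).1)
                (h / 2 ^ (p : ℕ × (Fin n → ℕ)).1)) f|})) := measure_biUnion_le _ hcnt _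
      _ ≤ ∑' p : selP a h g, 2⁻¹ ^ k * volume (dyc a h (p : ℕ × (Fin n → ℕ)).1
            (p : ℕ × (Fin n → ℕ)).2) := by
          apply ENNReal.tsum_le_tsum
          rintro ⟨p, hp⟩
          dsimp only
          have hh' : (0:ℝ) < h / 2 ^ p.1 := by positivity
          have hib := ih (fun i => a i + h * (p.2 i : ℝ) / 2 ^ p.1) (h / 2 ^ p.1) hh'
          refine le_trans (le_trans (measure_mono ?_) hib) ?_
          · rintro x ⟨hx1, hx2⟩
            exact ⟨hx1, hx2⟩
          · rw [show volume (QIcc (fun i => a i + h * (p.2 i : ℝ) / 2 ^ p.1) (h / 2 ^ p.1))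
              = volume (dyc a h p.1 p.2) from by
                rw [volume_QIcc, volume_dyc]]
      _ = 2⁻¹ ^ k * ∑' p : selP a h g, volume (dyc a h (p : ℕ × (Fin n → ℕ)).1
            (p : ℕ × (Fin n → ℕ)).2) := ENNReal.tsum_mul_left
      _ ≤ 2⁻¹ ^ k * (2⁻¹ * volume (QIco a h)) := mul_le_mul_right (sel_sum_bound hh hgQ) _
      _ = 2⁻¹ ^ (k + 1) * volume (QIcc a h) := by
          rw [volume_QIco, volume_QIcc, pow_succ]; ring

def c0 (n : ℕ) : ℝ := Real.log 2 / (2 * 2 ^ (n + 1))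

lemma c0_pos (n : ℕ) : 0 < c0 n := by
  apply div_pos (Real.log_pos (by norm_num))
  positivity

lemma c0_mul_delta (n : ℕ) : c0 n * 2 ^ (n + 1) = Real.log 2 / 2 := by
  rw [c0]
  have : ((2:ℝ) ^ (n + 1)) ≠ 0 := by positivity
  field_simp

lemma exp_c0_lt (n : ℕ) : Real.exp (c0 n * 2 ^ (n + 1)) < 2 := by
  rw [c0_mul_delta]
  have h1 : Real.log 2 / 2 < Real.log 2 := by
    have := Real.log_pos (by norm_num : (1:ℝ) < 2)
    linarith
  calc Real.exp (Real.log 2 / 2) < Real.exp (Real.log 2) := Real.exp_lt_exp.2 h1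
    _ = 2 := Real.exp_log (by norm_num)

def rr (n : ℕ) : ℝ≥0∞ := ENNReal.ofReal (Real.exp (c0 n * 2 ^ (n + 1))) * 2⁻¹

lemma rr_lt_one (n : ℕ) : rr n < 1 := by
  rw [rr]
  have h1 : ENNReal.ofReal (Real.exp (c0 n * 2 ^ (n + 1))) < 2 := by
    calc ENNReal.ofReal (Real.exp (c0 n * 2 ^ (n + 1))) < ENNReal.ofReal 2 :=
      (ENNReal.ofReal_lt_ofReal_iff (by norm_num)).2 (exp_c0_lt n)
    _ = 2 := by norm_num
  calc ENNReal.ofReal (Real.exp (c0 n * 2 ^ (n + 1))) * 2⁻¹ < 2 * 2⁻¹ :=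
        ENNReal.mul_lt_mul_left (by norm_num) (by norm_num) h1
    _ = 1 := by
        rw [ENNReal.mul_inv_cancel] <;> norm_num

def Mc (n : ℕ) : ℝ≥0∞ :=
  ENNReal.ofReal (Real.exp (c0 n * (2 + 2 ^ (n + 1)))) +
    ENNReal.ofReal (Real.exp (c0 n * (2 + 2 * 2 ^ (n + 1)))) * (1 - rr n)⁻¹

lemma Mc_ne_top (n : ℕ) : Mc n ≠ ⊤ := by
  rw [Mc]
  apply ENNReal.add_ne_top.2
  constructor
  · exact ENNReal.ofReal_ne_top
  · apply ENNReal.mul_ne_top ENNReal.ofReal_ne_top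
    rw [ENNReal.inv_ne_top]
    have h1 : 0 < 1 - rr n := tsub_pos_iff_lt.2 (rr_lt_one n)
    exact h1.ne'

theorem JN_exp {f : (Fin n → ℝ) → ℝ} (hfm : Measurable f) (hf : LocallyIntegrable f volume)
    (hbmo : BmoLe f 1) (a : Fin n → ℝ) {h : ℝ} (hh : 0 < h) :
    ∫⁻ x in QIcc a h, ENNReal.ofReal (Real.exp (c0 n * |f x - cubeAvg (QIcc a h) f|))
      ≤ Mc n * volume (QIcc a h) := by
  classical
  have hΔ : (0:ℝ) < 2 ^ (n + 1) := by positivity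
  have hc0 := c0_pos n
  set c := cubeAvg (QIcc a h) f with hc
  set g : (Fin n → ℝ) → ℝ := fun x => |f x - c| with hgdef
  have hg0 : ∀ x, 0 ≤ g x := fun x => abs_nonneg _
  have hgm : Measurable g := (hfm.sub measurable_const).abs
  set S : ℕ → Set (Fin n → ℝ) := fun k => {y | 2 + (k:ℝ) * 2 ^ (n + 1) < g y} with hSdef
  have hSm : ∀ k, MeasurableSet (S k) := fun k => measurableSet_lt measurable_const hgm
  set A : ℝ≥0∞ := ENNReal.ofReal (Real.exp (c0 n * (2 + 2 ^ (n + 1)))) with hA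
  set B : ℝ≥0∞ := ENNReal.ofReal (Real.exp (c0 n * (2 + 2 * 2 ^ (n + 1)))) with hB
  have hcoef : ∀ k : ℕ, ENNReal.ofReal (Real.exp (c0 n * (2 + (k:ℝ) * 2 ^ (n+1) + 2 * 2 ^ (n+1))))
      = B * ENNReal.ofReal (Real.exp (c0 n * 2 ^ (n+1))) ^ k := by
    intro k
    rw [hB, ← ENNReal.ofReal_pow (Real.exp_nonneg _), ← Real.exp_nat_mul,
      ← ENNReal.ofReal_mul (Real.exp_nonneg _), ← Real.exp_add]
    congr 2
    ring
  have hpt : ∀ x, ENNReal.ofReal (Real.exp (c0 n * g x))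
      ≤ A + ∑' k : ℕ, ENNReal.ofReal (Real.exp (c0 n * (2 + (k:ℝ) * 2 ^ (n+1) + 2 * 2 ^ (n+1))))
          * (S k).indicator (1 : (Fin n → ℝ) → ℝ≥0∞) x := by
    intro x
    rcases le_or_gt (g x) (2 + 2 ^ (n+1)) with hle | hlt
    · refine le_trans ?_ le_self_add
      apply ENNReal.ofReal_le_ofReal
      apply Real.exp_le_exp.2
      exact mul_le_mul_of_nonneg_left hle hc0.le
    · set P : ℕ → Prop := fun k => 2 + (k:ℝ) * 2 ^ (n+1) < g x with hP
      have hP0 : P 0 := by rw [hP]; dsimp only; norm_num; nlinarith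
      set b : ℕ := ⌈g x / 2 ^ (n+1)⌉₊ with hb
      set k := Nat.findGreatest P b with hk
      have hPk : P k := Nat.findGreatest_spec (Nat.zero_le b) hP0
      have hub : g x ≤ 2 + ((k:ℝ) + 1) * 2 ^ (n+1) := by
        rcases eq_or_lt_of_le (Nat.findGreatest_le (P := P) b) with heq | hltb
        · have h1 : g x / 2 ^ (n+1) ≤ (b:ℝ) := Nat.le_ceil _
          rw [div_le_iff₀ hΔ] at h1
          have h2 : (b:ℝ) = (k:ℝ) := by exact_mod_cast congrArg Nat.cast heq.symm
          nlinarith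
        · have h3 : ¬ P (k + 1) :=
            Nat.findGreatest_is_greatest (Nat.lt_succ_self k) (Nat.succ_le_of_lt hltb)
          rw [hP] at h3
          push_neg at h3
          push_cast at h3
          linarith
      have hxS : x ∈ S k := hPk
      calc ENNReal.ofReal (Real.exp (c0 n * g x))
          ≤ ENNReal.ofReal (Real.exp (c0 n * (2 + (k:ℝ) * 2 ^ (n+1) + 2 * 2 ^ (n+1)))) := by
            apply ENNReal.ofReal_le_ofReal
            apply Real.exp_le_exp.2
            apply mul_le_mul_of_nonneg_left _ hc0.le
            linarith
        _ = ENNReal.ofReal (Real.exp (c0 n * (2 + (k:ℝ) * 2 ^ (n+1) + 2 * 2 ^ (n+1))))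
              * (S k).indicator (1 : (Fin n → ℝ) → ℝ≥0∞) x := by
            rw [Set.indicator_of_mem hxS, Pi.one_apply, mul_one]
        _ ≤ ∑' k' : ℕ, ENNReal.ofReal (Real.exp (c0 n * (2 + (k':ℝ) * 2 ^ (n+1) + 2 * 2 ^ (n+1))))
              * (S k').indicator (1 : (Fin n → ℝ) → ℝ≥0∞) x := ENNReal.le_tsum k
        _ ≤ _ := le_add_self
  rw [show (∫⁻ x in QIcc a h, ENNReal.ofReal (Real.exp (c0 n * |f x - cubeAvg (QIcc a h) f|)))
      = ∫⁻ x in QIco a h, ENNReal.ofReal (Real.exp (c0 n * g x)) from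
    (setLIntegral_congr (QIco_ae_eq a h)).symm]
  calc ∫⁻ x in QIco a h, ENNReal.ofReal (Real.exp (c0 n * g x))
      ≤ ∫⁻ x in QIco a h, (A + ∑' k : ℕ,
          ENNReal.ofReal (Real.exp (c0 n * (2 + (k:ℝ) * 2 ^ (n+1) + 2 * 2 ^ (n+1))))
            * (S k).indicator (1 : (Fin n → ℝ) → ℝ≥0∞) x) := lintegral_mono hpt
    _ = A * volume (QIco a h) + ∑' k : ℕ,
          ENNReal.ofReal (Real.exp (c0 n * (2 + (k:ℝ) * 2 ^ (n+1) + 2 * 2 ^ (n+1))))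
            * volume (S k ∩ QIco a h) := by
        rw [lintegral_add_left measurable_const, setLIntegral_const]
        congr 1
        rw [lintegral_tsum fun k => ((measurable_one.indicator (hSm k)).const_mul _).aemeasurable]
        congr 1
        funext k
        rw [lintegral_const_mul _ (measurable_one.indicator (hSm k)),
          lintegral_indicator (hSm k)]
        simp only [Pi.one_apply]
        rw [setLIntegral_one, Measure.restrict_apply (hSm k)]
    _ ≤ A * volume (QIco a h) + ∑' k : ℕ,
          ENNReal.ofReal (Real.exp (c0 n * (2 + (k:ℝ) * 2 ^ (n+1) + 2 * 2 ^ (n+1))))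
            * (2⁻¹ ^ k * volume (QIcc a h)) := by
        apply add_le_add_right
        apply ENNReal.tsum_le_tsum
        intro k
        apply mul_le_mul_right
        refine le_trans (le_of_eq ?_) (JN_dist hfm hf hbmo k a h hh)
        congr 1
        ext x
        rw [Set.mem_inter_iff, Set.mem_setOf_eq, Set.mem_setOf_eq, and_comm]
    _ = A * volume (QIcc a h) + B * volume (QIcc a h) * ∑' k : ℕ, rr n ^ k := by
        rw [volume_QIco, ← volume_QIcc (a := a)]
        congr 1
        rw [← ENNReal.tsum_mul_left]
        congr 1
        funext k
        rw [hcoef k, rr]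
        rw [mul_pow]
        ring
    _ = (A + B * (1 - rr n)⁻¹) * volume (QIcc a h) := by
        rw [ENNReal.tsum_geometric, add_mul]
        ring
    _ = Mc n * volume (QIcc a h) := by rw [Mc, hA, hB]

lemma locallyIntegrable_congr' {u v : (Fin n → ℝ) → ℝ} (hu : LocallyIntegrable u volume)
    (huv : u =ᵐ[volume] v) : LocallyIntegrable v volume := by
  rw [MeasureTheory.locallyIntegrable_iff] at hu ⊢
  intro K hK
  exact (hu K hK).congr (ae_restrict_of_ae huv)

lemma cubeAvg_congr_ae {Q : Set (Fin n → ℝ)} {u v : (Fin n → ℝ) → ℝ} (huv : u =ᵐ[volume] v) :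
    cubeAvg Q u = cubeAvg Q v := by
  unfold cubeAvg
  rw [integral_congr_ae (ae_restrict_of_ae huv)]

lemma bmoLe_scale {f : (Fin n → ℝ) → ℝ} {B : ℝ} (hB : 0 < B) (hbmo : BmoLe f B) :
    BmoLe (fun x => B⁻¹ * f x) 1 := by
  intro Q hQ
  have h1 : cubeAvg Q (fun x => B⁻¹ * f x) = B⁻¹ * cubeAvg Q f := cubeAvg_const_mul Q B⁻¹ f
  have h2 : bmoOsc Q (fun x => B⁻¹ * f x) = B⁻¹ * bmoOsc Q f := by
    rw [bmoOsc, bmoOsc, ← cubeAvg_const_mul]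
    congr 1
    funext x
    rw [h1, ← mul_sub, abs_mul, abs_of_pos (inv_pos.2 hB)]
  rw [h2]
  calc B⁻¹ * bmoOsc Q f ≤ B⁻¹ * B := mul_le_mul_of_nonneg_left (hbmo Q hQ) (inv_pos.2 hB).le
    _ = 1 := inv_mul_cancel₀ hB.ne'

lemma exp_lintegral_bound {f : (Fin n → ℝ) → ℝ} (hfm : Measurable f)
    (hf : LocallyIntegrable f volume) {B : ℝ} (hB : 0 < B) (hbmo : BmoLe f B)
    {μ : ℝ} (hμ : |μ| ≤ c0 n / B) (a : Fin n → ℝ) {h : ℝ} (hh : 0 < h) :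
    ∫⁻ x in QIcc a h, ENNReal.ofReal (Real.exp (μ * (f x - cubeAvg (QIcc a h) f)))
      ≤ Mc n * volume (QIcc a h) := by
  set u : (Fin n → ℝ) → ℝ := fun x => B⁻¹ * f x with hu
  have hum : Measurable u := hfm.const_mul B⁻¹
  have huLoc : LocallyIntegrable u volume := by
    rw [MeasureTheory.locallyIntegrable_iff] at hf ⊢
    intro K hK
    exact (hf K hK).const_mul _
  have hubmo : BmoLe u 1 := bmoLe_scale hB hbmo
  have key : ∀ x, μ * (f x - cubeAvg (QIcc a h) f) ≤ c0 n * |u x - cubeAvg (QIcc a h) u| := by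
    intro x
    have h1 : cubeAvg (QIcc a h) u = B⁻¹ * cubeAvg (QIcc a h) f := cubeAvg_const_mul _ _ _
    have h2 : |u x - cubeAvg (QIcc a h) u| = B⁻¹ * |f x - cubeAvg (QIcc a h) f| := by
      rw [h1, hu]
      dsimp only
      rw [← mul_sub, abs_mul, abs_of_pos (inv_pos.2 hB)]
    rw [h2]
    have h3 : μ * (f x - cubeAvg (QIcc a h) f) ≤ |μ| * |f x - cubeAvg (QIcc a h) f| :=
      le_trans (le_abs_self _) (le_of_eq (abs_mul _ _))
    refine le_trans h3 ?_
    refine le_trans (mul_le_mul_of_nonneg_right hμ (abs_nonneg _)) (le_of_eq ?_)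
    field_simp
  calc ∫⁻ x in QIcc a h, ENNReal.ofReal (Real.exp (μ * (f x - cubeAvg (QIcc a h) f)))
      ≤ ∫⁻ x in QIcc a h, ENNReal.ofReal (Real.exp (c0 n * |u x - cubeAvg (QIcc a h) u|)) :=
        lintegral_mono fun x => ENNReal.ofReal_le_ofReal (Real.exp_le_exp.2 (key x))
    _ ≤ Mc n * volume (QIcc a h) := JN_exp hum huLoc hubmo a hh

lemma cube_facts {f : (Fin n → ℝ) → ℝ} (hfm : Measurable f)
    (hf : LocallyIntegrable f volume) {B : ℝ} (hB : 0 < B) (hbmo : BmoLe f B)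
    {μ : ℝ} (hμ : |μ| ≤ c0 n / B) (a : Fin n → ℝ) {h : ℝ} (hh : 0 < h) :
    IntegrableOn (fun x => Real.exp (μ * f x)) (QIcc a h) volume ∧
      cubeAvg (QIcc a h) (fun x => Real.exp (μ * f x))
        ≤ Real.exp (μ * cubeAvg (QIcc a h) f) * (Mc n).toReal := by
  set c := cubeAvg (QIcc a h) f with hc
  have hlin := exp_lintegral_bound hfm hf hB hbmo hμ a hh
  have hfin : (∫⁻ x in QIcc a h, ENNReal.ofReal (Real.exp (μ * (f x - c)))) < ⊤ :=
    lt_of_le_of_lt hlin (ENNReal.mul_lt_top (Mc_ne_top n).lt_top (volume_QIcc_ne_top a h).lt_top)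
  have hmeas : Measurable fun x => Real.exp (μ * (f x - c)) :=
    (Real.measurable_exp.comp ((hfm.sub measurable_const).const_mul μ))
  have hint1 : IntegrableOn (fun x => Real.exp (μ * (f x - c))) (QIcc a h) volume := by
    refine ⟨hmeas.aestronglyMeasurable, ?_⟩
    rw [hasFiniteIntegral_iff_ofReal (Filter.Eventually.of_forall fun x => (Real.exp_pos _).le)]
    exact hfin
  have hIeq : ∫ x in QIcc a h, Real.exp (μ * (f x - c))
      = (∫⁻ x in QIcc a h, ENNReal.ofReal (Real.exp (μ * (f x - c)))).toReal := by
    rw [integral_eq_lintegral_of_nonneg_ae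
      (Filter.Eventually.of_forall fun x => (Real.exp_pos _).le) hmeas.aestronglyMeasurable]
  have hIle : ∫ x in QIcc a h, Real.exp (μ * (f x - c)) ≤ (Mc n).toReal * h ^ n := by
    rw [hIeq]
    calc (∫⁻ x in QIcc a h, ENNReal.ofReal (Real.exp (μ * (f x - c)))).toReal
        ≤ (Mc n * volume (QIcc a h)).toReal := ENNReal.toReal_mono
          (ENNReal.mul_ne_top (Mc_ne_top n) (volume_QIcc_ne_top a h)) hlin
      _ = (Mc n).toReal * h ^ n := by
          rw [ENNReal.toReal_mul, volume_QIcc_toReal a hh.le]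
  have hsplit : (fun x => Real.exp (μ * f x))
      = fun x => Real.exp (μ * c) * Real.exp (μ * (f x - c)) := by
    funext x
    rw [← Real.exp_add]
    congr 1
    ring
  constructor
  · rw [hsplit]
    exact hint1.const_mul _
  · rw [hsplit]
    unfold cubeAvg
    rw [integral_const_mul, volume_QIcc_toReal a hh.le]
    rw [inv_mul_le_iff₀ (by positivity : (0:ℝ) < h ^ n)]
    calc Real.exp (μ * c) * ∫ x in QIcc a h, Real.exp (μ * (f x - c))
        ≤ Real.exp (μ * c) * ((Mc n).toReal * h ^ n) :=
          mul_le_mul_of_nonneg_left hIle (Real.exp_pos _).le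
      _ = h ^ n * (Real.exp (μ * c) * (Mc n).toReal) := by ring

lemma compact_subset_cube {K : Set (Fin n → ℝ)} (hK : IsCompact K) :
    ∃ (a : Fin n → ℝ) (h : ℝ), 0 < h ∧ K ⊆ QIcc a h := by
  obtain ⟨r, hr⟩ := (Metric.isBounded_iff_subset_closedBall 0).1 hK.isBounded
  refine ⟨fun _ => -(max r 1), 2 * max r 1, by positivity, ?_⟩
  intro x hx
  have hd := hr hx
  rw [Metric.mem_closedBall] at hd
  intro i _
  have h1 : dist (x i) 0 ≤ dist x 0 := dist_le_pi_dist x 0 i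
  have h2 : |x i| ≤ max r 1 := by
    rw [Real.dist_eq, sub_zero] at h1
    exact le_trans h1 (le_trans hd (le_max_left r 1))
  obtain ⟨h3, h4⟩ := abs_le.1 h2
  show x i ∈ Set.Icc (-(max r 1)) (-(max r 1) + 2 * max r 1)
  rw [Set.mem_Icc]
  constructor
  · linarith
  · linarith

end JN

open JN

/-- **John–Nirenberg.** For every `n ≥ 1` and `1 < p < ∞` there is a
constant `c > 0` depending only on `n` and `p` such that: if `f` is locally integrable
with `0 < ‖f‖_* < ∞`, then `e^{λf}` is an `A_p` weight for all `0 < λ ≤ c/‖f‖_*`. -/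
theorem exp_lambda_bmo_Ap {n : ℕ} (hn : 1 ≤ n) (p : ℝ) (hp : 1 < p) :
    ∃ c : ℝ, 0 < c ∧
      ∀ f : (Fin n → ℝ) → ℝ, LocallyIntegrable f volume →
        (∃ C : ℝ, BmoLe f C) → 0 < bmoNorm f →
        ∀ lam : ℝ, 0 < lam → lam ≤ c / bmoNorm f →
          IsApWeight p (fun x => Real.exp (lam * f x)) := by
  have hp1 : (0:ℝ) < p - 1 := sub_pos.2 hp
  have hp0 : p - 1 ≠ 0 := hp1.ne'
  have hmin : (0:ℝ) < min 1 (p - 1) := lt_min one_pos hp1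
  refine ⟨c0 n * min 1 (p - 1), mul_pos (c0_pos n) hmin, ?_⟩
  intro f hf hex hpos lam hlam hlamle
  obtain ⟨C, hC⟩ := hex
  set B := bmoNorm f with hBdef
  have hB : 0 < B := hpos
  have hbmoB : BmoLe f B := by
    intro Q hQ
    have hbdd : BddAbove {r : ℝ | ∃ Q : Set (Fin n → ℝ), IsCube Q ∧ r = bmoOsc Q f} := by
      refine ⟨C, ?_⟩
      rintro r ⟨Q', hQ', rfl⟩
      exact hC Q' hQ'
    exact le_csSup hbdd ⟨Q, hQ, rfl⟩
  have hsm := hf.aestronglyMeasurable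
  set f' : (Fin n → ℝ) → ℝ := hsm.mk f with hf'def
  have hff' : f =ᵐ[volume] f' := hsm.ae_eq_mk
  have hf'm : Measurable f' := hsm.stronglyMeasurable_mk.measurable
  have hf'loc : LocallyIntegrable f' volume := locallyIntegrable_congr' hf hff'
  have hbmoB' : BmoLe f' B := by
    intro Q hQ
    have heq : bmoOsc Q f' = bmoOsc Q f := by
      rw [bmoOsc, bmoOsc, ← cubeAvg_congr_ae (Q := Q) hff']
      exact (cubeAvg_congr_ae (hff'.mono fun x hx => by rw [hx])).symm
    rw [heq]
    exact hbmoB Q hQ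
  have hlamB : lam * B ≤ c0 n * min 1 (p - 1) := by
    rw [← le_div_iff₀ hB]
    exact hlamle
  have hμ1 : |lam| ≤ c0 n / B := by
    rw [abs_of_pos hlam, le_div_iff₀ hB]
    calc lam * B ≤ c0 n * min 1 (p - 1) := hlamB
      _ ≤ c0 n * 1 := mul_le_mul_of_nonneg_left (min_le_left _ _) (c0_pos n).le
      _ = c0 n := mul_one _
  have hEeq : 1 - p / (p - 1) = -(1 / (p - 1)) := by field_simp; ring
  set μ2 : ℝ := lam * (1 - p / (p - 1)) with hμ2def
  have hμ2 : |μ2| ≤ c0 n / B := by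
    rw [hμ2def, hEeq, abs_mul, abs_of_pos hlam, abs_neg,
      abs_of_pos (by positivity : (0:ℝ) < 1 / (p - 1))]
    rw [mul_one_div, div_le_div_iff₀ hp1 hB]
    calc lam * B ≤ c0 n * min 1 (p - 1) := hlamB
      _ ≤ c0 n * (p - 1) := mul_le_mul_of_nonneg_left (min_le_right _ _) (c0_pos n).le
  set w : (Fin n → ℝ) → ℝ := fun x => Real.exp (lam * f x) with hwdef
  set w' : (Fin n → ℝ) → ℝ := fun x => Real.exp (lam * f' x) with hw'def
  have hww' : w =ᵐ[volume] w' := hff'.mono fun x hx => by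
    rw [hwdef, hw'def]; dsimp only; rw [hx]
  set v : (Fin n → ℝ) → ℝ := fun x => Real.exp (μ2 * f x) with hvdef
  set v' : (Fin n → ℝ) → ℝ := fun x => Real.exp (μ2 * f' x) with hv'def
  have hvv' : v =ᵐ[volume] v' := hff'.mono fun x hx => by
    rw [hvdef, hv'def]; dsimp only; rw [hx]
  have hrw : (fun x => w x ^ (1 - p / (p - 1))) = v := by
    funext x
    rw [hwdef, hvdef]
    dsimp only
    rw [← Real.exp_mul]
    congr 1
    ring
  have hloc : ∀ {μ : ℝ}, |μ| ≤ c0 n / B →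
      LocallyIntegrable (fun x => Real.exp (μ * f' x)) volume := by
    intro μ hμ
    rw [MeasureTheory.locallyIntegrable_iff]
    intro K hK
    obtain ⟨aK, hK', hhK, hsub⟩ := compact_subset_cube hK
    exact ((cube_facts hf'm hf'loc hB hbmoB' hμ aK hhK).1).mono_set hsub
  have hwloc : LocallyIntegrable w volume := locallyIntegrable_congr' (hloc hμ1) hww'.symm
  have hvloc : LocallyIntegrable v volume := locallyIntegrable_congr' (hloc hμ2) hvv'.symm
  set Mr := (Mc n).toReal with hMr
  have hMr0 : 0 ≤ Mr := ENNReal.toReal_nonneg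
  refine ⟨⟨hwloc, Filter.Eventually.of_forall fun x => Real.exp_pos _⟩, ?_,
    ⟨Mr * Mr ^ (p - 1), ?_⟩⟩
  · rw [hrw]
    exact hvloc
  · intro Q hQ
    obtain ⟨aq, hq, hhq, rfl⟩ := hQ
    have hQeq : (Set.univ.pi fun i => Set.Icc (aq i) (aq i + hq)) = QIcc aq hq := rfl
    rw [hQeq, apQ, hrw]
    have b1 := (cube_facts hf'm hf'loc hB hbmoB' hμ1 aq hhq).2
    have b2 := (cube_facts hf'm hf'loc hB hbmoB' hμ2 aq hhq).2
    have n1 : 0 ≤ cubeAvg (QIcc aq hq) w' :=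
      cubeAvg_nonneg _ fun x => (Real.exp_pos _).le
    have n2 : 0 ≤ cubeAvg (QIcc aq hq) v' :=
      cubeAvg_nonneg _ fun x => (Real.exp_pos _).le
    set cq := cubeAvg (QIcc aq hq) f' with hcq
    rw [cubeAvg_congr_ae (Q := QIcc aq hq) hww', cubeAvg_congr_ae (Q := QIcc aq hq) hvv']
    calc cubeAvg (QIcc aq hq) w' * cubeAvg (QIcc aq hq) v' ^ (p - 1)
        ≤ (Real.exp (lam * cq) * Mr) * (Real.exp (μ2 * cq) * Mr) ^ (p - 1) :=
          mul_le_mul b1 (Real.rpow_le_rpow n2 b2 (by linarith))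
            (Real.rpow_nonneg n2 _) (by positivity)
      _ = Real.exp (lam * cq) * Real.exp (μ2 * cq * (p - 1)) * (Mr * Mr ^ (p - 1)) := by
          rw [Real.mul_rpow (Real.exp_pos _).le hMr0, ← Real.exp_mul]
          ring
      _ = Mr * Mr ^ (p - 1) := by
          have hcancel : μ2 * cq * (p - 1) = -(lam * cq) := by
            rw [hμ2def]
            have h5 : (1 - p / (p - 1)) * (p - 1) = -1 := by field_simp; ring
            linear_combination (lam * cq) * h5
          rw [hcancel, ← Real.exp_add, add_neg_cancel, Real.exp_zero, one_mul]
end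
end
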